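/- arXiv:0908.1619 — 6 statements merged into one kernel-verified Lean document; each statement's English description precedes it below -/
import Mathlib

section
/- For every d ≥ 1 and every nonempty proper subset A of the vertices of the d-dimensional hypercube graph Q_d, the edge boundary satisfies |δ(A)| ≥ |A|·(2^d − |A|)/2^(d−1). -/
/-- The `d`-dimensional hypercube graph: vertices are functions `Fin d → Bool`,
adjacent iff they differ in exactly one coordinate. -/
def cubeGraph (d : ℕ) : SimpleGraph (Fin d → Bool) where
  Adj x y := (Finset.univ.filter fun i => x i ≠ y i).card = 1
  symm := by
    constructor
    intro x y h
    simpa only [ne_comm] using h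
  loopless := by
    constructor
    intro x h
    simp at h

/-- The edge boundary of a set `A` of vertices: edges of the graph with exactly one
endpoint in `A`. -/
def cubeEdgeBoundary (d : ℕ) (A : Finset (Fin d → Bool)) : Set (Sym2 (Fin d → Bool)) :=
  {e ∈ (cubeGraph d).edgeSet | ∃ x ∈ A, ∃ y ∉ A, e = s(x, y)}

noncomputable def theIdx {d : ℕ} [NeZero d] (u w : Fin d → Bool) : Fin d :=
  if h : (Finset.univ.filter fun j => u j ≠ w j).Nonempty then
    (Finset.univ.filter fun j => u j ≠ w j).min' h else 0

lemma theIdx_spec {d : ℕ} [NeZero d] {u w : Fin d → Bool}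
    (h : (cubeGraph d).Adj u w) :
    Finset.univ.filter (fun j => u j ≠ w j) = {theIdx u w} := by
  obtain ⟨a, ha⟩ := Finset.card_eq_one.mp h
  rw [ha, theIdx, ha]
  simp

def cubePath {d : ℕ} (x y : Fin d → Bool) (k : ℕ) : Fin d → Bool :=
  fun j => if (j : ℕ) < k then y j else x j

lemma cubePath_zero {d : ℕ} (x y : Fin d → Bool) : cubePath x y 0 = x := by
  funext j; simp [cubePath]

lemma cubePath_last {d : ℕ} (x y : Fin d → Bool) : cubePath x y d = y := by
  funext j; simp [cubePath, j.isLt]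

noncomputable def lastCross {d : ℕ} (A : Finset (Fin d → Bool)) (x y : Fin d → Bool) : ℕ :=
  Nat.findGreatest (fun k => cubePath x y k ∈ A) d

lemma lastCross_mem {d : ℕ} {A : Finset (Fin d → Bool)} {x y : Fin d → Bool}
    (hx : x ∈ A) : cubePath x y (lastCross A x y) ∈ A := by
  classical
  exact Nat.findGreatest_spec (P := fun k => cubePath x y k ∈ A) (Nat.zero_le d)
    (by show cubePath x y 0 ∈ A; rw [cubePath_zero]; exact hx)

lemma lastCross_lt {d : ℕ} {A : Finset (Fin d → Bool)} {x y : Fin d → Bool}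
    (hx : x ∈ A) (hy : y ∉ A) : lastCross A x y < d := by
  classical
  have hle : lastCross A x y ≤ d := Nat.findGreatest_le d
  rcases eq_or_lt_of_le hle with h | h
  · exfalso
    have := lastCross_mem (y := y) hx
    rw [h, cubePath_last] at this
    exact hy this
  · exact h

lemma lastCross_succ_not_mem {d : ℕ} {A : Finset (Fin d → Bool)} {x y : Fin d → Bool}
    (hx : x ∈ A) (hy : y ∉ A) : cubePath x y (lastCross A x y + 1) ∉ A := by
  classical
  exact Nat.findGreatest_is_greatest (P := fun k => cubePath x y k ∈ A) (lt_add_one _)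
    (Nat.succ_le_of_lt (lastCross_lt hx hy))

lemma cubePath_eq_of_coord_eq {d : ℕ} {x y : Fin d → Bool} {i : ℕ} (hi : i < d)
    (hEq : x ⟨i, hi⟩ = y ⟨i, hi⟩) : cubePath x y i = cubePath x y (i + 1) := by
  funext j
  simp only [cubePath]
  rcases lt_trichotomy (j : ℕ) i with h | h | h
  · rw [if_pos h, if_pos (by omega)]
  · have : j = (⟨i, hi⟩ : Fin d) := by exact Fin.ext h
    subst this
    rw [if_neg (by omega), if_pos (by omega)]
    exact hEq
  · rw [if_neg (by omega), if_neg (by omega)]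

lemma cross_coord_ne {d : ℕ} {A : Finset (Fin d → Bool)} {x y : Fin d → Bool}
    (hx : x ∈ A) (hy : y ∉ A) :
    x ⟨lastCross A x y, lastCross_lt hx hy⟩ ≠ y ⟨lastCross A x y, lastCross_lt hx hy⟩ := by
  intro hEq
  have := cubePath_eq_of_coord_eq (lastCross_lt hx hy) hEq
  exact lastCross_succ_not_mem hx hy (this ▸ lastCross_mem hx)

lemma cross_filter {d : ℕ} (x y : Fin d → Bool) (i : ℕ) (hi : i < d)
    (hne : x ⟨i, hi⟩ ≠ y ⟨i, hi⟩) :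
    Finset.univ.filter (fun j => cubePath x y i j ≠ cubePath x y (i + 1) j)
      = {(⟨i, hi⟩ : Fin d)} := by
  ext j
  simp only [Finset.mem_filter, Finset.mem_univ, true_and, Finset.mem_singleton]
  simp only [cubePath]
  constructor
  · intro h
    by_contra hj
    have hj' : (j : ℕ) ≠ i := fun hh => hj (Fin.ext hh)
    rcases lt_trichotomy (j : ℕ) i with hlt | heq | hgt
    · rw [if_pos hlt, if_pos (by omega)] at h; exact h rfl
    · exact hj' heq
    · rw [if_neg (by omega), if_neg (by omega)] at h; exact h rfl
  · intro h
    subst h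
    rw [if_neg (by simp), if_pos (by simp)]
    exact hne

lemma cross_adj {d : ℕ} (x y : Fin d → Bool) (i : ℕ) (hi : i < d)
    (hne : x ⟨i, hi⟩ ≠ y ⟨i, hi⟩) :
    (cubeGraph d).Adj (cubePath x y i) (cubePath x y (i + 1)) := by
  show (Finset.univ.filter fun j => cubePath x y i j ≠ cubePath x y (i+1) j).card = 1
  rw [cross_filter x y i hi hne]
  simp

lemma cross_theIdx {d : ℕ} [NeZero d] (x y : Fin d → Bool) (i : ℕ) (hi : i < d)
    (hne : x ⟨i, hi⟩ ≠ y ⟨i, hi⟩) :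
    theIdx (cubePath x y i) (cubePath x y (i + 1)) = ⟨i, hi⟩ := by
  have h1 := theIdx_spec (cross_adj x y i hi hne)
  have h2 := cross_filter x y i hi hne
  rw [h1] at h2
  exact Finset.singleton_injective h2

lemma card_filter_eq_false {d : ℕ} (i : Fin d) :
    (Finset.univ.filter fun g : Fin d → Bool => g i = false).card = 2 ^ (d - 1) := by
  classical
  have hbij : (Finset.univ.filter fun g : Fin d → Bool => g i = false).card
      = (Finset.univ.filter fun g : Fin d → Bool => ¬ g i = false).card := by
    refine Finset.card_bij' (fun g _ => Function.update g i (!g i))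
      (fun g _ => Function.update g i (!g i)) ?_ ?_ ?_ ?_
    · intro g hg
      simp only [Finset.mem_filter, Finset.mem_univ, true_and] at hg ⊢
      simp [hg]
    · intro g hg
      simp only [Finset.mem_filter, Finset.mem_univ, true_and] at hg ⊢
      simp at hg
      simp [hg]
    · intro g hg
      funext j
      by_cases hj : j = i
      · subst hj; simp
      · simp [Function.update_of_ne hj]
    · intro g hg
      funext j
      by_cases hj : j = i
      · subst hj; simp
      · simp [Function.update_of_ne hj]
  have hsum := Finset.card_filter_add_card_filter_not
    (p := fun g : Fin d → Bool => g i = false) (s := Finset.univ)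
  have hcard : (Finset.univ : Finset (Fin d → Bool)).card = 2 ^ d := by
    simp [Finset.card_univ]
  have hd1 : 1 ≤ d := Nat.one_le_iff_ne_zero.mpr (fun h => (h ▸ i).elim0)
  have h2 : 2 ^ d = 2 ^ (d - 1) * 2 := by
    rw [← pow_succ, Nat.sub_add_cancel hd1]
  rw [hbij]
  rw [hbij, hcard, h2] at hsum
  generalize hn : (Finset.filter (fun g : Fin d → Bool => ¬ g i = false) Finset.univ).card = n at hsum ⊢
  clear * - hsum
  omega

instance cubeAdjDec (d : ℕ) : DecidableRel (cubeGraph d).Adj := fun x y =>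
  decidable_of_iff ((Finset.univ.filter fun i => x i ≠ y i).card = 1) Iff.rfl

lemma key_count {d : ℕ} [NeZero d] (A : Finset (Fin d → Bool)) :
    A.card * Aᶜ.card ≤
      (Finset.univ.filter fun p : (Fin d → Bool) × (Fin d → Bool) =>
        (cubeGraph d).Adj p.1 p.2 ∧ p.1 ∈ A ∧ p.2 ∉ A).card * 2 ^ (d - 1) := by
  classical
  set OB := Finset.univ.filter fun p : (Fin d → Bool) × (Fin d → Bool) =>
      (cubeGraph d).Adj p.1 p.2 ∧ p.1 ∈ A ∧ p.2 ∉ A with hOB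
  set S : Finset ((_ : (Fin d → Bool) × (Fin d → Bool)) × (Fin d → Bool)) :=
      OB.sigma fun p => Finset.univ.filter fun g => g (theIdx p.1 p.2) = false with hS
  have hScard : S.card = OB.card * 2 ^ (d - 1) := by
    rw [hS, Finset.card_sigma]
    rw [Finset.sum_congr rfl (fun p _ => card_filter_eq_false (theIdx p.1 p.2))]
    rw [Finset.sum_const, smul_eq_mul]
  have hle : (A ×ˢ Aᶜ).card ≤ S.card := by
    apply Finset.card_le_card_of_injOn
      (fun p => ⟨(cubePath p.1 p.2 (lastCross A p.1 p.2),
                  cubePath p.1 p.2 (lastCross A p.1 p.2 + 1)),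
        fun j => if (j : ℕ) < lastCross A p.1 p.2 then p.1 j
          else if (j : ℕ) = lastCross A p.1 p.2 then false else p.2 j⟩)
    · -- maps to S
      rintro ⟨x, y⟩ hp
      rw [Finset.mem_coe, Finset.mem_product] at hp
      obtain ⟨hx, hy⟩ := hp
      rw [Finset.mem_compl] at hy
      have hi := lastCross_lt hx hy
      have hne := cross_coord_ne hx hy
      rw [hS, Finset.mem_coe, Finset.mem_sigma]
      constructor
      · rw [hOB, Finset.mem_filter]
        exact ⟨Finset.mem_univ _, cross_adj x y _ hi hne, lastCross_mem hx,
          lastCross_succ_not_mem hx hy⟩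
      · rw [Finset.mem_filter]
        refine ⟨Finset.mem_univ _, ?_⟩
        simp only [cross_theIdx x y _ hi hne]
        rw [if_neg (by simp), if_pos (by simp)]
    · -- injective
      rintro ⟨x, y⟩ hp ⟨x', y'⟩ hq hΦ
      simp only [Finset.coe_product, Set.mem_prod, Finset.mem_coe, Finset.mem_compl] at hp hq
      obtain ⟨hx, hy⟩ := hp
      obtain ⟨hx', hy'⟩ := hq
      have hi := lastCross_lt hx hy
      have hi' := lastCross_lt hx' hy'
      have hne := cross_coord_ne hx hy
      have hne' := cross_coord_ne hx' hy'
      have hfst := congrArg Sigma.fst hΦ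
      have hsnd := congrArg (fun s : (_ : (Fin d → Bool) × (Fin d → Bool)) × (Fin d → Bool) => s.snd) hΦ
      simp only [Prod.mk.injEq] at hfst
      obtain ⟨hu, hw⟩ := hfst
      -- the crossing indices agree
      have hidx : lastCross A x y = lastCross A x' y' := by
        have e1 := cross_theIdx x y _ hi hne
        have e2 := cross_theIdx x' y' _ hi' hne'
        rw [← hu, ← hw] at e2
        rw [e1] at e2
        exact congrArg Fin.val e2
      set i := lastCross A x y with hidef
      -- recover x and x'
      have hxx : x = x' := by
        funext j
        by_cases hj : (j : ℕ) < i
        · have := congrFun hsnd j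
          simp only at this
          rw [if_pos hj, if_pos (by rw [← hidx]; exact hj)] at this
          exact this
        · have := congrFun hu j
          simp only [cubePath] at this
          rw [if_neg hj, if_neg (by rw [← hidx]; exact hj)] at this
          exact this
      have hyy : y = y' := by
        funext j
        by_cases hj : (j : ℕ) ≤ i
        · have := congrFun hw j
          simp only [cubePath] at this
          rw [if_pos (by omega), if_pos (by rw [← hidx]; omega)] at this
          exact this
        · have := congrFun hsnd j
          simp only at this
          rw [if_neg (by omega), if_neg (by omega),
            if_neg (by rw [← hidx]; omega), if_neg (by rw [← hidx]; omega)] at this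
          exact this
      rw [Prod.mk.injEq]
      exact ⟨hxx, hyy⟩
  calc A.card * Aᶜ.card = (A ×ˢ Aᶜ).card := (Finset.card_product _ _).symm
    _ ≤ S.card := hle
    _ = OB.card * 2 ^ (d - 1) := hScard

/-- For every `d ≥ 1` and every nonempty proper subset `A` of the vertices of the
`d`-dimensional hypercube graph, `|δ(A)| ≥ |A| · (2 ^ d − |A|) / 2 ^ (d − 1)`. -/
theorem hypercube_edge_boundary_lower_bound (d : ℕ) (hd : 1 ≤ d)
    (A : Finset (Fin d → Bool)) (hne : A.Nonempty) (hproper : A ≠ Finset.univ) :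
    (A.card : ℝ) * ((2 : ℝ) ^ d - A.card) / (2 : ℝ) ^ (d - 1)
      ≤ ((cubeEdgeBoundary d A).ncard : ℝ) := by
  classical
  have hNZ : NeZero d := ⟨by omega⟩
  set OB := Finset.univ.filter fun p : (Fin d → Bool) × (Fin d → Bool) =>
      (cubeGraph d).Adj p.1 p.2 ∧ p.1 ∈ A ∧ p.2 ∉ A with hOB
  have hfin : (cubeEdgeBoundary d A).Finite := Set.toFinite _
  have hOBle : OB.card ≤ (cubeEdgeBoundary d A).ncard := by
    rw [Set.ncard_eq_toFinset_card _ hfin]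
    apply Finset.card_le_card_of_injOn (fun p => s(p.1, p.2))
    · rintro ⟨u, w⟩ hp
      rw [Finset.mem_coe, hOB, Finset.mem_filter] at hp
      obtain ⟨-, hadj, hu, hw⟩ := hp
      rw [Finset.mem_coe, Set.Finite.mem_toFinset]
      exact ⟨hadj, u, hu, w, hw, rfl⟩
    · rintro ⟨u, w⟩ hp ⟨u', w'⟩ hq h
      simp only [Finset.mem_coe, hOB, Finset.mem_filter] at hp hq
      obtain ⟨-, -, hu, hw⟩ := hp
      obtain ⟨-, -, hu', hw'⟩ := hq
      simp only [Sym2.eq, Sym2.rel_iff', Prod.mk.injEq, Prod.swap_prod_mk] at h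
      rcases h with ⟨h1, h2⟩ | ⟨h1, h2⟩
      · simp [h1, h2]
      · exfalso; exact hw' (h1 ▸ hu)
  have hkey := key_count A
  have hcompl : Aᶜ.card = 2 ^ d - A.card := by
    rw [Finset.card_compl]
    congr 1
    simp [Finset.card_univ]
  have hAle : A.card ≤ 2 ^ d := by
    have := Finset.card_le_univ A
    simpa [Finset.card_univ] using this
  have hnat : A.card * (2 ^ d - A.card) ≤ (cubeEdgeBoundary d A).ncard * 2 ^ (d - 1) := by
    calc A.card * (2 ^ d - A.card) = A.card * Aᶜ.card := by rw [hcompl]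
      _ ≤ OB.card * 2 ^ (d - 1) := hkey
      _ ≤ _ := Nat.mul_le_mul_right _ hOBle
  have hpow : (0 : ℝ) < (2 : ℝ) ^ (d - 1) := by positivity
  rw [div_le_iff₀ hpow]
  have hc := (Nat.cast_le (α := ℝ)).mpr hnat
  push_cast [Nat.cast_sub hAle] at hc
  exact hc
end

section
/- (Cutset connectedness.) Let P ⊆ ℝ^d be a polytope, let f : ℝ^d → ℝ be a linear functional and c ∈ ℝ. If the set C of extreme points v of P with f(v) > c is nonempty, then C induces a connected subgraph of the graph G_P of P. -/
open Set

set_option maxHeartbeats 2000000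

section Auxiliary

variable {E : Type*} [NormedAddCommGroup E] [NormedSpace ℝ E]



/-- No three distinct extreme points are collinear (difference-vector form). -/
lemma extreme_not_collinear {P : Set E} {v u1 u2 : E}
    (hv : v ∈ P.extremePoints ℝ) (h1 : u1 ∈ P.extremePoints ℝ) (h2 : u2 ∈ P.extremePoints ℝ)
    (hv1 : u1 ≠ v) (hv2 : u2 ≠ v) (h12 : u1 ≠ u2) {α β : ℝ} (hα : 0 < α) (hβ : 0 < β) :
    α • (u1 - v) ≠ β • (u2 - v) := by
  intro heq
  set μ : ℝ := β / α with hμ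
  have hμ0 : 0 < μ := div_pos hβ hα
  have hβα : β = α * μ := by rw [hμ]; field_simp [hα.ne']
  rw [hβα] at heq
  have h1v : u1 = (1 - μ) • v + μ • u2 :=
    smul_right_injective E hα.ne' (by linear_combination (norm := module) heq)
  rcases lt_trichotomy μ 1 with hlt | hone | hgt
  · have hseg : u1 ∈ openSegment ℝ v u2 :=
      ⟨1 - μ, μ, by linarith, hμ0, by ring, h1v.symm⟩
    exact hv1 ((h1.2 hv.1 h2.1 hseg).symm)
  · apply h12
    rw [h1v, hone]; simp
  · have h2v : u2 = (1 - 1/μ) • v + (1/μ) • u1 :=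
      smul_right_injective E hμ0.ne' (by
        rw [h1v]; match_scalars <;> field_simp <;> ring)
    have hseg : u2 ∈ openSegment ℝ v u1 :=
      ⟨1 - 1/μ, 1/μ, by
        have : 1/μ < 1 := by rw [div_lt_one hμ0]; linarith
        linarith, by positivity, by ring, h2v.symm⟩
    exact hv2 ((h2.2 hv.1 h1.1 hseg).symm)


lemma le_of_mem_convexHull' (T : Finset E) (l : E →L[ℝ] ℝ) {m : ℝ}
    (hm : ∀ w ∈ T, l w ≤ m) {x : E} (hx : x ∈ convexHull ℝ (T : Set E)) : l x ≤ m := by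
  have : convexHull ℝ (T : Set E) ⊆ {y | l y ≤ m} :=
    convexHull_min hm (convex_halfSpace_le ⟨fun a b => map_add l a b, fun r a => map_smul l r a⟩ m)
  exact this hx

/-- If a linear functional on the hull of a finite set is maximized exactly at two
points `v ≠ u` of the set, then the segment `[v,u]` is an exposed face of the hull. -/
lemma isExposed_segment (T : Finset E) {v u : E} (hv : v ∈ T) (hu : u ∈ T) (hvu : v ≠ u)
    (ψ : E →L[ℝ] ℝ) (hequ : ψ u = ψ v)
    (hlt : ∀ w ∈ T, w ≠ v → w ≠ u → ψ w < ψ v) :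
    IsExposed ℝ (convexHull ℝ (T : Set E)) (segment ℝ v u) := by
  classical
  intro _
  refine ⟨ψ, ?_⟩
  have hTle : ∀ w ∈ T, ψ w ≤ ψ v := by
    intro w hw
    by_cases h1 : w = v
    · exact h1 ▸ le_refl _
    by_cases h2 : w = u
    · exact h2 ▸ hequ.le
    exact (hlt w hw h1 h2).le
  have hmax : ∀ y ∈ convexHull ℝ (T : Set E), ψ y ≤ ψ v :=
    fun y hy => le_of_mem_convexHull' T ψ hTle hy
  have hvP : v ∈ convexHull ℝ (T : Set E) := subset_convexHull ℝ _ hv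
  have huP : u ∈ convexHull ℝ (T : Set E) := subset_convexHull ℝ _ hu
  ext x
  constructor
  · rintro ⟨a, b, ha, hb, hab, rfl⟩
    have hxP : a • v + b • u ∈ convexHull ℝ (T : Set E) :=
      convex_convexHull ℝ _ hvP huP ha hb hab
    refine ⟨hxP, fun y hy => ?_⟩
    have : ψ (a • v + b • u) = ψ v := by
      simp only [map_add, map_smul, smul_eq_mul, hequ]
      linear_combination hab * ψ v
    rw [this]; exact hmax y hy
  · rintro ⟨hxP, hx⟩
    have hψx : ψ x = ψ v := le_antisymm (hmax x hxP) (hx v hvP)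
    rw [Finset.convexHull_eq] at hxP
    obtain ⟨w, hw0, hw1, hwx⟩ := hxP
    rw [Finset.centerMass_eq_of_sum_1 _ _ hw1] at hwx
    simp only [id] at hwx
    -- all weights outside {v, u} vanish
    have hzero : ∀ i ∈ T, i ≠ v → i ≠ u → w i = 0 := by
      intro i hi hiv hiu
      by_contra hne
      have hipos : 0 < w i := lt_of_le_of_ne (hw0 i hi) (Ne.symm hne)
      have hsum : ∑ y ∈ T, w y * ψ y < ∑ y ∈ T, w y * ψ v := by
        apply Finset.sum_lt_sum
        · intro j hj
          exact mul_le_mul_of_nonneg_left (hTle j hj) (hw0 j hj)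
        · exact ⟨i, hi, by
            have := hlt i hi hiv hiu
            exact mul_lt_mul_of_pos_left this hipos⟩
      have hψsum : ψ x = ∑ y ∈ T, w y * ψ y := by
        rw [← hwx]; simp [map_sum, map_smul]
      rw [hψx] at hψsum
      have : ∑ y ∈ T, w y * ψ v = ψ v := by
        rw [← Finset.sum_mul, hw1, one_mul]
      rw [this] at hsum
      rw [hψsum] at hsum
      exact lt_irrefl _ hsum
    have hsub : ({v, u} : Finset E) ⊆ T := by
      intro j hj
      rcases Finset.mem_insert.1 hj with rfl | hj
      · exact hv
      · rwa [Finset.mem_singleton.1 hj]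
    have hxvu : x = w v • v + w u • u := by
      rw [← hwx, ← Finset.sum_subset hsub (fun j hj hj' => ?_), Finset.sum_pair hvu]
      have hjv : j ≠ v := fun h => hj' (by simp [h])
      have hju : j ≠ u := fun h => hj' (by simp [h])
      rw [hzero j hj hjv hju, zero_smul]
    have hsum1 : w v + w u = 1 := by
      rw [← hw1, ← Finset.sum_subset hsub (fun j hj hj' => ?_), Finset.sum_pair hvu]
      have hjv : j ≠ v := fun h => hj' (by simp [h])
      have hju : j ≠ u := fun h => hj' (by simp [h])
      exact hzero j hj hjv hju
    exact ⟨w v, w u, hw0 v hv, hw0 u hu, hsum1, hxvu.symm⟩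


-- gap bound for the lexicographic perturbation
lemma exists_gap (T : Finset E) (f e : E →L[ℝ] ℝ) (v : E) :
    ∃ δ : ℝ, 0 < δ ∧ ∀ u ∈ T, f u ≠ f v → δ * (|e u - e v| + 1) ≤ |f u - f v| := by
  classical
  set T' := T.filter (fun u => f u ≠ f v) with hT'
  by_cases hne : T'.Nonempty
  · set g : E → ℝ := fun u => |f u - f v| / (|e u - e v| + 1) with hg
    obtain ⟨u0, hu0, hu0min⟩ := T'.exists_min_image g hne
    have hpos : ∀ u ∈ T', 0 < g u := by
      intro u hu
      have hfu : f u ≠ f v := (Finset.mem_filter.1 hu).2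
      have : 0 < |f u - f v| := abs_pos.2 (sub_ne_zero.2 hfu)
      have hd : (0:ℝ) < |e u - e v| + 1 := by positivity
      exact div_pos this hd
    refine ⟨g u0, hpos u0 hu0, fun u hu hfu => ?_⟩
    have huT' : u ∈ T' := Finset.mem_filter.2 ⟨hu, hfu⟩
    have h1 : g u0 ≤ g u := hu0min u huT'
    have hd : (0:ℝ) < |e u - e v| + 1 := by positivity
    calc g u0 * (|e u - e v| + 1) ≤ g u * (|e u - e v| + 1) := by
          exact mul_le_mul_of_nonneg_right h1 hd.le
      _ = |f u - f v| := by rw [hg]; field_simp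
  · refine ⟨1, one_pos, fun u hu hfu => ?_⟩
    exact absurd ⟨u, Finset.mem_filter.2 ⟨hu, hfu⟩⟩ hne

/-- Key step: from a vertex `v` that is not the lexicographic maximum there is an
edge of the polytope to a lexicographically larger vertex. -/
lemma key_step {P : Set E} (T : Finset E)
    (hP : P = convexHull ℝ (T : Set E))
    (f e h : E →L[ℝ] ℝ) {v : E} (hv : v ∈ T)
    (hh : ∀ u ∈ T, u ≠ v → h u < h v)
    (heinj : ∀ u ∈ T, u ≠ v → e u ≠ e v)
    (hegen : ∀ u1 ∈ T, ∀ u2 ∈ T, u1 ≠ v → u2 ≠ v → u1 ≠ u2 →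
      e ((h v - h u2) • (u1 - v) - (h v - h u1) • (u2 - v)) ≠ 0)
    (hex : ∃ a ∈ T, f v < f a ∨ (f v = f a ∧ e v < e a)) :
    ∃ u ∈ T, (f v < f u ∨ (f v = f u ∧ e v < e u)) ∧ u ≠ v ∧
      IsExposed ℝ P (segment ℝ v u) := by
  classical
  obtain ⟨δ, hδ0, hδ⟩ := exists_gap T f e v
  set Bad : Finset ℝ := (T ×ˢ T).image (fun p =>
    (-((f p.1 - f v) * (h v - h p.2) - (f p.2 - f v) * (h v - h p.1))) /
      ((e p.1 - e v) * (h v - h p.2) - (e p.2 - e v) * (h v - h p.1))) with hBadDef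
  obtain ⟨ε, hεmem⟩ := ((Set.Ioo_infinite hδ0).diff Bad.finite_toSet).nonempty
  obtain ⟨⟨hε0, hεδ⟩, hεBad⟩ := hεmem
  set l : E → ℝ := fun x => f x + ε * e x with hl
  -- the sign of `l u - l v` realizes the lexicographic comparison
  have hsign : ∀ u ∈ T, u ≠ v → (l v < l u ↔ (f v < f u ∨ (f v = f u ∧ e v < e u))) := by
    intro u hu hune
    by_cases hf : f u = f v
    · have he : e u ≠ e v := heinj u hu hune
      constructor
      · intro hlt
        refine Or.inr ⟨hf.symm, ?_⟩
        simp only [hl] at hlt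
        have h2 : 0 < ε * (e u - e v) := by linarith
        by_contra hc
        push_neg at hc
        have : ε * (e u - e v) ≤ 0 :=
          mul_nonpos_of_nonneg_of_nonpos hε0.le (by linarith)
        linarith
      · rintro (h1 | ⟨-, h2⟩)
        · exact absurd hf (ne_of_gt h1)
        · simp only [hl]
          have := mul_pos hε0 (sub_pos.2 h2)
          linarith
    · have habs : |ε * (e u - e v)| < |f u - f v| := by
        have h1 : δ * (|e u - e v| + 1) ≤ |f u - f v| := hδ u hu hf
        have h2 : |ε * (e u - e v)| = ε * |e u - e v| := by
          rw [abs_mul, abs_of_pos hε0]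
        have h3 : ε * |e u - e v| < δ * (|e u - e v| + 1) := by
          have h4 : (0:ℝ) ≤ |e u - e v| := abs_nonneg _
          nlinarith
        linarith
      obtain ⟨hlo, hhi⟩ := abs_lt.1 habs
      rcases lt_or_gt_of_ne hf with hflt | hfgt
      · have hfa : |f u - f v| = f v - f u := by
          rw [abs_of_neg (by linarith : f u - f v < 0)]; ring
        rw [hfa] at hlo hhi
        constructor
        · intro hc; simp only [hl] at hc; linarith
        · rintro (h1 | ⟨h2, -⟩)
          · exact (lt_asymm hflt h1).elim
          · exact (hf h2.symm).elim
      · have hfa : |f u - f v| = f u - f v := abs_of_pos (by linarith)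
        rw [hfa] at hlo hhi
        constructor
        · intro _; exact Or.inl hfgt
        · intro _; simp only [hl]; linarith
  set A : Finset E := T.filter (fun u => l v < l u) with hA
  have hAne : A.Nonempty := by
    obtain ⟨a, haT, hlex⟩ := hex
    have hane : a ≠ v := by
      rintro rfl
      rcases hlex with h1 | ⟨-, h2⟩ <;> exact lt_irrefl _ (by assumption)
    exact ⟨a, Finset.mem_filter.2 ⟨haT, (hsign a haT hane).2 hlex⟩⟩
  have hAfacts : ∀ u ∈ A, u ∈ T ∧ l v < l u ∧ u ≠ v ∧ 0 < h v - h u := by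
    intro u hu
    obtain ⟨huT, hul⟩ := Finset.mem_filter.1 hu
    have hune : u ≠ v := by rintro rfl; exact lt_irrefl _ hul
    exact ⟨huT, hul, hune, sub_pos.2 (hh u huT hune)⟩
  obtain ⟨w, hwA, hwmax⟩ := A.exists_max_image (fun u => (l u - l v) / (h v - h u)) hAne
  obtain ⟨hwT, hwl, hwne, hwden⟩ := hAfacts w hwA
  set t : ℝ := (l w - l v) / (h v - h w) with ht
  have ht0 : 0 < t := div_pos (sub_pos.2 hwl) hwden
  have htw : l w - l v = t * (h v - h w) := by
    rw [ht]; field_simp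
  -- strict maximality of the ratio
  have hstrict : ∀ u ∈ A, u ≠ w → (l u - l v) / (h v - h u) < t := by
    intro u huA hunew
    obtain ⟨huT, hul, hune, huden⟩ := hAfacts u huA
    refine lt_of_le_of_ne (hwmax u huA) (fun heqr => ?_)
    rw [ht, div_eq_div_iff huden.ne' hwden.ne'] at heqr
    have hKne : ((e u - e v) * (h v - h w) - (e w - e v) * (h v - h u)) ≠ 0 := by
      have hg := hegen u huT w hwT hune hwne hunew
      intro hK0
      apply hg
      simp only [map_sub, map_smul, smul_eq_mul]
      linear_combination hK0
    have hεval : ε = (-((f u - f v) * (h v - h w) - (f w - f v) * (h v - h u))) /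
        ((e u - e v) * (h v - h w) - (e w - e v) * (h v - h u)) := by
      rw [eq_div_iff hKne]
      simp only [hl] at heqr
      linear_combination heqr
    apply hεBad
    rw [hεval, hBadDef]
    have hmem : (u, w) ∈ T ×ˢ T := Finset.mem_product.2 ⟨huT, hwT⟩
    exact Finset.mem_coe.2 (Finset.mem_image_of_mem _ hmem)
  -- the exposing functional
  set ψ : E →L[ℝ] ℝ := f + ε • e + t • h with hψ
  have hψval : ∀ x, ψ x = l x + t * h x := by
    intro x
    simp only [hψ, hl, ContinuousLinearMap.add_apply, ContinuousLinearMap.coe_smul',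
      Pi.smul_apply, smul_eq_mul]
  have hψeq : ψ w = ψ v := by
    rw [hψval, hψval]; linarith
  have hψlt : ∀ x ∈ T, x ≠ v → x ≠ w → ψ x < ψ v := by
    intro x hxT hxv hxw
    by_cases hxA : x ∈ A
    · obtain ⟨-, hxl, -, hxden⟩ := hAfacts x hxA
      have hr : (l x - l v) / (h v - h x) < t := hstrict x hxA hxw
      rw [div_lt_iff₀ hxden] at hr
      rw [hψval, hψval]; linarith
    · have hxle : l x ≤ l v := by
        by_contra hc
        exact hxA (Finset.mem_filter.2 ⟨hxT, lt_of_not_ge hc⟩)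
      have hhx : h x < h v := hh x hxT hxv
      rw [hψval, hψval]; nlinarith
  have hexp : IsExposed ℝ P (segment ℝ v w) := by
    rw [hP]
    exact isExposed_segment T hv hwT (Ne.symm hwne) ψ hψeq hψlt
  exact ⟨w, hwT, (hsign w hwT hwne).1 hwl, hwne, hexp⟩

end Auxiliary


/-- There is a linear functional nonvanishing on any finite set of nonzero vectors. -/
lemma exists_generic_functional {d : ℕ} (Z : Finset (Fin d → ℝ)) :
    ∃ e : (Fin d → ℝ) →ₗ[ℝ] ℝ, ∀ z ∈ Z, z ≠ 0 → e z ≠ 0 := by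
  classical
  induction Z using Finset.induction_on with
  | empty => exact ⟨0, by simp⟩
  | @insert z Z' hz ih =>
    obtain ⟨e', he'⟩ := ih
    by_cases hz0 : z = 0
    · refine ⟨e', fun w hw hw0 => ?_⟩
      rcases Finset.mem_insert.1 hw with rfl | hw
      · exact absurd hz0 hw0
      · exact he' w hw hw0
    · obtain ⟨i, hi⟩ := Function.ne_iff.1 hz0
      set g : (Fin d → ℝ) →ₗ[ℝ] ℝ := LinearMap.proj i with hg
      have hgz : g z ≠ 0 := hi
      set Bad : Finset ℝ := (insert z Z').image (fun w => -(e' w) / g w) with hBad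
      obtain ⟨t, ht⟩ := Infinite.exists_notMem_finset Bad
      refine ⟨e' + t • g, fun w hw hw0 => ?_⟩
      have hwBad : -(e' w) / g w ∈ Bad := Finset.mem_image_of_mem _ hw
      by_cases hgw : g w = 0
      · have : e' w ≠ 0 := by
          rcases Finset.mem_insert.1 hw with rfl | hw'
          · exact absurd hgw hgz
          · exact he' w hw' hw0
        simpa [hgw] using this
      · intro habs
        simp only [LinearMap.add_apply, LinearMap.smul_apply, smul_eq_mul] at habs
        have : t = -(e' w) / g w := by field_simp; linarith
        exact ht (this ▸ hwBad)

lemma extremePoints_mono' {E : Type*} [AddCommGroup E] [Module ℝ E]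
    {A B : Set E} (h : B ⊆ A) {x : E} (hxB : x ∈ B)
    (hx : x ∈ A.extremePoints ℝ) : x ∈ B.extremePoints ℝ :=
  ⟨hxB, fun _ h1 _ h2 hs => hx.2 (h h1) (h h2) hs⟩

def polytopeGraph {d : ℕ} (P : Set (Fin d → ℝ)) : SimpleGraph (Fin d → ℝ) where
  Adj u v := u ≠ v ∧ u ∈ P.extremePoints ℝ ∧ v ∈ P.extremePoints ℝ ∧
    IsExposed ℝ P (segment ℝ u v)
  symm := ⟨by
    rintro u v ⟨h1, h2, h3, h4⟩
    exact ⟨h1.symm, h3, h2, by rwa [segment_symm]⟩⟩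
  loopless := ⟨fun u h => h.1 rfl⟩

/-- Cutset connectedness: if `P = conv S` is a polytope (`S` finite) and the set `C` of
extreme points `v` of `P` with `f v > c` is nonempty, then `C` induces a connected
subgraph of the graph of `P`. -/
theorem cutset_connected (d : ℕ) (S : Set (Fin d → ℝ)) (hS : S.Finite)
    (f : (Fin d → ℝ) →ₗ[ℝ] ℝ) (c : ℝ)
    (hne : {v ∈ (convexHull ℝ S).extremePoints ℝ | c < f v}.Nonempty) :
    ((polytopeGraph (convexHull ℝ S)).induce
      {v ∈ (convexHull ℝ S).extremePoints ℝ | c < f v}).Connected := by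
  classical
  set P : Set (Fin d → ℝ) := convexHull ℝ S with hPdef
  set C : Set (Fin d → ℝ) := {v ∈ P.extremePoints ℝ | c < f v} with hCdef
  set V : Set (Fin d → ℝ) := P.extremePoints ℝ with hVdef
  have hVS : V ⊆ S := extremePoints_convexHull_subset
  have hVfin : V.Finite := hS.subset hVS
  set T : Finset (Fin d → ℝ) := hVfin.toFinset with hTdef
  have hT : (T : Set (Fin d → ℝ)) = V := hVfin.coe_toFinset
  have hP : P = convexHull ℝ (T : Set (Fin d → ℝ)) := by
    rw [hT]
    have h1 : closure (convexHull ℝ V) = P :=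
      closure_convexHull_extremePoints (hS.isCompact_convexHull ℝ) (convex_convexHull ℝ S)
    have h2 : IsClosed (convexHull ℝ V) := hVfin.isClosed_convexHull ℝ
    rw [← h1, h2.closure_eq]
  -- continuous versions of the functionals
  set fC : (Fin d → ℝ) →L[ℝ] ℝ := f.toContinuousLinearMap with hfC
  have hfCval : ∀ x, fC x = f x := fun x => rfl
  -- exposing functionals for each vertex
  have hexpose : ∀ v : Fin d → ℝ, ∃ hv : (Fin d → ℝ) →L[ℝ] ℝ,
      v ∈ T → ∀ u ∈ T, u ≠ v → hv u < hv v := by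
    intro v
    by_cases hvT : v ∈ T
    · have hsub : convexHull ℝ ((T.erase v : Finset (Fin d → ℝ)) : Set (Fin d → ℝ)) ⊆ P := by
        rw [hP]
        exact convexHull_mono (Finset.coe_subset.2 (Finset.erase_subset v T))
      have hQ : v ∉ convexHull ℝ ((T.erase v : Finset (Fin d → ℝ)) : Set (Fin d → ℝ)) := by
        intro hmem
        have hvext : v ∈ P.extremePoints ℝ := by
          rw [← hVdef, ← hT]; exact Finset.mem_coe.2 hvT
        have h1 := extremePoints_mono' hsub hmem hvext
        have h2 := extremePoints_convexHull_subset h1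
        simp at h2
      obtain ⟨g, r, hg1, hg2⟩ := geometric_hahn_banach_closed_point
        (convex_convexHull ℝ _) ((T.erase v).finite_toSet.isClosed_convexHull ℝ) hQ
      refine ⟨g, fun _ u huT hune => lt_trans (hg1 u ?_) hg2⟩
      exact subset_convexHull ℝ _ (Finset.mem_coe.2 (Finset.mem_erase.2 ⟨hune, huT⟩))
    · exact ⟨0, fun h => absurd h hvT⟩
  choose hfun hfunspec using hexpose
  -- the generic functional
  set zf : (Fin d → ℝ) → (Fin d → ℝ) → (Fin d → ℝ) → (Fin d → ℝ) := fun v u1 u2 =>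
    (hfun v v - hfun v u2) • (u1 - v) - (hfun v v - hfun v u1) • (u2 - v) with hzf
  set Z : Finset (Fin d → ℝ) :=
    (T ×ˢ T).image (fun p => p.1 - p.2) ∪
      (T ×ˢ (T ×ˢ T)).image (fun q => zf q.1 q.2.1 q.2.2) with hZ
  obtain ⟨e0, he0⟩ := exists_generic_functional Z
  set eC : (Fin d → ℝ) →L[ℝ] ℝ := e0.toContinuousLinearMap with heC
  have heCval : ∀ x, eC x = e0 x := fun x => rfl
  have heinj : ∀ u ∈ T, ∀ w ∈ T, u ≠ w → eC u ≠ eC w := by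
    intro u hu w hw huw
    have hZmem : u - w ∈ Z := by
      rw [hZ]
      have hmemp : ((u, w) : (Fin d → ℝ) × (Fin d → ℝ)) ∈ T ×ˢ T :=
        Finset.mem_product.2 ⟨hu, hw⟩
      exact Finset.mem_union_left _ (Finset.mem_image_of_mem _ hmemp)
    have := he0 _ hZmem (sub_ne_zero.2 huw)
    rw [map_sub] at this
    simpa [heCval] using sub_ne_zero.1 this
  have hegen : ∀ v ∈ T, ∀ u1 ∈ T, ∀ u2 ∈ T, u1 ≠ v → u2 ≠ v → u1 ≠ u2 →
      eC ((hfun v v - hfun v u2) • (u1 - v) - (hfun v v - hfun v u1) • (u2 - v)) ≠ 0 := by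
    intro v hvT u1 hu1 u2 hu2 h1v h2v h12
    have hZmem : zf v u1 u2 ∈ Z := by
      rw [hZ]
      have hmemq : ((v, u1, u2) : (Fin d → ℝ) × (Fin d → ℝ) × (Fin d → ℝ)) ∈ T ×ˢ (T ×ˢ T) :=
        Finset.mem_product.2 ⟨hvT, Finset.mem_product.2 ⟨hu1, hu2⟩⟩
      exact Finset.mem_union_right _ (Finset.mem_image_of_mem _ hmemq)
    have hvext : v ∈ P.extremePoints ℝ := by rw [← hVdef, ← hT]; exact Finset.mem_coe.2 hvT
    have h1ext : u1 ∈ P.extremePoints ℝ := by rw [← hVdef, ← hT]; exact Finset.mem_coe.2 hu1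
    have h2ext : u2 ∈ P.extremePoints ℝ := by rw [← hVdef, ← hT]; exact Finset.mem_coe.2 hu2
    have hα : 0 < hfun v v - hfun v u2 := sub_pos.2 (hfunspec v hvT u2 hu2 h2v)
    have hβ : 0 < hfun v v - hfun v u1 := sub_pos.2 (hfunspec v hvT u1 hu1 h1v)
    have hzne : zf v u1 u2 ≠ 0 := by
      rw [hzf]
      exact sub_ne_zero.2 (extreme_not_collinear hvext h1ext h2ext h1v h2v h12 hα hβ)
    have := he0 _ hZmem hzne
    simpa [heCval, hzf] using this
  -- the lexicographic maximum vertex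
  obtain ⟨a0, ha0C⟩ := hne
  have ha0V : a0 ∈ V := ha0C.1
  have ha0T : a0 ∈ T := hVfin.mem_toFinset.2 ha0V
  have hTne : T.Nonempty := ⟨a0, ha0T⟩
  obtain ⟨v1, hv1T, hv1max⟩ := T.exists_max_image (fun u => fC u) hTne
  obtain ⟨vh, hvhT1, hvhmax⟩ := (T.filter (fun u => fC u = fC v1)).exists_max_image
    (fun u => eC u) ⟨v1, Finset.mem_filter.2 ⟨hv1T, rfl⟩⟩
  obtain ⟨hvhT, hvhf⟩ := Finset.mem_filter.1 hvhT1
  have hvhlexmax : ∀ u ∈ T, u ≠ vh →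
      (fC u < fC vh ∨ (fC u = fC vh ∧ eC u < eC vh)) := by
    intro u huT hune
    rcases lt_or_eq_of_le (hv1max u huT) with hlt | heq
    · exact Or.inl (by rw [hvhf]; exact hlt)
    · have huT1 : u ∈ T.filter (fun u => fC u = fC v1) := Finset.mem_filter.2 ⟨huT, heq⟩
      refine Or.inr ⟨by rw [hvhf, heq], ?_⟩
      exact lt_of_le_of_ne (hvhmax u huT1) (heinj u huT vh hvhT hune)
  have hvhC : vh ∈ C := by
    rw [hCdef]
    refine ⟨hT ▸ Finset.mem_coe.2 hvhT, ?_⟩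
    have h1 : fC a0 ≤ fC v1 := hv1max a0 ha0T
    have h2 : c < f a0 := ha0C.2
    have : fC v1 = fC vh := hvhf.symm
    simp only [hfCval] at h1 this
    linarith
  -- climbing lemma
  set G := polytopeGraph P with hG
  have hclimb : ∀ n : ℕ, ∀ v, ∀ hvC : v ∈ C,
      (T.filter (fun x => fC v < fC x ∨ (fC v = fC x ∧ eC v < eC x))).card ≤ n →
      (G.induce C).Reachable ⟨v, hvC⟩ ⟨vh, hvhC⟩ := by
    intro n
    induction n with
    | zero =>
      intro v hvC hcard
      by_cases hveq : v = vh
      · subst hveq; exact SimpleGraph.Reachable.refl _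
      · exfalso
        have hvT : v ∈ T := hVfin.mem_toFinset.2 hvC.1
        have hmem : vh ∈ T.filter (fun x => fC v < fC x ∨ (fC v = fC x ∧ eC v < eC x)) :=
          Finset.mem_filter.2 ⟨hvhT, by
            rcases hvhlexmax v hvT hveq with h1 | ⟨h2, h3⟩
            · exact Or.inl h1
            · exact Or.inr ⟨h2, h3⟩⟩
        have := Finset.card_pos.2 ⟨vh, hmem⟩
        omega
    | succ n ih =>
      intro v hvC hcard
      by_cases hveq : v = vh
      · subst hveq; exact SimpleGraph.Reachable.refl _
      · have hvT : v ∈ T := hVfin.mem_toFinset.2 hvC.1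
        have hex : ∃ a ∈ T, fC v < fC a ∨ (fC v = fC a ∧ eC v < eC a) := by
          refine ⟨vh, hvhT, ?_⟩
          rcases hvhlexmax v hvT hveq with h1 | ⟨h2, h3⟩
          · exact Or.inl h1
          · exact Or.inr ⟨h2, h3⟩
        obtain ⟨u, huT, hulex, hune, hexp⟩ := key_step T hP fC eC (hfun v) hvT
          (hfunspec v hvT) (fun w hw hwne => heinj w hw v hvT hwne)
          (fun u1 h1 u2 h2 h1v h2v h12 => hegen v hvT u1 h1 u2 h2 h1v h2v h12) hex
        have huV : u ∈ V := hT ▸ Finset.mem_coe.2 huT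
        have huC : u ∈ C := by
          refine ⟨huV, ?_⟩
          have := hvC.2
          rcases hulex with h1 | ⟨h2, -⟩
          · simp only [hfCval] at h1; linarith
          · simp only [hfCval] at h2; linarith
        have hAdj : G.Adj v u := by
          exact (show v ≠ u ∧ v ∈ P.extremePoints ℝ ∧ u ∈ P.extremePoints ℝ ∧ IsExposed ℝ P (segment ℝ v u) from ⟨hune.symm, hvC.1, huV, hexp⟩)
        have hAdjI : (G.induce C).Adj ⟨v, hvC⟩ ⟨u, huC⟩ := hAdj
        -- the measure decreases
        have hsub : T.filter (fun x => fC u < fC x ∨ (fC u = fC x ∧ eC u < eC x)) ⊂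
            T.filter (fun x => fC v < fC x ∨ (fC v = fC x ∧ eC v < eC x)) := by
          rw [Finset.ssubset_def]
          constructor
          · intro x hx
            obtain ⟨hxT, hxlex⟩ := Finset.mem_filter.1 hx
            refine Finset.mem_filter.2 ⟨hxT, ?_⟩
            rcases hulex with h1 | ⟨h2, h3⟩ <;> rcases hxlex with g1 | ⟨g2, g3⟩
            · exact Or.inl (lt_trans h1 g1)
            · exact Or.inl (g2 ▸ h1)
            · exact Or.inl (h2 ▸ g1)
            · exact Or.inr ⟨h2.trans g2, lt_trans h3 g3⟩
          · intro hcon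
            have humem : u ∈ T.filter (fun x => fC v < fC x ∨ (fC v = fC x ∧ eC v < eC x)) :=
              Finset.mem_filter.2 ⟨huT, hulex⟩
            have := Finset.mem_filter.1 (hcon humem)
            rcases this.2 with h1 | ⟨-, h3⟩
            · exact lt_irrefl _ h1
            · exact lt_irrefl _ h3
        have hcard' := Finset.card_lt_card hsub
        exact (hAdjI.reachable).trans (ih u huC (by omega))
  haveI : Nonempty C := ⟨⟨a0, ha0C⟩⟩
  refine ⟨fun x y => ?_⟩
  obtain ⟨a, haC⟩ := x
  obtain ⟨b, hbC⟩ := y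
  exact (hclimb _ a haC le_rfl).trans (hclimb _ b hbC le_rfl).symm
end

section
/- (Complementary connectedness.) Let P ⊆ ℝ^d be a polytope, let f : ℝ^d → ℝ be a linear functional and c ∈ ℝ. If the set S of extreme points v of P with f(v) ≤ c is nonempty, then S induces a connected subgraph of the graph G_P of P; in particular, removing from G_P the cutset of vertices with f(v) > c does not disconnect the graph on the remaining vertices. -/
open Set

/-- A linear functional nonvanishing on a given finite set of nonzero vectors. -/
lemma exists_functional_ne_zero {d : ℕ} (Z : Finset (Fin d → ℝ)) (hZ : (0 : Fin d → ℝ) ∉ Z) :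
    ∃ φ : (Fin d → ℝ) →ₗ[ℝ] ℝ, ∀ z ∈ Z, φ z ≠ 0 := by
  classical
  induction Z using Finset.induction_on with
  | empty => exact ⟨0, by simp⟩
  | @insert a Z ha ih =>
    have ha0 : a ≠ 0 := fun h => hZ (h ▸ Finset.mem_insert_self a Z)
    obtain ⟨φ, hφ⟩ := ih (fun h => hZ (Finset.mem_insert_of_mem h))
    set ψ : (Fin d → ℝ) →ₗ[ℝ] ℝ := ∑ i, a i • LinearMap.proj i with hψdef
    have hψ : ∀ x, ψ x = ∑ i, a i * x i := by
      intro x; simp [hψdef, LinearMap.sum_apply]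
    have hψa : ψ a ≠ 0 := by
      rw [hψ]
      have : (0:ℝ) < ∑ i, a i * a i := by
        rcases Function.ne_iff.1 ha0 with ⟨i, hi⟩
        apply Finset.sum_pos' (fun j _ => mul_self_nonneg _)
        exact ⟨i, Finset.mem_univ i, by simpa using mul_self_pos.2 hi⟩
      linarith
    obtain ⟨t, ht⟩ := Finset.exists_notMem
      ((insert a Z).image (fun z => -φ z / ψ z))
    refine ⟨φ + t • ψ, ?_⟩
    intro z hz hcontra
    have hψz : ψ z ≠ 0 := by
      rcases Finset.mem_insert.1 hz with rfl | hzZ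
      · exact hψa
      · intro h0
        simp only [LinearMap.add_apply, LinearMap.smul_apply, h0, smul_eq_mul, mul_zero,
          add_zero] at hcontra
        exact hφ z hzZ hcontra
    apply ht
    refine Finset.mem_image.2 ⟨z, hz, ?_⟩
    simp only [LinearMap.add_apply, LinearMap.smul_apply, smul_eq_mul] at hcontra
    field_simp
    linarith

/-- Perturb a functional to be nonvanishing on a finite set of nonzero vectors while
keeping finitely many strict positivity constraints. -/
lemma exists_functional_pos_ne_zero {d : ℕ} (l₀ : (Fin d → ℝ) →ₗ[ℝ] ℝ)
    (F : Finset (Fin d → ℝ)) (hFne : F.Nonempty) (hF : ∀ x ∈ F, 0 < l₀ x)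
    (Z : Finset (Fin d → ℝ)) (hZ : (0 : Fin d → ℝ) ∉ Z) :
    ∃ l : (Fin d → ℝ) →ₗ[ℝ] ℝ, (∀ x ∈ F, 0 < l x) ∧ ∀ z ∈ Z, l z ≠ 0 := by
  classical
  obtain ⟨ψ, hψ⟩ := exists_functional_ne_zero Z hZ
  set δ : ℝ := F.inf' hFne (fun x => l₀ x / (|ψ x| + 1)) with hδdef
  have hδpos : 0 < δ := by
    rw [hδdef, Finset.lt_inf'_iff]
    intro x hx
    have := hF x hx
    positivity
  obtain ⟨t, htIoo, htB⟩ := (Set.Ioo_infinite hδpos).exists_notMem_finset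
    (Z.image (fun z => -l₀ z / ψ z))
  refine ⟨l₀ + t • ψ, ?_, ?_⟩
  · intro x hx
    have h1 : δ ≤ l₀ x / (|ψ x| + 1) := Finset.inf'_le _ hx
    have h2 : 0 < t := htIoo.1
    have h3 : t < δ := htIoo.2
    have h4 : 0 < |ψ x| + 1 := by positivity
    have h5 : t * (|ψ x| + 1) < l₀ x := by
      calc t * (|ψ x| + 1) < δ * (|ψ x| + 1) := by nlinarith
        _ ≤ l₀ x / (|ψ x| + 1) * (|ψ x| + 1) := by nlinarith
        _ = l₀ x := by field_simp
    have h6 : -(t * ψ x) ≤ t * |ψ x| := by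
      have h7 : -(ψ x) ≤ |ψ x| := neg_le_abs _
      nlinarith
    simp only [LinearMap.add_apply, LinearMap.smul_apply, smul_eq_mul]
    nlinarith
  · intro z hz hcontra
    apply htB
    refine Finset.mem_image.2 ⟨z, hz, ?_⟩
    simp only [LinearMap.add_apply, LinearMap.smul_apply, smul_eq_mul] at hcontra
    have := hψ z hz
    field_simp
    linarith

/-- Max principle for linear functionals on convex hulls. -/
lemma le_on_convexHull {d : ℕ} (l : (Fin d → ℝ) →ₗ[ℝ] ℝ) {V : Set (Fin d → ℝ)} {M : ℝ}
    (hV : ∀ v ∈ V, l v ≤ M) {x : Fin d → ℝ} (hx : x ∈ convexHull ℝ V) : l x ≤ M :=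
  convexHull_min hV (convex_halfSpace_le l.isLinear M) hx

set_option maxHeartbeats 2000000 in
/-- Key lemma: a vertex which does not minimize `g` has a neighbor with smaller `g`. -/
lemma exists_adj_lt {d : ℕ} (V : Set (Fin d → ℝ)) (hVfin : V.Finite)
    (hVext : ∀ v ∈ V, v ∈ (convexHull ℝ V).extremePoints ℝ)
    (g : (Fin d → ℝ) →ₗ[ℝ] ℝ) {u w0 : Fin d → ℝ} (hu : u ∈ V) (hw0 : w0 ∈ V)
    (hlt : g w0 < g u) :
    ∃ w ∈ V, g w < g u ∧ (polytopeGraph (convexHull ℝ V)).Adj u w := by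
  classical
  set P := convexHull ℝ V with hP
  have hVP : V ⊆ P := subset_convexHull ℝ V
  set Vf : Finset (Fin d → ℝ) := hVfin.toFinset with hVfdef
  have hVfco : (Vf : Set (Fin d → ℝ)) = V := hVfin.coe_toFinset
  have hVfmem : ∀ {x}, x ∈ Vf ↔ x ∈ V := fun {x} => hVfin.mem_toFinset
  -- u is not in the hull of the other vertices
  have huconv : u ∉ convexHull ℝ (V \ {u}) := by
    intro hcon
    have hsub : convexHull ℝ (V \ {u}) ⊆ P := convexHull_mono diff_subset
    have h1 : u ∈ (convexHull ℝ (V \ {u})).extremePoints ℝ :=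
      inter_extremePoints_subset_extremePoints_of_subset hsub ⟨hcon, hVext u hu⟩
    have h2 : u ∈ V \ {u} := extremePoints_convexHull_subset h1
    exact h2.2 rfl
  -- separation
  obtain ⟨l₀c, b, hsep, hub⟩ := geometric_hahn_banach_closed_point
    (convex_convexHull ℝ (V \ {u}))
    ((hVfin.diff : (V \ {u}).Finite).isCompact_convexHull (𝕜 := ℝ)).isClosed huconv
  set l₀ : (Fin d → ℝ) →ₗ[ℝ] ℝ := (l₀c : (Fin d → ℝ) →ₗ[ℝ] ℝ) with hl₀def
  have hl₀ : ∀ w ∈ V, w ≠ u → l₀ w < l₀ u := by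
    intro w hw hwu
    have := hsep w (subset_convexHull ℝ _ ⟨hw, hwu⟩)
    have h2 := hub
    simp only [hl₀def, ContinuousLinearMap.coe_coe]
    exact lt_trans this h2
  -- the improving set
  set Wm : Finset (Fin d → ℝ) := Vf.filter (fun w => g w < g u) with hWmdef
  have hWmne : Wm.Nonempty := ⟨w0, by simp [hWmdef, hVfmem.2 hw0, hlt]⟩
  have hWm : ∀ {w}, w ∈ Wm ↔ w ∈ V ∧ g w < g u := by
    intro w; simp [hWmdef, hVfmem]
  have hWmu : ∀ {w}, w ∈ Wm → w ≠ u := fun {w} hw h => by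
    have := (hWm.1 hw).2; rw [h] at this; exact lt_irrefl _ this
  -- the "tie-breaking" vectors are nonzero
  set Z : Finset (Fin d → ℝ) := ((Wm ×ˢ Wm).filter (fun p => p.1 ≠ p.2)).image
    (fun p => (g u - g p.2) • (u - p.1) - (g u - g p.1) • (u - p.2)) with hZdef
  have hZ0 : (0 : Fin d → ℝ) ∉ Z := by
    intro h0
    obtain ⟨⟨v, w⟩, hvw, heq⟩ := Finset.mem_image.1 h0
    obtain ⟨hmem, hne⟩ := Finset.mem_filter.1 hvw
    obtain ⟨hv, hw⟩ := Finset.mem_product.1 hmem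
    simp only at hne heq
    obtain ⟨hvV, hvlt⟩ := hWm.1 hv
    obtain ⟨hwV, hwlt⟩ := hWm.1 hw
    set Bv : ℝ := g u - g v with hBv
    set Bw : ℝ := g u - g w with hBw
    have hBvpos : 0 < Bv := by simp [hBv]; linarith
    have hBwpos : 0 < Bw := by simp [hBw]; linarith
    have heq2 : Bw • (u - v) = Bv • (u - w) := sub_eq_zero.1 heq
    set lam : ℝ := Bv / Bw with hlam
    have hlampos : 0 < lam := div_pos hBvpos hBwpos
    have hv_eq : u - v = lam • (u - w) := by
      rw [hlam, div_eq_inv_mul, ← smul_smul, ← heq2, smul_smul,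
        inv_mul_cancel₀ hBwpos.ne', one_smul]
    rcases lt_trichotomy lam 1 with hl1 | hl1 | hl1
    · -- v is interior to [u,w]
      have hvseg : v ∈ openSegment ℝ u w := by
        refine ⟨1 - lam, lam, by linarith, hlampos, by ring, ?_⟩
        have : v = u - lam • (u - w) := by
          rw [← hv_eq]; module
        rw [this]; module
      have := ((hVext v hvV).2 (hVP hu) (hVP hwV) hvseg)
      exact hWmu hv this.symm
    · -- then v = w
      apply hne
      have : u - v = u - w := by rw [hv_eq, hl1, one_smul]
      exact sub_right_injective this
    · -- w is interior to [u,v]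
      have hw_eq : u - w = lam⁻¹ • (u - v) := by
        rw [hv_eq, smul_smul, inv_mul_cancel₀ hlampos.ne', one_smul]
      have hwseg : w ∈ openSegment ℝ u v := by
        refine ⟨1 - lam⁻¹, lam⁻¹, ?_, by positivity, by ring, ?_⟩
        · have : lam⁻¹ < 1 := by
            rw [inv_lt_one₀ hlampos]; exact hl1
          linarith
        · have : w = u - lam⁻¹ • (u - v) := by rw [← hw_eq]; module
          rw [this]; module
      have := ((hVext w hwV).2 (hVP hu) (hVP hvV) hwseg)
      exact hWmu hw this.symm
  -- perturb the separating functional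
  set F : Finset (Fin d → ℝ) := (Vf.erase u).image (fun w => u - w) with hFdef
  have hw0u : w0 ≠ u := fun h => by rw [h] at hlt; exact lt_irrefl _ hlt
  have hFne : F.Nonempty :=
    ⟨u - w0, Finset.mem_image.2 ⟨w0, Finset.mem_erase.2 ⟨hw0u, hVfmem.2 hw0⟩, rfl⟩⟩
  have hFpos : ∀ x ∈ F, 0 < l₀ x := by
    intro x hx
    obtain ⟨w, hw, rfl⟩ := Finset.mem_image.1 hx
    obtain ⟨hwu, hwV⟩ := Finset.mem_erase.1 hw
    have := hl₀ w (hVfmem.1 hwV) hwu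
    rw [map_sub]; linarith
  obtain ⟨l, hlpos, hlZ⟩ := exists_functional_pos_ne_zero l₀ F hFne hFpos Z hZ0
  have hlV : ∀ w ∈ V, w ≠ u → 0 < l (u - w) := by
    intro w hw hwu
    exact hlpos _ (Finset.mem_image.2 ⟨w, Finset.mem_erase.2 ⟨hwu, hVfmem.2 hw⟩, rfl⟩)
  -- choose the pivot vertex
  set sst : ℝ := Wm.inf' hWmne (fun w => l (u - w) / (g u - g w)) with hsstdef
  obtain ⟨wst, hwstWm, hwst⟩ :=
    Finset.exists_mem_eq_inf' hWmne (fun w => l (u - w) / (g u - g w))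
  obtain ⟨hwstV, hwstlt⟩ := hWm.1 hwstWm
  have hwstu : wst ≠ u := hWmu hwstWm
  have hBwst : 0 < g u - g wst := by linarith
  have hAwst : 0 < l (u - wst) := hlV wst hwstV hwstu
  have hsstpos : 0 < sst := by rw [hsstdef, hwst]; positivity
  clear_value sst
  set h : (Fin d → ℝ) →ₗ[ℝ] ℝ := l - sst • g with hhdef
  have happ : ∀ x, h x = l x - sst * g x := by
    intro x; simp [hhdef]
  clear_value h
  have hsst_eq : l (u - wst) = sst * (g u - g wst) := by
    have h1 : sst = l (u - wst) / (g u - g wst) := by rw [hsstdef, hwst]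
    rw [h1]; field_simp
  have hhwst : h wst = h u := by
    rw [happ, happ]
    rw [map_sub] at hsst_eq
    nlinarith [hsst_eq]
  have hhlt : ∀ v ∈ V, v ≠ u → v ≠ wst → h v < h u := by
    intro v hv hvu hvwst
    have hAv : 0 < l (u - v) := hlV v hv hvu
    rw [map_sub] at hAv
    rw [happ, happ]
    rcases le_or_gt (g u - g v) 0 with hBv | hBv
    · nlinarith
    · have hvWm : v ∈ Wm := hWm.2 ⟨hv, by linarith⟩
      have hle : sst ≤ l (u - v) / (g u - g v) := by
        rw [hsstdef]; exact Finset.inf'_le _ hvWm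
      have hne2 : sst ≠ l (u - v) / (g u - g v) := by
        intro hcontra
        have hz : ((g u - g wst) • (u - v) - (g u - g v) • (u - wst)) ∈ Z :=
          Finset.mem_image.2 ⟨(v, wst),
            Finset.mem_filter.2 ⟨Finset.mem_product.2 ⟨hvWm, hwstWm⟩, hvwst⟩, rfl⟩
        apply hlZ _ hz
        rw [map_sub, map_smul, map_smul, smul_eq_mul, smul_eq_mul]
        have h1 : sst = l (u - wst) / (g u - g wst) := by rw [hsstdef, hwst]
        rw [hcontra] at h1
        rw [div_eq_div_iff (by linarith) (by linarith)] at h1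
        linear_combination h1
      have hltratio : sst < l (u - v) / (g u - g v) := lt_of_le_of_ne hle hne2
      have h3 : sst * (g u - g v) < l (u - v) := by
        rw [lt_div_iff₀ hBv] at hltratio
        linarith
      rw [map_sub] at h3
      have h4 : sst * g u - sst * g v < l u - l v := by rw [← mul_sub]; exact h3
      linarith
  have hhle : ∀ v ∈ V, h v ≤ h u := by
    intro v hv
    by_cases hvu : v = u
    · subst hvu; exact le_refl _
    by_cases hvw : v = wst
    · subst hvw; exact hhwst.le
    · exact (hhlt v hv hvu hvw).le
  have hface : segment ℝ u wst =
      {x ∈ P | ∀ y ∈ P, h.toContinuousLinearMap y ≤ h.toContinuousLinearMap x} := by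
    have hcoe : ∀ x, h.toContinuousLinearMap x = h x := fun x => rfl
    ext x
    simp only [mem_setOf_eq, hcoe]
    constructor
    · rintro ⟨a, b, ha, hb, hab, rfl⟩
      refine ⟨(convex_convexHull ℝ V).segment_subset (hVP hu) (hVP hwstV)
        ⟨a, b, ha, hb, hab, rfl⟩, ?_⟩
      intro y hy
      have hyle : h y ≤ h u := le_on_convexHull h hhle hy
      have heq : h (a • u + b • wst) = h u := by
        rw [map_add, map_smul, map_smul, hhwst, smul_eq_mul, smul_eq_mul,
          ← add_mul, hab, one_mul]
      rw [heq]; exact hyle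
    · rintro ⟨hxP, hxmax⟩
      have hxu : h x = h u :=
        le_antisymm (le_on_convexHull h hhle hxP) (hxmax u (hVP hu))
      have hxVf : x ∈ convexHull ℝ (Vf : Set (Fin d → ℝ)) := by
        rw [hVfco]; exact hxP
      obtain ⟨wt, hwt0, hwt1, hwtx⟩ := Finset.mem_convexHull.1 hxVf
      have hx' : h x = ∑ y ∈ Vf, wt y * h y := by
        rw [← hwtx, Finset.centerMass_eq_of_sum_1 _ _ hwt1]
        rw [map_sum]
        simp [smul_eq_mul]
      have hsum0 : ∑ y ∈ Vf, wt y * (h u - h y) = 0 := by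
        have hexp : ∑ y ∈ Vf, wt y * (h u - h y)
            = (∑ y ∈ Vf, wt y) * h u - ∑ y ∈ Vf, wt y * h y := by
          rw [Finset.sum_mul, ← Finset.sum_sub_distrib]
          congr 1; ext y; ring
        rw [hexp, hwt1, one_mul, ← hx', hxu]; ring
      have hzero : ∀ y ∈ Vf, wt y * (h u - h y) = 0 :=
        (Finset.sum_eq_zero_iff_of_nonneg (fun y hy => mul_nonneg (hwt0 y hy)
          (by linarith [hhle y (hVfmem.1 hy)]))).1 hsum0
      have hsupp : ∀ y ∈ Vf, wt y ≠ 0 → y ∈ ({u, wst} : Set (Fin d → ℝ)) := by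
        intro y hy hne3
        rcases mul_eq_zero.1 (hzero y hy) with hc | hc
        · exact absurd hc hne3
        · by_contra hmem
          simp only [mem_insert_iff, mem_singleton_iff, not_or] at hmem
          exact absurd (by linarith : h y = h u)
            (hhlt y (hVfmem.1 hy) hmem.1 hmem.2).ne
      have hxmem : x ∈ convexHull ℝ ({u, wst} : Set (Fin d → ℝ)) := by
        rw [← hwtx, ← Finset.centerMass_filter_ne_zero]
        apply Finset.centerMass_mem_convexHull
        · intro i hi; exact hwt0 i (Finset.mem_filter.1 hi).1
        · rw [Finset.sum_filter_ne_zero, hwt1]; norm_num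
        · intro i hi
          exact hsupp i (Finset.mem_filter.1 hi).1 (Finset.mem_filter.1 hi).2
      rwa [convexHull_pair] at hxmem
  refine ⟨wst, hwstV, hwstlt, ?_⟩
  show u ≠ wst ∧ u ∈ P.extremePoints ℝ ∧ wst ∈ P.extremePoints ℝ ∧ IsExposed ℝ P (segment ℝ u wst)
  refine ⟨fun hc => hwstu hc.symm, hVext u hu, hVext wst hwstV, fun _ => ?_⟩
  exact ⟨h.toContinuousLinearMap, hface⟩

/-- Complementary connectedness: if `P = conv S` is a polytope (`S` finite) and the
set of extreme points `v` of `P` with `f v ≤ c` is nonempty, then this set induces a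
connected subgraph of the graph of `P`; i.e. removing the cutset `{v : f v > c}` does
not disconnect the graph on the remaining vertices. -/
theorem complement_of_cutset_connected (d : ℕ) (S : Set (Fin d → ℝ)) (hS : S.Finite)
    (f : (Fin d → ℝ) →ₗ[ℝ] ℝ) (c : ℝ)
    (hne : {v ∈ (convexHull ℝ S).extremePoints ℝ | f v ≤ c}.Nonempty) :
    ((polytopeGraph (convexHull ℝ S)).induce
      {v ∈ (convexHull ℝ S).extremePoints ℝ | f v ≤ c}).Connected := by
  classical
  set P : Set (Fin d → ℝ) := convexHull ℝ S with hPdef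
  set V : Set (Fin d → ℝ) := P.extremePoints ℝ with hVdef
  have hVS : V ⊆ S := extremePoints_convexHull_subset
  have hVfin : V.Finite := hS.subset hVS
  have hPV : convexHull ℝ V = P := by
    have h1 := closure_convexHull_extremePoints (hS.isCompact_convexHull (𝕜 := ℝ))
      (convex_convexHull ℝ S)
    have h2 : closure (convexHull ℝ V) = convexHull ℝ V :=
      (hVfin.isCompact_convexHull (𝕜 := ℝ)).isClosed.closure_eq
    rw [← hPdef, ← hVdef] at h1
    rw [← h1, h2]
  have hVext : ∀ v ∈ V, v ∈ (convexHull ℝ V).extremePoints ℝ := by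
    rw [hPV]; exact fun v hv => hv
  have hGeq : polytopeGraph (convexHull ℝ V) = polytopeGraph P := by rw [hPV]
  set T : Set (Fin d → ℝ) := {v ∈ V | f v ≤ c} with hTdef
  set Vf : Finset (Fin d → ℝ) := hVfin.toFinset with hVfdef
  have hVfmem : ∀ {x}, x ∈ Vf ↔ x ∈ V := fun {x} => hVfin.mem_toFinset
  obtain ⟨u₀, hu₀⟩ := hne
  have hu₀T : u₀ ∈ T := hu₀
  have hVfne : Vf.Nonempty := ⟨u₀, hVfmem.2 hu₀.1⟩
  -- an injective-on-V functional
  set Z₀ : Finset (Fin d → ℝ) :=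
    ((Vf ×ˢ Vf).filter (fun p => p.1 ≠ p.2)).image (fun p => p.1 - p.2) with hZ₀def
  have hZ₀0 : (0 : Fin d → ℝ) ∉ Z₀ := by
    intro h0
    obtain ⟨⟨x, y⟩, hxy, heq⟩ := Finset.mem_image.1 h0
    exact (Finset.mem_filter.1 hxy).2 (sub_eq_zero.1 heq)
  obtain ⟨φ, hφ⟩ := exists_functional_ne_zero Z₀ hZ₀0
  have hφinj : ∀ x ∈ V, ∀ y ∈ V, x ≠ y → φ x ≠ φ y := by
    intro x hx y hy hxy hc
    refine hφ (x - y) (Finset.mem_image.2 ⟨(x, y), Finset.mem_filter.2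
      ⟨Finset.mem_product.2 ⟨hVfmem.2 hx, hVfmem.2 hy⟩, hxy⟩, rfl⟩) ?_
    rw [map_sub, hc, sub_self]
  -- bounds for the perturbation
  set Vc : Finset (Fin d → ℝ) := Vf.filter (fun v => c < f v) with hVcdef
  set δ : ℝ := if h : Vc.Nonempty then Vc.inf' h (fun v => f v - c) else 1 with hδdef
  have hδpos : 0 < δ := by
    rw [hδdef]
    split_ifs with h
    · rw [Finset.lt_inf'_iff]
      intro v hv
      have := (Finset.mem_filter.1 hv).2
      linarith
    · norm_num
  have hδle : ∀ v ∈ V, c < f v → δ ≤ f v - c := by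
    intro v hv hcv
    have hvVc : v ∈ Vc := Finset.mem_filter.2 ⟨hVfmem.2 hv, hcv⟩
    rw [hδdef]
    split_ifs with h
    · exact Finset.inf'_le _ hvVc
    · exact absurd ⟨v, hvVc⟩ h
  set M : ℝ := Vf.sup' hVfne (fun v => |φ v|) with hMdef
  have hMle : ∀ v ∈ V, |φ v| ≤ M := fun v hv => Finset.le_sup' (fun v => |φ v|) (hVfmem.2 hv)
  set εb : ℝ := δ / (2 * M + 1) with hεbdef
  have hMnn : 0 ≤ M := le_trans (abs_nonneg _) (hMle u₀ hu₀.1)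
  have hεbpos : 0 < εb := by rw [hεbdef]; positivity
  -- bad values of ε for injectivity
  set Bε : Finset ℝ := ((Vf ×ˢ Vf).filter (fun p => p.1 ≠ p.2)).image
    (fun p => (f p.2 - f p.1) / (φ p.1 - φ p.2)) with hBεdef
  obtain ⟨ε, hεIoo, hεB⟩ := (Set.Ioo_infinite hεbpos).exists_notMem_finset Bε
  have hεpos : 0 < ε := hεIoo.1
  set g : (Fin d → ℝ) →ₗ[ℝ] ℝ := f + ε • φ with hgdef
  have hgapp : ∀ x, g x = f x + ε * φ x := by intro x; simp [hgdef]
  clear_value g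
  -- g is injective on V
  have hginj : ∀ x ∈ V, ∀ y ∈ V, g x = g y → x = y := by
    intro x hx y hy hgxy
    by_contra hxy
    apply hεB
    refine Finset.mem_image.2 ⟨(x, y), Finset.mem_filter.2
      ⟨Finset.mem_product.2 ⟨hVfmem.2 hx, hVfmem.2 hy⟩, hxy⟩, ?_⟩
    have hφxy : φ x - φ y ≠ 0 := sub_ne_zero.2 (hφinj x hx y hy hxy)
    rw [hgapp, hgapp] at hgxy
    field_simp
    linarith
  -- T is downward closed for g
  have hdown : ∀ x ∈ V, ∀ y ∈ V, f x ≤ c → g y ≤ g x → f y ≤ c := by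
    intro x hx y hy hfx hgyx
    by_contra hfy
    push_neg at hfy
    have h1 : δ ≤ f y - c := hδle y hy hfy
    rw [hgapp, hgapp] at hgyx
    have h2 : |φ x| ≤ M := hMle x hx
    have h3 : |φ y| ≤ M := hMle y hy
    have h4 : φ x - φ y ≤ 2 * M := by
      have := neg_abs_le (φ y)
      have := le_abs_self (φ x)
      linarith
    have h5 : ε * (φ x - φ y) ≤ ε * (2 * M) := by
      apply mul_le_mul_of_nonneg_left h4 hεpos.le
    have h6 : ε * (2 * M) < δ := by
      have hεlt : ε < εb := hεIoo.2
      rw [hεbdef] at hεlt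
      have h7 : 0 < 2 * M + 1 := by linarith
      have h8 : ε * (2 * M + 1) < δ := (lt_div_iff₀ h7).1 hεlt
      nlinarith [hεpos]
    have : f y ≤ f x + ε * (φ x - φ y) := by nlinarith
    linarith
  -- the g-minimal vertex
  obtain ⟨m, hmVf, hmmin⟩ := Vf.exists_min_image g hVfne
  have hmV : m ∈ V := hVfmem.1 hmVf
  have hmT : m ∈ T := ⟨hmV, hdown u₀ hu₀.1 m hmV hu₀.2 (hmmin u₀ (hVfmem.2 hu₀.1))⟩
  -- reachability to the minimum
  set G : SimpleGraph (Fin d → ℝ) := polytopeGraph P with hGdef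
  have hreach : ∀ (n : ℕ), ∀ u, ∀ hu : u ∈ T,
      (Vf.filter (fun x => g x < g u)).card ≤ n →
      (G.induce T).Reachable ⟨u, hu⟩ ⟨m, hmT⟩ := by
    intro n
    induction n with
    | zero =>
      intro u hu hcard
      by_cases hum : u = m
      · subst hum; exact SimpleGraph.Reachable.refl _
      · exfalso
        have hmlt : g m < g u := lt_of_le_of_ne (hmmin u (hVfmem.2 hu.1))
          (fun h => hum (hginj m hmV u hu.1 h).symm)
        have : m ∈ Vf.filter (fun x => g x < g u) :=
          Finset.mem_filter.2 ⟨hmVf, hmlt⟩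
        have := Finset.card_pos.2 ⟨m, this⟩
        omega
    | succ n ih =>
      intro u hu hcard
      by_cases hum : u = m
      · subst hum; exact SimpleGraph.Reachable.refl _
      · have hmlt : g m < g u := lt_of_le_of_ne (hmmin u (hVfmem.2 hu.1))
          (fun h => hum (hginj m hmV u hu.1 h).symm)
        obtain ⟨w, hwV, hwlt, hadj⟩ := exists_adj_lt V hVfin hVext g hu.1 hmV hmlt
        rw [hGeq] at hadj
        have hwT : w ∈ T := ⟨hwV, hdown u hu.1 w hwV hu.2 (by linarith)⟩
        have hss : Vf.filter (fun x => g x < g w) ⊂ Vf.filter (fun x => g x < g u) := by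
          refine Finset.ssubset_iff_of_subset ?_ |>.2 ?_
          · intro x hx
            obtain ⟨h1, h2⟩ := Finset.mem_filter.1 hx
            exact Finset.mem_filter.2 ⟨h1, by linarith⟩
          · exact ⟨w, Finset.mem_filter.2 ⟨hVfmem.2 hwV, hwlt⟩,
              fun hcon => lt_irrefl _ (Finset.mem_filter.1 hcon).2⟩
        have hcard2 : (Vf.filter (fun x => g x < g w)).card ≤ n := by
          have := Finset.card_lt_card hss
          omega
        have hadjT : (G.induce T).Adj ⟨u, hu⟩ ⟨w, hwT⟩ := hadj
        exact (hadjT.reachable).trans (ih w hwT hcard2)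
  haveI : Nonempty T := ⟨⟨u₀, hu₀T⟩⟩
  constructor
  intro a b
  exact (hreach _ a.1 a.2 le_rfl).trans (hreach _ b.1 b.2 le_rfl).symm
end

section
/- (Facet-free condition.) Let P ⊆ ℝ^d be a polytope whose affine span has dimension d, let f : ℝ^d → ℝ be a linear functional and c ∈ ℝ, and suppose P' = P ∩ {x : f(x) ≤ c} also has affine span of dimension d. If there is a facet F of P all of whose extreme points v satisfy f(v) > c (i.e., the cutset contains all vertices of a facet of P), then the number of facets of P' is at most the number of facets of P; in particular the cut does not increase the facet count to n+1 from n. -/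
open Set

/-- The dimension of the affine span of a set in `ℝ^d`. -/
noncomputable def affDim {d : ℕ} (s : Set (Fin d → ℝ)) : ℕ :=
  Module.finrank ℝ (vectorSpan ℝ s)

/-- The set of facets of a polytope `P` whose affine span has dimension `d`:
exposed faces whose affine span has dimension `d - 1`. -/
def facets {d : ℕ} (P : Set (Fin d → ℝ)) : Set (Set (Fin d → ℝ)) :=
  {F | IsExposed ℝ P F ∧ affDim F = d - 1}

/-- An exposed face of a convex hull is the convex hull of the points it contains. -/
lemma exposed_eq_convexHull_inter {d : ℕ} {S F : Set (Fin d → ℝ)}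
    (h : IsExposed ℝ (convexHull ℝ S) F) : F = convexHull ℝ (S ∩ F) := by
  rcases F.eq_empty_or_nonempty with rfl | hne
  · simp
  obtain ⟨l, hl⟩ := h hne
  apply Subset.antisymm
  · intro x hx
    have hx' := hx
    rw [hl] at hx'
    obtain ⟨hxP, hxmax⟩ := hx'
    rw [convexHull_eq] at hxP
    obtain ⟨ι, t, w, z, hw0, hw1, hz, hcm⟩ := hxP
    have hzP : ∀ i ∈ t, z i ∈ convexHull ℝ S := fun i hi => subset_convexHull ℝ S (hz i hi)
    have hcm' : ∑ i ∈ t, w i • z i = x := by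
      rw [← Finset.centerMass_eq_of_sum_1 _ _ hw1, hcm]
    have hlx : ∑ i ∈ t, w i * l (z i) = l x := by
      rw [← hcm']
      simp [map_sum, map_smul, smul_eq_mul]
    have hterm : ∀ i ∈ t, w i * (l x - l (z i)) = 0 := by
      have hsum : ∑ i ∈ t, w i * (l x - l (z i)) = 0 := by
        have : ∑ i ∈ t, w i * l x = l x := by
          rw [← Finset.sum_mul, hw1, one_mul]
        calc ∑ i ∈ t, w i * (l x - l (z i))
            = ∑ i ∈ t, w i * l x - ∑ i ∈ t, w i * l (z i) := by
              rw [← Finset.sum_sub_distrib]; simp only [mul_sub]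
          _ = 0 := by rw [this, hlx, sub_self]
      exact (Finset.sum_eq_zero_iff_of_nonneg (fun i hi =>
        mul_nonneg (hw0 i hi) (sub_nonneg.2 (hxmax _ (hzP i hi))))).1 hsum
    have hzF : ∀ i ∈ t, w i ≠ 0 → z i ∈ S ∩ F := by
      intro i hi hwi
      refine ⟨hz i hi, ?_⟩
      rw [hl]
      refine ⟨hzP i hi, fun y hy => ?_⟩
      have := hterm i hi
      have hlz : l (z i) = l x := by
        rcases mul_eq_zero.1 this with h' | h'
        · exact absurd h' hwi
        · linarith [sub_eq_zero.1 h']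
      rw [hlz]; exact hxmax y hy
    rw [← hcm, ← Finset.centerMass_filter_ne_zero]
    apply Finset.centerMass_mem_convexHull
    · intro i hi
      exact hw0 i (Finset.mem_filter.1 hi).1
    · rw [Finset.sum_filter_ne_zero, hw1]; norm_num
    · intro i hi
      rw [Finset.mem_filter] at hi
      exact hzF i hi.1 hi.2
  · exact convexHull_min (fun y hy => hy.2) (h.convex (convex_convexHull ℝ S))


/-- A nonempty exposed face with full rank equals the whole set. -/
lemma exposed_eq_of_rank_le {d : ℕ} {C F : Set (Fin d → ℝ)}
    (h : IsExposed ℝ C F) (hne : F.Nonempty)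
    (hrank : Module.finrank ℝ (vectorSpan ℝ C) ≤ Module.finrank ℝ (vectorSpan ℝ F)) :
    F = C := by
  have hFC : F ⊆ C := h.subset
  have hle : vectorSpan ℝ F ≤ vectorSpan ℝ C := vectorSpan_mono ℝ hFC
  have heq : vectorSpan ℝ F = vectorSpan ℝ C :=
    Submodule.eq_of_le_of_finrank_le hle hrank
  obtain ⟨l, hl⟩ := h hne
  obtain ⟨y, hy⟩ := hne
  have hymax : ∀ z ∈ C, l z ≤ l y := by rw [hl] at hy; exact hy.2
  have hker : vectorSpan ℝ F ≤ LinearMap.ker (l : (Fin d → ℝ) →ₗ[ℝ] ℝ) := by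
    rw [vectorSpan_def]
    rw [Submodule.span_le]
    rintro v ⟨a, ha, b, hb, rfl⟩
    have hamax : ∀ z ∈ C, l z ≤ l a := by rw [hl] at ha; exact ha.2
    have hbmax : ∀ z ∈ C, l z ≤ l b := by rw [hl] at hb; exact hb.2
    have : l a = l b := le_antisymm (hbmax a (hFC ha)) (hamax b (hFC hb))
    simp [LinearMap.mem_ker, vsub_eq_sub, map_sub, this]
  refine Subset.antisymm hFC (fun x hx => ?_)
  have hxy : x - y ∈ vectorSpan ℝ F := by
    rw [heq]
    exact vsub_mem_vectorSpan ℝ hx (hFC hy)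
  have hlxy : l (x - y) = 0 := hker hxy
  rw [map_sub, sub_eq_zero] at hlxy
  rw [hl]
  exact ⟨hx, fun z hz => by rw [hlxy]; exact hymax z hz⟩

lemma affDim_empty {d : ℕ} : affDim (∅ : Set (Fin d → ℝ)) = 0 := by
  rw [affDim, vectorSpan_empty]; exact finrank_bot ℝ _
open Set

/-- If every extreme point of a compact exposed face satisfies `c < f`, so does every point. -/
lemma pos_on_face {d : ℕ} {S F : Set (Fin d → ℝ)} (hS : S.Finite)
    (hexp : IsExposed ℝ (convexHull ℝ S) F)
    {f : (Fin d → ℝ) →ₗ[ℝ] ℝ} {c : ℝ}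
    (hcut : ∀ v ∈ F.extremePoints ℝ, c < f v) :
    ∀ x ∈ F, c < f x := by
  intro x hx
  have hPc : IsCompact (convexHull ℝ S) := hS.isCompact_convexHull ℝ
  have hFcl : IsClosed F := hexp.isClosed hPc.isClosed
  have hFc : IsCompact F := hPc.of_isClosed_subset hFcl hexp.subset
  have hfc : Continuous f := f.continuous_of_finiteDimensional
  obtain ⟨v0, hv0F, hmin⟩ := hFc.exists_isMinOn ⟨x, hx⟩ hfc.continuousOn
  set g : (Fin d → ℝ) →L[ℝ] ℝ := LinearMap.toContinuousLinearMap (-f) with hg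
  set E0 : Set (Fin d → ℝ) := {z ∈ F | ∀ y ∈ F, g y ≤ g z} with hE0
  have hE0exp : IsExposed ℝ F E0 := fun _ => ⟨g, rfl⟩
  have hv0 : v0 ∈ E0 := by
    refine ⟨hv0F, fun y hy => ?_⟩
    have : f v0 ≤ f y := hmin hy
    simp [hg, LinearMap.coe_toContinuousLinearMap']
    linarith
  have hE0cl : IsClosed E0 := hE0exp.isClosed hFcl
  have hE0c : IsCompact E0 := hFc.of_isClosed_subset hE0cl hE0exp.subset
  obtain ⟨v, hv⟩ := hE0c.extremePoints_nonempty ⟨v0, hv0⟩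
  have hvF : v ∈ F.extremePoints ℝ :=
    hE0exp.isExtreme.extremePoints_subset_extremePoints hv
  have hvE0 : v ∈ E0 := extremePoints_subset hv
  have : f v ≤ f x := by
    have := hvE0.2 x hx
    simp [hg, LinearMap.coe_toContinuousLinearMap'] at this
    linarith
  exact lt_of_lt_of_le (hcut v hvF) this

lemma facets_finite {d : ℕ} {S : Set (Fin d → ℝ)} (hS : S.Finite) :
    (facets (convexHull ℝ S)).Finite := by
  apply Set.Finite.subset (hS.finite_subsets.image (convexHull ℝ))
  rintro F ⟨hFexp, -⟩
  exact ⟨S ∩ F, inter_subset_left, (exposed_eq_convexHull_inter hFexp).symm⟩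

/-- A facet of `P ∩ {f ≤ c}` containing a point with `f x < c` is the intersection of a
facet of `P` with `P ∩ {f ≤ c}`. -/
lemma facet_of_cut_facet {d : ℕ} (hd : 1 ≤ d) {S : Set (Fin d → ℝ)}
    (hP : affDim (convexHull ℝ S) = d)
    {f : (Fin d → ℝ) →ₗ[ℝ] ℝ} {c : ℝ}
    (hP' : affDim (convexHull ℝ S ∩ {x | f x ≤ c}) = d)
    {F' : Set (Fin d → ℝ)}
    (hF' : F' ∈ facets (convexHull ℝ S ∩ {x | f x ≤ c}))
    (hx : ∃ x ∈ F', f x < c) :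
    ∃ G ∈ facets (convexHull ℝ S),
      F' = G ∩ (convexHull ℝ S ∩ {x | f x ≤ c}) := by
  obtain ⟨x, hxF, hxc⟩ := hx
  obtain ⟨hexp, hdim⟩ := hF'
  set P : Set (Fin d → ℝ) := convexHull ℝ S with hPdef
  set P' : Set (Fin d → ℝ) := P ∩ {x | f x ≤ c} with hP'def
  obtain ⟨l, hl⟩ := hexp ⟨x, hxF⟩
  have hxP' : x ∈ P' := (hl ▸ hxF).1
  have hxmax : ∀ y ∈ P', l y ≤ l x := (hl ▸ hxF).2
  -- `l` is maximized over all of `P` at `x`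
  have hsupp : ∀ y ∈ P, l y ≤ l x := by
    intro y hy
    by_cases hyc : f y ≤ c
    · exact hxmax y ⟨hy, hyc⟩
    push_neg at hyc
    set t : ℝ := (c - f x) / (f y - f x) with ht
    have hyx : 0 < f y - f x := by linarith
    have ht0 : 0 < t := div_pos (by linarith) hyx
    have ht1 : t ≤ 1 := by
      rw [div_le_one hyx]; linarith
    set z : Fin d → ℝ := (1 - t) • x + t • y with hz
    have hzP : z ∈ P := (convex_convexHull ℝ S) hxP'.1 hy (by linarith) ht0.le (by ring)
    have hfz : f z = c := by
      simp only [hz, map_add, map_smul, smul_eq_mul]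
      have htt : t * (f y - f x) = c - f x := by rw [ht, div_mul_cancel₀ _ hyx.ne']
      linear_combination htt
    have hzP' : z ∈ P' := ⟨hzP, by rw [mem_setOf_eq, hfz]⟩
    have hlz : l z ≤ l x := hxmax z hzP'
    have hlz' : l z = (1 - t) * l x + t * l y := by
      simp [hz, map_add, map_smul, smul_eq_mul]
    nlinarith
  set G : Set (Fin d → ℝ) := {z ∈ P | ∀ y ∈ P, l y ≤ l z} with hG
  have hGexp : IsExposed ℝ P G := fun _ => ⟨l, rfl⟩
  have hxG : x ∈ G := ⟨hxP'.1, hsupp⟩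
  have hF'G : F' ⊆ G := by
    intro z hzF
    have hzP' : z ∈ P' := (hl ▸ hzF).1
    have hzmax : ∀ y ∈ P', l y ≤ l z := (hl ▸ hzF).2
    exact ⟨hzP'.1, fun y hy => le_trans (le_trans (hsupp y hy) (hzmax x hxP'))
      (le_refl _)⟩
  have hGF' : G ∩ P' ⊆ F' := by
    rintro z ⟨hzG, hzP'⟩
    rw [hl]
    exact ⟨hzP', fun y hy => hzG.2 y hy.1⟩
  have hFeq : F' = G ∩ P' :=
    Subset.antisymm (subset_inter hF'G (fun z hzF => (hl ▸ hzF).1)) hGF'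
  refine ⟨G, ⟨hGexp, ?_⟩, hFeq⟩
  -- dimension of G is d - 1
  have hge : d - 1 ≤ affDim G := by
    rw [← hdim]
    exact Submodule.finrank_mono (vectorSpan_mono ℝ hF'G)
  have hleD : affDim G ≤ d := by
    have := Submodule.finrank_le (vectorSpan ℝ G)
    simpa [affDim] using this
  by_contra hne
  have hGd : affDim G = d := by omega
  have hGP : G = P := exposed_eq_of_rank_le hGexp ⟨x, hxG⟩ (by show affDim P ≤ affDim G; rw [hP, hGd])
  -- then l is constant on P
  have hconst : ∀ y ∈ P, l y = l x := by
    intro y hy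
    have : ∀ w ∈ P, l w ≤ l y := (hGP ▸ hy : y ∈ G).2
    exact le_antisymm (hsupp y hy) (this x hxP'.1)
  by_cases hl0 : ∃ v, l v ≠ 0
  · -- l ≠ 0 : P lies in a hyperplane, contradicting full-dimensionality
    obtain ⟨v, hv⟩ := hl0
    have hker : vectorSpan ℝ P ≤ LinearMap.ker (l : (Fin d → ℝ) →ₗ[ℝ] ℝ) := by
      rw [vectorSpan_def, Submodule.span_le]
      rintro u ⟨a, ha, b, hb, rfl⟩
      simp [LinearMap.mem_ker, vsub_eq_sub, map_sub, hconst a ha, hconst b hb]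
    have hrank : Module.finrank ℝ (LinearMap.range (l : (Fin d → ℝ) →ₗ[ℝ] ℝ)) +
        Module.finrank ℝ (LinearMap.ker (l : (Fin d → ℝ) →ₗ[ℝ] ℝ)) =
        Module.finrank ℝ (Fin d → ℝ) :=
      LinearMap.finrank_range_add_finrank_ker _
    have hdim' : Module.finrank ℝ (Fin d → ℝ) = d := by
      simp [Module.finrank_pi]
    have hrpos : 0 < Module.finrank ℝ (LinearMap.range (l : (Fin d → ℝ) →ₗ[ℝ] ℝ)) := by
      rw [Module.finrank_pos_iff]
      exact ⟨⟨l v, LinearMap.mem_range_self _ v⟩, ⟨0, Submodule.zero_mem _⟩, by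
        simp [Subtype.ext_iff, hv]⟩
    have hPle : Module.finrank ℝ (vectorSpan ℝ P) ≤
        Module.finrank ℝ (LinearMap.ker (l : (Fin d → ℝ) →ₗ[ℝ] ℝ)) :=
      Submodule.finrank_mono hker
    have h2 : affDim P ≤ Module.finrank ℝ (LinearMap.ker (l : (Fin d → ℝ) →ₗ[ℝ] ℝ)) := hPle
    omega
  · -- l = 0 : F' = P', contradicting dimensions
    push_neg at hl0
    have : F' = P' := by
      rw [hl]
      apply Subset.antisymm (fun z hz => hz.1)
      intro z hz
      exact ⟨hz, fun y _ => by rw [hl0 y, hl0 z]⟩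
    rw [this] at hdim
    rw [hP'] at hdim
    omega

/-- There is at most one facet of the cut polytope inside the cutting hyperplane. -/
lemma facet_in_hyperplane_eq {d : ℕ} {S : Set (Fin d → ℝ)}
    {f : (Fin d → ℝ) →ₗ[ℝ] ℝ} {c : ℝ}
    (hkerf : Module.finrank ℝ (LinearMap.ker f) = d - 1)
    {F' : Set (Fin d → ℝ)}
    (hF' : F' ∈ facets (convexHull ℝ S ∩ {x | f x ≤ c}))
    (hne : F'.Nonempty) (hsub : F' ⊆ {x | f x = c}) :
    F' = {x ∈ convexHull ℝ S ∩ {x | f x ≤ c} |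
      ∀ y ∈ convexHull ℝ S ∩ {x | f x ≤ c}, f y ≤ f x} := by
  obtain ⟨hexp, hdim⟩ := hF'
  set P' : Set (Fin d → ℝ) := convexHull ℝ S ∩ {x | f x ≤ c} with hP'def
  set E : Set (Fin d → ℝ) := {x ∈ P' | ∀ y ∈ P', f y ≤ f x} with hE
  obtain ⟨z, hz⟩ := hne
  have hzc : f z = c := hsub hz
  have hF'E : F' ⊆ E := by
    intro w hw
    have hwP' : w ∈ P' := hexp.subset hw
    exact ⟨hwP', fun y hy => by rw [hsub hw]; exact hy.2⟩
  have hEc : E ⊆ {x | f x = c} := by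
    intro w hw
    have h1 : f w ≤ c := hw.1.2
    have h2 : c ≤ f w := by rw [← hzc]; exact hw.2 z (hexp.subset hz)
    exact le_antisymm h1 h2
  have hEker : vectorSpan ℝ E ≤ LinearMap.ker f := by
    rw [vectorSpan_def, Submodule.span_le]
    rintro u ⟨a, ha, b, hb, rfl⟩
    have ha' : f a = c := hEc ha
    have hb' : f b = c := hEc hb
    simp [LinearMap.mem_ker, vsub_eq_sub, map_sub, ha', hb']
  have hErank : Module.finrank ℝ (vectorSpan ℝ E) ≤ d - 1 := by
    rw [← hkerf]; exact Submodule.finrank_mono hEker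
  have hexpE : IsExposed ℝ E F' := hexp.mono (fun w hw => hw.1) hF'E
  exact exposed_eq_of_rank_le hexpE ⟨z, hz⟩ (by change _ ≤ affDim F'; rw [hdim]; exact hErank)

section Dim1
open Classical

noncomputable def phi1 : (Fin 1 → ℝ) →L[ℝ] ℝ :=
  LinearMap.toContinuousLinearMap (LinearMap.proj (0 : Fin 1))

lemma phi1_apply (x : Fin 1 → ℝ) : phi1 x = x 0 := rfl

lemma clm_eq_dim1 (l : (Fin 1 → ℝ) →L[ℝ] ℝ) (x : Fin 1 → ℝ) :
    l x = x 0 * l (fun _ => (1 : ℝ)) := by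
  have hx : x = x 0 • (fun _ => (1 : ℝ)) := by
    funext i
    have : i = 0 := Subsingleton.elim i 0
    simp [this]
  conv_lhs => rw [hx]
  simp

lemma eq_of_coord_eq {x y : Fin 1 → ℝ} (h : x 0 = y 0) : x = y := by
  funext i
  have : i = 0 := Subsingleton.elim i 0
  rw [this, h]

lemma dim1_facets_subset {A : Set (Fin 1 → ℝ)} (hA : affDim A = 1) :
    facets A ⊆ {∅, {x ∈ A | ∀ y ∈ A, phi1 y ≤ phi1 x},
      {x ∈ A | ∀ y ∈ A, (-phi1) y ≤ (-phi1) x}} := by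
  rintro F' ⟨hexp, hdim⟩
  rcases F'.eq_empty_or_nonempty with rfl | hne
  · exact Or.inl rfl
  obtain ⟨l, hl⟩ := hexp hne
  set α : ℝ := l (fun _ => (1 : ℝ)) with hα
  rcases lt_trichotomy α 0 with hlt | heq | hgt
  · right; right
    rw [hl]
    ext x
    simp only [mem_setOf_eq]
    constructor
    · rintro ⟨hxA, hmax⟩
      refine ⟨hxA, fun y hy => ?_⟩
      have := hmax y hy
      rw [clm_eq_dim1 l y, clm_eq_dim1 l x] at this
      have hxy : x 0 ≤ y 0 := by
        by_contra hcon
        push_neg at hcon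
        nlinarith
      simp [phi1_apply]
      linarith
    · rintro ⟨hxA, hmax⟩
      refine ⟨hxA, fun y hy => ?_⟩
      have := hmax y hy
      simp [phi1_apply] at this
      rw [clm_eq_dim1 l y, clm_eq_dim1 l x]
      nlinarith
  · -- α = 0 : l vanishes, F' = A, contradiction with dimensions
    exfalso
    have hFA : F' = A := by
      rw [hl]
      apply Subset.antisymm (fun z hz => hz.1)
      intro z hz
      refine ⟨hz, fun y _ => ?_⟩
      rw [clm_eq_dim1 l y, clm_eq_dim1 l z, ← hα, heq]
      simp
    rw [hFA, hA] at hdim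
    omega
  · right; left
    rw [hl]
    ext x
    simp only [mem_setOf_eq]
    constructor
    · rintro ⟨hxA, hmax⟩
      refine ⟨hxA, fun y hy => ?_⟩
      have := hmax y hy
      rw [clm_eq_dim1 l y, clm_eq_dim1 l x] at this
      have hxy : y 0 ≤ x 0 := by
        by_contra hcon
        push_neg at hcon
        nlinarith
      simpa [phi1_apply] using hxy
    · rintro ⟨hxA, hmax⟩
      refine ⟨hxA, fun y hy => ?_⟩
      have := hmax y hy
      simp [phi1_apply] at this
      rw [clm_eq_dim1 l y, clm_eq_dim1 l x]
      nlinarith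

lemma dim1_three_le {S : Set (Fin 1 → ℝ)} (hS : S.Finite)
    (hP : affDim (convexHull ℝ S) = 1) :
    3 ≤ (facets (convexHull ℝ S)).ncard := by
  set P : Set (Fin 1 → ℝ) := convexHull ℝ S with hPdef
  have hPne : P.Nonempty := by
    rcases P.eq_empty_or_nonempty with he | h
    · rw [he] at hP
      rw [show affDim (∅ : Set (Fin 1 → ℝ)) = 0 by
        rw [affDim, vectorSpan_empty]; exact finrank_bot ℝ _] at hP
      omega
    · exact h
  have hPc : IsCompact P := hS.isCompact_convexHull ℝ
  set Mx : Set (Fin 1 → ℝ) := {x ∈ P | ∀ y ∈ P, phi1 y ≤ phi1 x} with hMx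
  set Mn : Set (Fin 1 → ℝ) := {x ∈ P | ∀ y ∈ P, (-phi1) y ≤ (-phi1) x} with hMn
  obtain ⟨zx, hzxP, hzx⟩ := hPc.exists_isMaxOn hPne (phi1.continuous.continuousOn)
  obtain ⟨zn, hznP, hzn⟩ := hPc.exists_isMinOn hPne (phi1.continuous.continuousOn)
  have hzxM : zx ∈ Mx := ⟨hzxP, fun y hy => hzx hy⟩
  have hznM : zn ∈ Mn := ⟨hznP, fun y hy => by
    have : phi1 zn ≤ phi1 y := hzn hy
    simp only [ContinuousLinearMap.neg_apply, neg_le_neg_iff]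
    exact this⟩
  have hsub : ∀ z (M : Set (Fin 1 → ℝ)), z ∈ M →
      (∀ x ∈ M, ∀ y ∈ M, phi1 x = phi1 y) → affDim M = 0 := by
    intro z M hz hss
    have : M = {z} := by
      ext w
      constructor
      · intro hw
        exact eq_of_coord_eq (hss w hw z hz)
      · rintro rfl; exact hz
    rw [this, affDim, vectorSpan_singleton]
    exact finrank_bot ℝ _
  have hMxf : Mx ∈ facets P := by
    refine ⟨fun _ => ⟨phi1, rfl⟩, ?_⟩
    exact hsub zx Mx hzxM (fun x hx y hy =>
      le_antisymm (hy.2 x hx.1) (hx.2 y hy.1))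
  have hMnf : Mn ∈ facets P := by
    refine ⟨fun _ => ⟨-phi1, rfl⟩, ?_⟩
    refine hsub zn Mn hznM (fun x hx y hy => ?_)
    have h1 := hy.2 x hx.1
    have h2 := hx.2 y hy.1
    simp at h1 h2
    linarith
  have hEf : (∅ : Set (Fin 1 → ℝ)) ∈ facets P :=
    ⟨isExposed_empty, by rw [show affDim (∅ : Set (Fin 1 → ℝ)) = 0 by
      rw [affDim, vectorSpan_empty]; exact finrank_bot ℝ _]⟩
  have hMxMn : Mx ≠ Mn := by
    intro hcon
    have hzxn : zx ∈ Mn := hcon ▸ hzxM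
    have hsing : P ⊆ {zx} := by
      intro y hy
      have h1 : phi1 y ≤ phi1 zx := hzxM.2 y hy
      have h2 : (-phi1) y ≤ (-phi1) zx := hzxn.2 y hy
      simp at h2
      have : (y : Fin 1 → ℝ) 0 = zx 0 := by
        simp [phi1_apply] at h1 h2
        linarith
      simp [Set.mem_singleton_iff]
      exact eq_of_coord_eq this
    have : affDim P ≤ 0 := by
      rw [affDim]
      have h1 : vectorSpan ℝ P ≤ vectorSpan ℝ ({zx} : Set (Fin 1 → ℝ)) :=
        vectorSpan_mono ℝ hsing
      rw [vectorSpan_singleton] at h1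
      calc Module.finrank ℝ (vectorSpan ℝ P)
          ≤ Module.finrank ℝ (⊥ : Submodule ℝ (Fin 1 → ℝ)) := Submodule.finrank_mono h1
        _ = 0 := finrank_bot ℝ _
    omega
  have htriple : ({∅, Mx, Mn} : Set (Set (Fin 1 → ℝ))).ncard = 3 := by
    rw [Set.ncard_insert_of_notMem (by
      simp only [Set.mem_insert_iff, Set.mem_singleton_iff]
      push_neg
      exact ⟨⟨zx, hzxM⟩, ⟨zn, hznM⟩⟩)]
    rw [Set.ncard_pair hMxMn]
  calc (3 : ℕ) = ({∅, Mx, Mn} : Set (Set (Fin 1 → ℝ))).ncard := htriple.symm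
    _ ≤ (facets P).ncard := Set.ncard_le_ncard (by
        rintro G (rfl | rfl | rfl)
        exacts [hEf, hMxf, hMnf]) (facets_finite hS)

end Dim1

/-- Facet-free condition: let `P = conv S` be a polytope (`S` finite) whose affine span
has dimension `d`, and suppose `P' = P ∩ {x : f x ≤ c}` also has affine span of
dimension `d`. If there is a facet `F` of `P` all of whose extreme points `v` satisfy
`f v > c`, then the number of facets of `P'` is at most the number of facets of `P`. -/
theorem cut_containing_facet_does_not_increase_facet_count
    (d : ℕ) (S : Set (Fin d → ℝ)) (hS : S.Finite)
    (hP : affDim (convexHull ℝ S) = d)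
    (f : (Fin d → ℝ) →ₗ[ℝ] ℝ) (c : ℝ)
    (hP' : affDim (convexHull ℝ S ∩ {x | f x ≤ c}) = d)
    (F : Set (Fin d → ℝ)) (hF : F ∈ facets (convexHull ℝ S))
    (hcut : ∀ v ∈ F.extremePoints ℝ, c < f v) :
    (facets (convexHull ℝ S ∩ {x | f x ≤ c})).ncard ≤ (facets (convexHull ℝ S)).ncard := by
  by_cases hd0 : d = 0
  · subst hd0
    by_cases hPP : convexHull ℝ S ∩ {x | f x ≤ c} = convexHull ℝ S
    · rw [hPP]
    · have hPe : convexHull ℝ S ∩ {x | f x ≤ c} = ∅ := by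
        by_contra hne
        obtain ⟨z, hz⟩ := Set.nonempty_iff_ne_empty.mpr hne
        apply hPP
        apply Subset.antisymm inter_subset_left
        intro y hy
        rw [Subsingleton.elim y z]
        exact hz
      rw [hPe]
      have hfe : facets (∅ : Set (Fin 0 → ℝ)) = {∅} := by
        ext G
        simp only [facets, mem_setOf_eq, Set.mem_singleton_iff]
        constructor
        · rintro ⟨hexp, -⟩
          rcases G.eq_empty_or_nonempty with h | h
          · exact h
          · obtain ⟨l, hl⟩ := hexp h
            rw [hl]
            simp
        · rintro rfl
          exact ⟨isExposed_empty, by rw [affDim_empty]⟩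
      rw [hfe, Set.ncard_singleton]
      have hmem : (∅ : Set (Fin 0 → ℝ)) ∈ facets (convexHull ℝ S) :=
        ⟨isExposed_empty, by rw [affDim_empty]⟩
      have := (Set.ncard_pos (facets_finite hS)).mpr ⟨∅, hmem⟩
      omega
  have hd : 1 ≤ d := by omega
  by_cases hFne : F.Nonempty
  swap
  · rw [Set.not_nonempty_iff_eq_empty] at hFne
    subst hFne
    have hd1 : d = 1 := by
      have h0 := hF.2
      rw [affDim_empty] at h0
      omega
    subst hd1
    have h1 := Set.ncard_le_ncard (dim1_facets_subset hP')
      (Set.Finite.insert _ (Set.Finite.insert _ (Set.finite_singleton _)))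
    have h2 := Set.ncard_insert_le (∅ : Set (Fin 1 → ℝ))
      ({{x ∈ convexHull ℝ S ∩ {x | f x ≤ c} |
          ∀ y ∈ convexHull ℝ S ∩ {x | f x ≤ c}, phi1 y ≤ phi1 x},
        {x ∈ convexHull ℝ S ∩ {x | f x ≤ c} |
          ∀ y ∈ convexHull ℝ S ∩ {x | f x ≤ c}, (-phi1) y ≤ (-phi1) x}} :
        Set (Set (Fin 1 → ℝ)))
    have h3 := Set.ncard_insert_le
      ({x ∈ convexHull ℝ S ∩ {x | f x ≤ c} |
          ∀ y ∈ convexHull ℝ S ∩ {x | f x ≤ c}, phi1 y ≤ phi1 x})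
      ({{x ∈ convexHull ℝ S ∩ {x | f x ≤ c} |
          ∀ y ∈ convexHull ℝ S ∩ {x | f x ≤ c}, (-phi1) y ≤ (-phi1) x}} :
        Set (Set (Fin 1 → ℝ)))
    rw [Set.ncard_singleton] at h3
    have h4 := dim1_three_le hS hP
    omega
  -- main case
  have hFpos : ∀ x ∈ F, c < f x := pos_on_face hS hF.1 hcut
  have hP'ne : (convexHull ℝ S ∩ {x | f x ≤ c}).Nonempty := by
    rcases (convexHull ℝ S ∩ {x | f x ≤ c}).eq_empty_or_nonempty with he | h
    · rw [he] at hP'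
      rw [show affDim (∅ : Set (Fin d → ℝ)) = 0 by
        rw [affDim, vectorSpan_empty]; exact finrank_bot ℝ _] at hP'
      omega
    · exact h
  have hkerf : Module.finrank ℝ (LinearMap.ker f) = d - 1 := by
    obtain ⟨x0, hx0⟩ := hP'ne
    obtain ⟨xF, hxF⟩ := hFne
    have h1 : f x0 ≤ c := hx0.2
    have h2 : c < f xF := hFpos xF hxF
    have hrank : Module.finrank ℝ (LinearMap.range f) +
        Module.finrank ℝ (LinearMap.ker f) = Module.finrank ℝ (Fin d → ℝ) :=
      LinearMap.finrank_range_add_finrank_ker _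
    have hdim' : Module.finrank ℝ (Fin d → ℝ) = d := by simp [Module.finrank_pi]
    have hrle : Module.finrank ℝ (LinearMap.range f) ≤ 1 := by
      exact (Submodule.finrank_le (LinearMap.range f)).trans_eq (Module.finrank_self ℝ)
    have hrpos : 0 < Module.finrank ℝ (LinearMap.range f) := by
      rw [Module.finrank_pos_iff]
      refine ⟨⟨f xF, LinearMap.mem_range_self _ xF⟩, ⟨f x0, LinearMap.mem_range_self _ x0⟩, ?_⟩
      simp only [ne_eq, Subtype.ext_iff]
      intro hc
      linarith
    omega
  classical
  set P' : Set (Fin d → ℝ) := convexHull ℝ S ∩ {x | f x ≤ c} with hP'def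
  set g : Set (Fin d → ℝ) → Set (Fin d → ℝ) := fun F' =>
    if h : F' ∈ facets P' ∧ ∃ x ∈ F', f x < c then
      (facet_of_cut_facet hd hP hP' h.1 h.2).choose
    else if F'.Nonempty then F else ∅ with hg
  have hsubc : ∀ F' ∈ facets P', ¬(∃ x ∈ F', f x < c) → F' ⊆ {x | f x = c} := by
    intro F' hF' hx z hz
    push_neg at hx
    exact le_antisymm (hF'.1.subset hz).2 (hx z hz)
  have hmaps : ∀ F' ∈ facets P', g F' ∈ facets (convexHull ℝ S) := by
    intro F' hF'
    by_cases hx : ∃ x ∈ F', f x < c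
    · rw [hg]; simp only [dif_pos (⟨hF', hx⟩ : F' ∈ facets P' ∧ _)]
      exact (facet_of_cut_facet hd hP hP' hF' hx).choose_spec.1
    · rw [hg]; simp only [dif_neg (fun h : _ ∧ _ => hx h.2)]
      by_cases hne : F'.Nonempty
      · rw [if_pos hne]; exact hF
      · rw [if_neg hne]
        rw [Set.not_nonempty_iff_eq_empty] at hne
        subst hne
        exact ⟨isExposed_empty, hF'.2⟩
  have hinj : Set.InjOn g (facets P') := by
    intro F1 h1 F2 h2 heq
    by_cases hx1 : ∃ x ∈ F1, f x < c <;> by_cases hx2 : ∃ x ∈ F2, f x < c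
    · -- both come from facets of P
      have s1 := (facet_of_cut_facet hd hP hP' h1 hx1).choose_spec
      have s2 := (facet_of_cut_facet hd hP hP' h2 hx2).choose_spec
      rw [hg] at heq
      simp only [dif_pos (⟨h1, hx1⟩ : F1 ∈ facets P' ∧ _),
        dif_pos (⟨h2, hx2⟩ : F2 ∈ facets P' ∧ _)] at heq
      rw [s1.2, s2.2, heq]
    · have s1 := (facet_of_cut_facet hd hP hP' h1 hx1).choose_spec
      rw [hg] at heq
      simp only [dif_pos (⟨h1, hx1⟩ : F1 ∈ facets P' ∧ _),
        dif_neg (fun h : _ ∧ _ => hx2 h.2)] at heq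
      obtain ⟨x1, hx1F, hx1c⟩ := id hx1
      have hx1G : x1 ∈ (facet_of_cut_facet hd hP hP' h1 hx1).choose := by
        have := s1.2 ▸ hx1F; exact (this : x1 ∈ _ ∩ _).1
      by_cases hne : F2.Nonempty
      · rw [if_pos hne] at heq
        rw [heq] at hx1G
        exact absurd (hFpos x1 hx1G) (not_lt.2 hx1c.le)
      · rw [if_neg hne] at heq
        rw [heq] at hx1G
        exact absurd hx1G (Set.notMem_empty x1)
    · have s2 := (facet_of_cut_facet hd hP hP' h2 hx2).choose_spec
      rw [hg] at heq
      simp only [dif_pos (⟨h2, hx2⟩ : F2 ∈ facets P' ∧ _),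
        dif_neg (fun h : _ ∧ _ => hx1 h.2)] at heq
      obtain ⟨x2, hx2F, hx2c⟩ := id hx2
      have hx2G : x2 ∈ (facet_of_cut_facet hd hP hP' h2 hx2).choose := by
        have := s2.2 ▸ hx2F; exact (this : x2 ∈ _ ∩ _).1
      by_cases hne : F1.Nonempty
      · rw [if_pos hne] at heq
        rw [← heq] at hx2G
        exact absurd (hFpos x2 hx2G) (not_lt.2 hx2c.le)
      · rw [if_neg hne] at heq
        rw [← heq] at hx2G
        exact absurd hx2G (Set.notMem_empty x2)
    · by_cases hne1 : F1.Nonempty <;> by_cases hne2 : F2.Nonempty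
      · exact (facet_in_hyperplane_eq hkerf h1 hne1 (hsubc F1 h1 hx1)).trans
          (facet_in_hyperplane_eq hkerf h2 hne2 (hsubc F2 h2 hx2)).symm
      · rw [hg] at heq
        simp only [dif_neg (fun h : _ ∧ _ => hx1 h.2),
          dif_neg (fun h : _ ∧ _ => hx2 h.2), if_pos hne1, if_neg hne2] at heq
        exact absurd (heq ▸ hFne) (by rw [Set.not_nonempty_iff_eq_empty])
      · rw [hg] at heq
        simp only [dif_neg (fun h : _ ∧ _ => hx1 h.2),
          dif_neg (fun h : _ ∧ _ => hx2 h.2), if_neg hne1, if_pos hne2] at heq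
        exact absurd (heq.symm ▸ hFne) (by rw [Set.not_nonempty_iff_eq_empty])
      · rw [Set.not_nonempty_iff_eq_empty] at hne1 hne2
        rw [hne1, hne2]
  exact Set.ncard_le_ncard_of_injOn g hmaps hinj (facets_finite hS)
end

section
/- (New vertices lie on edges of P.) Let P ⊆ ℝ^d be a polytope, f : ℝ^d → ℝ a linear functional and c ∈ ℝ such that no extreme point u of P satisfies f(u) = c. Let P' = P ∩ {x : f(x) ≤ c}. Then every extreme point v of P' that is not an extreme point of P lies on an edge of P: there exist extreme points u, w of P with f(u) < c < f(w) such that the segment [u,w] is an edge of P and v lies in the open segment between u and w (and f(v) = c). -/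
open Set

section Helpers

variable {d : ℕ}

/-- Points of a polytope where a linear functional attains its max over the vertex set
lie in the convex hull of the maximizing vertices. -/
lemma face_le_and_mem (R : Finset (Fin d → ℝ)) (l : (Fin d → ℝ) →ₗ[ℝ] ℝ) (m : ℝ)
    (hle : ∀ t ∈ R, l t ≤ m) {x : Fin d → ℝ}
    (hx : x ∈ convexHull ℝ (R : Set (Fin d → ℝ))) :
    l x ≤ m ∧ (l x = m →
      x ∈ convexHull ℝ ((R.filter (fun t => l t = m)) : Set (Fin d → ℝ))) := by
  classical
  rw [Finset.convexHull_eq] at hx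
  obtain ⟨w, hw0, hw1, hwx⟩ := hx
  have hlx : l x = ∑ t ∈ R, w t * l t := by
    rw [← hwx, Finset.centerMass_eq_of_sum_1 _ _ hw1, map_sum]
    simp [smul_eq_mul]
  have hsm : ∑ t ∈ R, w t * m = m := by rw [← Finset.sum_mul, hw1, one_mul]
  have hsum_le : ∑ t ∈ R, w t * l t ≤ ∑ t ∈ R, w t * m :=
    Finset.sum_le_sum fun t ht => mul_le_mul_of_nonneg_left (hle t ht) (hw0 t ht)
  have hlem : l x ≤ m := by rw [hlx]; rw [hsm] at hsum_le; exact hsum_le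
  refine ⟨hlem, fun hxm => ?_⟩
  have h0 : ∑ t ∈ R, w t * (m - l t) = 0 := by
    have h1 : ∑ t ∈ R, w t * (m - l t)
        = (∑ t ∈ R, w t * m) - ∑ t ∈ R, w t * l t := by
      rw [← Finset.sum_sub_distrib]
      exact Finset.sum_congr rfl fun t _ => by ring
    rw [h1, hsm, ← hlx, hxm, sub_self]
  have hzero : ∀ t ∈ R, w t * (m - l t) = 0 :=
    (Finset.sum_eq_zero_iff_of_nonneg (fun t ht =>
      mul_nonneg (hw0 t ht) (sub_nonneg.2 (hle t ht)))).1 h0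
  have hsub : R.filter (fun t => w t ≠ 0) ⊆ R.filter (fun t => l t = m) := by
    intro t ht
    simp only [Finset.mem_filter] at ht ⊢
    obtain ⟨htR, hwt⟩ := ht
    refine ⟨htR, ?_⟩
    rcases mul_eq_zero.1 (hzero t htR) with h | h
    · exact absurd h hwt
    · linarith [sub_eq_zero.1 h]
  have hxcm : x = (R.filter (fun t => w t ≠ 0)).centerMass w id := by
    rw [Finset.centerMass_filter_ne_zero, hwx]
  rw [hxcm]
  apply Finset.centerMass_mem_convexHull
  · intro t ht; exact hw0 t (Finset.mem_filter.1 ht).1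
  · rw [Finset.sum_filter_ne_zero, hw1]; norm_num
  · intro t ht; exact Finset.mem_coe.2 (hsub ht)



variable {d : ℕ}

/-- Perturbation: an argmax-within-argmax over a finite set is an argmax of a perturbed
functional. -/
lemma perturb (R : Finset (Fin d → ℝ)) (l₀ l₁ : (Fin d → ℝ) →ₗ[ℝ] ℝ) (m₀ m₁ : ℝ)
    (h₀ : ∀ t ∈ R, l₀ t ≤ m₀)
    (h₁ : ∀ t ∈ R.filter (fun t => l₀ t = m₀), l₁ t ≤ m₁) :
    ∃ ε : ℝ, 0 < ε ∧ (∀ t ∈ R, l₀ t + ε * l₁ t ≤ m₀ + ε * m₁) ∧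
      R.filter (fun t => l₀ t + ε * l₁ t = m₀ + ε * m₁) =
      (R.filter (fun t => l₀ t = m₀)).filter (fun t => l₁ t = m₁) := by
  classical
  set RS : Finset (Fin d → ℝ) := R.filter (fun t => l₀ t < m₀ ∧ m₁ < l₁ t) with hRS
  have hg : ∀ t ∈ RS, 0 < (m₀ - l₀ t) / (2 * (l₁ t - m₁)) := by
    intro t ht
    rw [hRS, Finset.mem_filter] at ht
    have h1 : 0 < m₀ - l₀ t := by linarith [ht.2.1]
    have h2 : 0 < l₁ t - m₁ := by linarith [ht.2.2]
    positivity
  by_cases hne : RS.Nonempty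
  · set ε : ℝ := min 1 (RS.inf' hne (fun t => (m₀ - l₀ t) / (2 * (l₁ t - m₁)))) with hε
    have hεpos : 0 < ε := by
      rw [hε]
      apply lt_min one_pos
      rw [Finset.lt_inf'_iff]
      exact hg
    have hεle : ∀ t ∈ RS, ε ≤ (m₀ - l₀ t) / (2 * (l₁ t - m₁)) := by
      intro t ht
      exact le_trans (min_le_right _ _) (Finset.inf'_le _ ht)
    -- key strict bound for non-maximizers
    have hkey : ∀ t ∈ R, l₀ t < m₀ → l₀ t + ε * l₁ t < m₀ + ε * m₁ := by
      intro t ht hlt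
      by_cases hm : l₁ t ≤ m₁
      · nlinarith [hεpos]
      · push_neg at hm
        have htRS : t ∈ RS := by rw [hRS, Finset.mem_filter]; exact ⟨ht, hlt, hm⟩
        have h2 : 0 < l₁ t - m₁ := by linarith
        have h2' : (0:ℝ) < 2 * (l₁ t - m₁) := by linarith
        have h4 := hεle t htRS
        rw [le_div_iff₀ h2'] at h4
        nlinarith [hlt]
    refine ⟨ε, hεpos, ?_, ?_⟩
    · intro t ht
      rcases lt_or_eq_of_le (h₀ t ht) with hlt | heq
      · exact (hkey t ht hlt).le
      · have ht1 : t ∈ R.filter (fun t => l₀ t = m₀) := Finset.mem_filter.2 ⟨ht, heq⟩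
        have := h₁ t ht1
        nlinarith [hεpos]
    · ext t
      simp only [Finset.mem_filter]
      constructor
      · rintro ⟨htR, heq⟩
        rcases lt_or_eq_of_le (h₀ t htR) with hlt | h0eq
        · exact absurd heq (hkey t htR hlt).ne
        · refine ⟨⟨htR, h0eq⟩, ?_⟩
          have : ε * l₁ t = ε * m₁ := by rw [h0eq] at heq; linarith
          exact mul_left_cancel₀ hεpos.ne' this
      · rintro ⟨⟨htR, h0⟩, h1⟩
        exact ⟨htR, by rw [h0, h1]⟩
  · refine ⟨1, one_pos, ?_, ?_⟩
    · intro t ht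
      rcases lt_or_eq_of_le (h₀ t ht) with hlt | heq
      · by_cases hm : l₁ t ≤ m₁
        · nlinarith
        · exact (hne ⟨t, Finset.mem_filter.2 ⟨ht, hlt, by linarith⟩⟩).elim
      · have := h₁ t (Finset.mem_filter.2 ⟨ht, heq⟩)
        nlinarith
    · ext t
      simp only [Finset.mem_filter]
      constructor
      · rintro ⟨htR, heq⟩
        rcases lt_or_eq_of_le (h₀ t htR) with hlt | h0eq
        · by_cases hm : l₁ t ≤ m₁
          · nlinarith
          · exact (hne ⟨t, Finset.mem_filter.2 ⟨htR, hlt, by linarith⟩⟩).elim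
        · refine ⟨⟨htR, h0eq⟩, ?_⟩
          rw [h0eq] at heq; linarith
      · rintro ⟨⟨htR, h0⟩, h1⟩
        exact ⟨htR, by rw [h0, h1]⟩


lemma exposed_of_filter (R T : Finset (Fin d → ℝ)) (l₀ : (Fin d → ℝ) →ₗ[ℝ] ℝ) (m₀ : ℝ)
    (hl₀ : ∀ t ∈ R, l₀ t ≤ m₀) (hTdef : T = R.filter (fun t => l₀ t = m₀)) :
    IsExposed ℝ (convexHull ℝ (R : Set (Fin d → ℝ)))
      (convexHull ℝ (T : Set (Fin d → ℝ))) := by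
  classical
  intro hne
  refine ⟨LinearMap.toContinuousLinearMap l₀, ?_⟩
  have hTne : T.Nonempty := by
    rcases Finset.eq_empty_or_nonempty T with h | h
    · rw [h] at hne; simp at hne
    · exact h
  have hTR : T ⊆ R := hTdef ▸ Finset.filter_subset _ _
  have hhyper : convexHull ℝ (T : Set (Fin d → ℝ)) ⊆ {y | l₀ y = m₀} := by
    apply convexHull_min _ (convex_hyperplane l₀.isLinear m₀)
    intro t ht
    rw [hTdef] at ht
    exact (Finset.mem_filter.1 (Finset.mem_coe.1 ht)).2
  apply Subset.antisymm
  · intro x hx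
    have hxR : x ∈ convexHull ℝ (R : Set (Fin d → ℝ)) :=
      convexHull_mono (Finset.coe_subset.2 hTR) hx
    have hxm : l₀ x = m₀ := hhyper hx
    refine ⟨hxR, fun y hy => ?_⟩
    have := (face_le_and_mem R l₀ m₀ hl₀ hy).1
    simp only [LinearMap.coe_toContinuousLinearMap']
    rw [hxm]; exact this
  · rintro x ⟨hxR, hmax⟩
    have h1 : l₀ x ≤ m₀ := (face_le_and_mem R l₀ m₀ hl₀ hxR).1
    obtain ⟨t0, ht0⟩ := hTne
    have ht0R : t0 ∈ convexHull ℝ (R : Set (Fin d → ℝ)) :=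
      subset_convexHull _ _ (Finset.mem_coe.2 (hTR ht0))
    have h2 : l₀ t0 ≤ l₀ x := by
      have := hmax t0 ht0R
      simpa only [LinearMap.coe_toContinuousLinearMap'] using this
    have ht0m : l₀ t0 = m₀ := by
      rw [hTdef] at ht0; exact (Finset.mem_filter.1 ht0).2
    have hxm : l₀ x = m₀ := le_antisymm h1 (ht0m ▸ h2)
    have := (face_le_and_mem R l₀ m₀ hl₀ hxR).2 hxm
    rw [hTdef]; exact this


set_option maxHeartbeats 2000000 in
lemma aux_rec (R : Finset (Fin d → ℝ)) (f : (Fin d → ℝ) →ₗ[ℝ] ℝ) (c : ℝ)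
    (v : Fin d → ℝ)
    (hgen : ∀ u ∈ (convexHull ℝ (R : Set (Fin d → ℝ))).extremePoints ℝ, f u ≠ c)
    (hv : v ∈ ((convexHull ℝ (R : Set (Fin d → ℝ))) ∩ {x | f x ≤ c}).extremePoints ℝ)
    (hnew : v ∉ (convexHull ℝ (R : Set (Fin d → ℝ))).extremePoints ℝ)
    (hfvc : f v = c) :
    ∀ n : ℕ, ∀ T : Finset (Fin d → ℝ), T.card ≤ n →
      (∃ l₀ : (Fin d → ℝ) →ₗ[ℝ] ℝ, ∃ m₀ : ℝ,
        (∀ t ∈ R, l₀ t ≤ m₀) ∧ T = R.filter (fun t => l₀ t = m₀)) →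
      v ∈ convexHull ℝ (T : Set (Fin d → ℝ)) →
      ∃ u w : Fin d → ℝ,
        u ∈ (convexHull ℝ (R : Set (Fin d → ℝ))).extremePoints ℝ ∧
        w ∈ (convexHull ℝ (R : Set (Fin d → ℝ))).extremePoints ℝ ∧
        f u < c ∧ c < f w ∧
        IsExposed ℝ (convexHull ℝ (R : Set (Fin d → ℝ))) (segment ℝ u w) ∧
        affDim (segment ℝ u w) = 1 ∧ v ∈ openSegment ℝ u w ∧ f v = c := by
  classical
  intro n
  induction n with
  | zero =>
    intro T hcard _ hvT
    have : T = ∅ := Finset.card_eq_zero.1 (Nat.le_zero.1 hcard)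
    rw [this] at hvT
    simp at hvT
  | succ n ih =>
    intro T hcard hinv hvT
    obtain ⟨l₀, m₀, hl₀, hTdef⟩ := hinv
    have hTR : T ⊆ R := hTdef ▸ Finset.filter_subset _ _
    have hTne : T.Nonempty := by
      rcases Finset.eq_empty_or_nonempty T with h | h
      · rw [h] at hvT; simp at hvT
      · exact h
    have hvR : v ∈ convexHull ℝ (R : Set (Fin d → ℝ)) :=
      convexHull_mono (Finset.coe_subset.2 hTR) hvT
    rw [mem_extremePoints] at hv
    obtain ⟨⟨hvP, hvc⟩, hvext⟩ := hv
    set D : Submodule ℝ (Fin d → ℝ) := vectorSpan ℝ (T : Set (Fin d → ℝ)) with hD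
    have hdiff : ∀ x ∈ convexHull ℝ (T : Set (Fin d → ℝ)),
        ∀ y ∈ convexHull ℝ (T : Set (Fin d → ℝ)), x - y ∈ D := by
      intro x hx y hy
      have hx' : x ∈ affineSpan ℝ (T : Set (Fin d → ℝ)) :=
        convexHull_subset_affineSpan _ hx
      have hy' : y ∈ affineSpan ℝ (T : Set (Fin d → ℝ)) :=
        convexHull_subset_affineSpan _ hy
      have := AffineSubspace.vsub_mem_direction hx' hy'
      rwa [direction_affineSpan, vsub_eq_sub] at this
    have hexpT : IsExposed ℝ (convexHull ℝ (R : Set (Fin d → ℝ)))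
        (convexHull ℝ (T : Set (Fin d → ℝ))) := exposed_of_filter R T l₀ m₀ hl₀ hTdef
    set K : Set ↥D :=
      {e : ↥D | v + (e : Fin d → ℝ) ∈ convexHull ℝ (T : Set (Fin d → ℝ))} with hK
    by_cases h0 : (0 : ↥D) ∈ interior K
    · -- CASE A
      have hinj : ∀ e : ↥D, f (e : Fin d → ℝ) = 0 → (e : Fin d → ℝ) = 0 := by
        intro e hfe
        by_contra hne
        have hene : e ≠ 0 := fun h => hne (by rw [h]; rfl)
        have henorm : 0 < ‖e‖ := norm_pos_iff.2 hene
        obtain ⟨r, hr0, hball⟩ := Metric.isOpen_iff.1 isOpen_interior 0 h0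
        set δ : ℝ := r / (2 * ‖e‖) with hδdef
        have hδ : 0 < δ := by positivity
        have hmem : ∀ s : ℝ, |s| = δ → (s • e : ↥D) ∈ K := by
          intro s hs
          apply interior_subset (hball ?_)
          rw [mem_ball_zero_iff]
          have h1 : ‖s • e‖ = |s| * ‖e‖ := by
            rw [← Real.norm_eq_abs]; exact norm_smul s e
          have h2 : δ * ‖e‖ = r / 2 := by
            have he' : ‖e‖ ≠ 0 := ne_of_gt henorm
            rw [hδdef, div_mul_eq_mul_div, mul_comm (2:ℝ) ‖e‖, ← div_div,
              mul_div_assoc, div_self he', mul_one]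
          rw [h1, hs, h2]; linarith
        have h1 : (δ • e : ↥D) ∈ K := hmem δ (abs_of_pos hδ)
        have h2 : ((-δ) • e : ↥D) ∈ K := hmem (-δ) (by rw [abs_neg, abs_of_pos hδ])
        have hx₁T : v + δ • (e : Fin d → ℝ) ∈ convexHull ℝ (T : Set (Fin d → ℝ)) := by
          have h1' : v + ((δ • e : ↥D) : Fin d → ℝ) ∈ convexHull ℝ (T : Set (Fin d → ℝ)) := h1
          simpa using h1'
        have hx₂T : v + (-δ) • (e : Fin d → ℝ) ∈ convexHull ℝ (T : Set (Fin d → ℝ)) := by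
          have h2' : v + (((-δ) • e : ↥D) : Fin d → ℝ) ∈ convexHull ℝ (T : Set (Fin d → ℝ)) := h2
          simpa using h2'
        have hx₁P : v + δ • (e : Fin d → ℝ) ∈ convexHull ℝ (R : Set (Fin d → ℝ)) :=
          convexHull_mono (Finset.coe_subset.2 hTR) hx₁T
        have hx₂P : v + (-δ) • (e : Fin d → ℝ) ∈ convexHull ℝ (R : Set (Fin d → ℝ)) :=
          convexHull_mono (Finset.coe_subset.2 hTR) hx₂T
        have hfx₁ : f (v + δ • (e : Fin d → ℝ)) ≤ c := by
          rw [map_add, map_smul, smul_eq_mul, hfe, hfvc]; simp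
        have hfx₂ : f (v + (-δ) • (e : Fin d → ℝ)) ≤ c := by
          rw [map_add, map_smul, smul_eq_mul, hfe, hfvc]; simp
        have hopen : v ∈ openSegment ℝ (v + δ • (e : Fin d → ℝ)) (v + (-δ) • (e : Fin d → ℝ)) := by
          refine ⟨1/2, 1/2, by norm_num, by norm_num, by norm_num, ?_⟩
          module
        have hc := hvext _ ⟨hx₁P, hfx₁⟩ _ ⟨hx₂P, hfx₂⟩ hopen
        have hx₁v : δ • (e : Fin d → ℝ) = 0 := by
          have := hc.1
          rwa [add_eq_left] at this
        apply hne
        have h5 : (e : Fin d → ℝ) = δ⁻¹ • (δ • (e : Fin d → ℝ)) := by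
          rw [smul_smul, inv_mul_cancel₀ hδ.ne', one_smul]
        rw [h5, hx₁v, smul_zero]
      -- now min and max of f over T
      obtain ⟨u, huT, humin⟩ := T.exists_min_image f hTne
      obtain ⟨w, hwT, hwmax⟩ := T.exists_max_image f hTne
      have hDuw : ∀ t ∈ T, ∀ t' ∈ T, t - t' ∈ D := fun t ht t' ht' =>
        hdiff _ (subset_convexHull ℝ _ (Finset.mem_coe.2 ht))
          _ (subset_convexHull ℝ _ (Finset.mem_coe.2 ht'))
      by_cases hufw : f u = f w
      · -- degenerate case: conv T is a single point
        have hTall : ∀ t ∈ T, t = u := by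
          intro t ht
          have h1 : f (t - u) = 0 := by
            rw [map_sub]
            have := humin t ht
            have := hwmax t ht
            linarith
          have h2 := hinj ⟨t - u, hDuw t ht u huT⟩ h1
          have : t - u = 0 := h2
          rw [sub_eq_zero] at this
          exact this
        have hTsub : (T : Set (Fin d → ℝ)) ⊆ {u} := by
          intro t ht; exact hTall t (Finset.mem_coe.1 ht)
        have hconv : convexHull ℝ (T : Set (Fin d → ℝ)) = {u} := by
          apply Subset.antisymm
          · exact convexHull_min hTsub (convex_singleton u)
          · intro x hx
            rw [mem_singleton_iff] at hx
            rw [hx]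
            exact subset_convexHull ℝ _ (Finset.mem_coe.2 huT)
        have hvu : v = u := by
          rw [hconv] at hvT; exact hvT
        rw [hconv, ← hvu] at hexpT
        exact absurd hexpT.isExtreme.mem_extremePoints hnew
      · -- nondegenerate: conv T is the segment [u, w]
        have hlt : f u < f w := lt_of_le_of_ne (humin w hwT) hufw
        have hfw_u : (0:ℝ) < f w - f u := by linarith
        have hseg : convexHull ℝ (T : Set (Fin d → ℝ)) = segment ℝ u w := by
          apply Subset.antisymm
          · apply convexHull_min _ (convex_segment u w)
            intro t ht
            rw [Finset.mem_coe] at ht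
            set θ : ℝ := (f t - f u) / (f w - f u) with hθdef
            have hθ0 : 0 ≤ θ := div_nonneg (by linarith [humin t ht]) hfw_u.le
            have hθ1 : θ ≤ 1 := (div_le_one hfw_u).2 (by linarith [hwmax t ht])
            have hmemD : u + θ • (w - u) - t ∈ D := by
              have heq : u + θ • (w - u) - t = (u - t) + θ • (w - u) := by
                module
              rw [heq]
              exact D.add_mem (hDuw u huT t ht) (D.smul_mem θ (hDuw w hwT u huT))
            have hft : f (u + θ • (w - u) - t) = 0 := by
              rw [map_sub, map_add, map_smul, map_sub, smul_eq_mul, hθdef]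
              field_simp
              ring
            have h2 := hinj ⟨_, hmemD⟩ hft
            have ht' : t = u + θ • (w - u) := by
              have : u + θ • (w - u) - t = 0 := h2
              rw [sub_eq_zero] at this
              exact this.symm
            rw [segment_eq_image']
            exact ⟨θ, ⟨hθ0, hθ1⟩, ht'.symm⟩
          · exact (convex_convexHull ℝ _).segment_subset
              (subset_convexHull ℝ _ (Finset.mem_coe.2 huT))
              (subset_convexHull ℝ _ (Finset.mem_coe.2 hwT))
        have hfub : ∀ z ∈ segment ℝ u w, f u ≤ f z ∧ f z ≤ f w := by
          rintro z ⟨a, b, ha, hb, hab, rfl⟩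
          rw [map_add, map_smul, map_smul, smul_eq_mul, smul_eq_mul]
          have key1 : a * f u + b * f w = f u + b * (f w - f u) := by
            linear_combination (f u) * hab
          have key2 : a * f u + b * f w = f w - a * (f w - f u) := by
            linear_combination (f w) * hab
          constructor
          · rw [key1]; nlinarith [mul_nonneg hb (sub_nonneg.2 hlt.le)]
          · rw [key2]; nlinarith [mul_nonneg ha (sub_nonneg.2 hlt.le)]
        have hull_eq : IsExtreme ℝ (convexHull ℝ (R : Set (Fin d → ℝ))) (segment ℝ u w) := by
          rw [← hseg]; exact hexpT.isExtreme
        have hxDseg : ∀ x ∈ segment ℝ u w, ∀ y ∈ segment ℝ u w, x - y ∈ D := by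
          intro x hx y hy
          exact hdiff x (by rw [hseg]; exact hx) y (by rw [hseg]; exact hy)
        have hextu : u ∈ (convexHull ℝ (R : Set (Fin d → ℝ))).extremePoints ℝ := by
          apply hull_eq.extremePoints_subset_extremePoints
          rw [mem_extremePoints]
          refine ⟨left_mem_segment ℝ u w, ?_⟩
          intro x hx y hy hu
          obtain ⟨a, b, ha, hb, hab, habe⟩ := hu
          have hfx := hfub x hx
          have hfy := hfub y hy
          have hfu : a * f x + b * f y = f u := by
            rw [← habe, map_add, map_smul, map_smul, smul_eq_mul, smul_eq_mul]
          have e1 : 0 ≤ a * (f x - f u) := mul_nonneg ha.le (by linarith [hfx.1])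
          have e2 : 0 ≤ b * (f y - f u) := mul_nonneg hb.le (by linarith [hfy.1])
          have esum : a * (f x - f u) + b * (f y - f u) = 0 := by
            linear_combination hfu - f u * hab
          have ea : a * (f x - f u) = 0 := by linarith
          have eb : b * (f y - f u) = 0 := by linarith
          have hfxu : f x = f u := by
            rcases mul_eq_zero.1 ea with h | h
            · exact absurd h ha.ne'
            · linarith
          have hfyu : f y = f u := by
            rcases mul_eq_zero.1 eb with h | h
            · exact absurd h hb.ne'
            · linarith
          constructor
          · have h2 := hinj ⟨x - u, hxDseg x hx u (left_mem_segment ℝ u w)⟩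
              (show f (x - u) = 0 by rw [map_sub]; linarith)
            have hx0 : x - u = 0 := h2
            rwa [sub_eq_zero] at hx0
          · have h2 := hinj ⟨y - u, hxDseg y hy u (left_mem_segment ℝ u w)⟩
              (show f (y - u) = 0 by rw [map_sub]; linarith)
            have hy0 : y - u = 0 := h2
            rwa [sub_eq_zero] at hy0
        have hextw : w ∈ (convexHull ℝ (R : Set (Fin d → ℝ))).extremePoints ℝ := by
          apply hull_eq.extremePoints_subset_extremePoints
          rw [mem_extremePoints]
          refine ⟨right_mem_segment ℝ u w, ?_⟩
          intro x hx y hy hu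
          obtain ⟨a, b, ha, hb, hab, habe⟩ := hu
          have hfx := hfub x hx
          have hfy := hfub y hy
          have hfu : a * f x + b * f y = f w := by
            rw [← habe, map_add, map_smul, map_smul, smul_eq_mul, smul_eq_mul]
          have e1 : 0 ≤ a * (f w - f x) := mul_nonneg ha.le (by linarith [hfx.2])
          have e2 : 0 ≤ b * (f w - f y) := mul_nonneg hb.le (by linarith [hfy.2])
          have esum : a * (f w - f x) + b * (f w - f y) = 0 := by
            linear_combination f w * hab - hfu
          have ea : a * (f w - f x) = 0 := by linarith
          have eb : b * (f w - f y) = 0 := by linarith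
          have hfxu : f x = f w := by
            rcases mul_eq_zero.1 ea with h | h
            · exact absurd h ha.ne'
            · linarith
          have hfyu : f y = f w := by
            rcases mul_eq_zero.1 eb with h | h
            · exact absurd h hb.ne'
            · linarith
          constructor
          · have h2 := hinj ⟨x - w, hxDseg x hx w (right_mem_segment ℝ u w)⟩
              (show f (x - w) = 0 by rw [map_sub]; linarith)
            have hx0 : x - w = 0 := h2
            rwa [sub_eq_zero] at hx0
          · have h2 := hinj ⟨y - w, hxDseg y hy w (right_mem_segment ℝ u w)⟩
              (show f (y - w) = 0 by rw [map_sub]; linarith)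
            have hy0 : y - w = 0 := h2
            rwa [sub_eq_zero] at hy0
        have hvseg : v ∈ segment ℝ u w := by rw [← hseg]; exact hvT
        have hb1 := hfub v hvseg
        have hfuc : f u < c := lt_of_le_of_ne (hfvc ▸ hb1.1) (hgen u hextu)
        have hfwc : c < f w := lt_of_le_of_ne (hfvc ▸ hb1.2) (Ne.symm (hgen w hextw))
        obtain ⟨a, b, ha, hb, hab, habe⟩ := hvseg
        have hfveq : a * f u + b * f w = c := by
          rw [← hfvc, ← habe, map_add, map_smul, map_smul, smul_eq_mul, smul_eq_mul]
        have ha0 : 0 < a := by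
          rcases eq_or_lt_of_le ha with h | h
          · exfalso
            rw [← h] at hfveq hab
            simp at hab
            rw [hab] at hfveq
            simp at hfveq
            linarith
          · exact h
        have hb0 : 0 < b := by
          rcases eq_or_lt_of_le hb with h | h
          · exfalso
            rw [← h] at hfveq hab
            simp at hab
            rw [hab] at hfveq
            simp at hfveq
            linarith
          · exact h
        refine ⟨u, w, hextu, hextw, hfuc, hfwc, ?_, ?_, ⟨a, b, ha0, hb0, hab, habe⟩, hfvc⟩
        · rw [← hseg]; exact hexpT
        · unfold affDim
          have h1 : vectorSpan ℝ (segment ℝ u w) = vectorSpan ℝ ({u, w} : Set (Fin d → ℝ)) := by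
            rw [← convexHull_pair, ← direction_affineSpan, affineSpan_convexHull,
              direction_affineSpan]
          rw [h1, vectorSpan_pair]
          have hnuw : u -ᵥ w ≠ 0 := by
            rw [vsub_eq_sub, sub_ne_zero]
            intro h
            rw [h] at hfuc
            linarith
          exact finrank_span_singleton hnuw
      
    · -- CASE B: v is not interior; find a smaller exposed face and recurse
      have hKconv : Convex ℝ K := by
        intro e he e' he' a b ha hb hab
        show v + ((a • e + b • e' : ↥D) : Fin d → ℝ) ∈ convexHull ℝ (T : Set (Fin d → ℝ))
        have heq : v + ((a • e + b • e' : ↥D) : Fin d → ℝ)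
            = a • (v + (e : Fin d → ℝ)) + b • (v + (e' : Fin d → ℝ)) := by
          simp only [Submodule.coe_add, SetLike.val_smul]
          calc v + (a • (e : Fin d → ℝ) + b • (e' : Fin d → ℝ))
              = (a + b) • v + (a • (e : Fin d → ℝ) + b • (e' : Fin d → ℝ)) := by
                rw [hab, one_smul]
            _ = a • (v + (e : Fin d → ℝ)) + b • (v + (e' : Fin d → ℝ)) := by module
        rw [heq]
        exact (convex_convexHull ℝ _) he he' ha hb hab
      have h0K : (0 : ↥D) ∈ K := by
        have h5 : v + ((0 : ↥D) : Fin d → ℝ) ∈ convexHull ℝ (T : Set (Fin d → ℝ)) := by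
          simpa using hvT
        exact h5
      have hmemK : ∀ t ∈ T, (t : Fin d → ℝ) - v ∈ D := fun t ht =>
        hdiff t (subset_convexHull ℝ _ (Finset.mem_coe.2 ht)) v hvT
      have hmemK' : ∀ t (ht : t ∈ T), (⟨t - v, hmemK t ht⟩ : ↥D) ∈ K := by
        intro t ht
        have h5 : v + ((t : Fin d → ℝ) - v) ∈ convexHull ℝ (T : Set (Fin d → ℝ)) := by
          have hvt : v + ((t : Fin d → ℝ) - v) = t := by abel
          rw [hvt]
          exact subset_convexHull ℝ _ (Finset.mem_coe.2 ht)
        exact h5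
      have hvsK : vectorSpan ℝ K = (⊤ : Submodule ℝ ↥D) := by
        apply Submodule.map_injective_of_injective D.injective_subtype
        rw [Submodule.map_subtype_top]
        apply le_antisymm
        · exact Submodule.map_subtype_le D _
        · refine le_trans (le_of_eq (hD.trans (vectorSpan_def ℝ _)))
            (Submodule.span_le.2 ?_)
          rintro z hz
          obtain ⟨t, ht, t', ht', rfl⟩ := Set.mem_vsub.1 hz
          have htT : t ∈ T := Finset.mem_coe.1 ht
          have htT' : t' ∈ T := Finset.mem_coe.1 ht'
          refine ⟨(⟨t - v, hmemK t htT⟩ : ↥D) - ⟨t' - v, hmemK t' htT'⟩, ?_, ?_⟩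
          · have := vsub_mem_vectorSpan ℝ (hmemK' t htT) (hmemK' t' htT')
            rwa [vsub_eq_sub] at this
          · show (((⟨t - v, hmemK t htT⟩ : ↥D) - ⟨t' - v, hmemK t' htT'⟩ : ↥D) : Fin d → ℝ)
              = t -ᵥ t'
            rw [vsub_eq_sub]
            simp only [AddSubgroupClass.coe_sub]
            abel
      have haff : affineSpan ℝ K = ⊤ := by
        rw [eq_top_iff]
        intro x _
        have hdir : x ∈ (affineSpan ℝ K).direction := by
          rw [direction_affineSpan, hvsK]; trivial
        have h0' : (0 : ↥D) ∈ affineSpan ℝ K := subset_affineSpan ℝ K h0K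
        have := AffineSubspace.vadd_mem_of_mem_direction hdir h0'
        simpa using this
      have hUne : (interior K).Nonempty := by
        rw [hKconv.interior_nonempty_iff_affineSpan_eq_top]
        exact haff
      obtain ⟨l', hl'⟩ := geometric_hahn_banach_open_point hKconv.interior isOpen_interior h0
      have hl'0 : ∀ a ∈ interior K, l' a < 0 := by
        intro a ha
        have := hl' a ha
        rwa [map_zero] at this
      have hKle : ∀ e ∈ K, l' e ≤ 0 := by
        intro e he
        obtain ⟨a0, ha0⟩ := hUne
        by_contra hpos
        push_neg at hpos
        set L : ℝ := |l' a0| + l' e with hLdef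
        have hLpos : 0 < L := add_pos_of_nonneg_of_pos (abs_nonneg _) hpos
        set s : ℝ := l' e / (2 * L) with hsdef
        have hs0 : 0 < s := div_pos hpos (by linarith)
        have h1s : 0 ≤ 1 - s := by
          have h2L : 0 < 2 * L := by linarith
          rw [hsdef, sub_nonneg, div_le_one h2L]
          linarith [abs_nonneg (l' a0)]
        have hmem2 : s • a0 + (1 - s) • e ∈ interior K :=
          hKconv.combo_interior_self_mem_interior ha0 he hs0 h1s (by ring)
        have h3 := hl'0 _ hmem2
        rw [map_add, map_smul, map_smul, smul_eq_mul, smul_eq_mul] at h3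
        have hprod : s * L = l' e / 2 := by
          rw [hsdef]
          field_simp
        have hexp : s * L = s * |l' a0| + s * l' e := by rw [hLdef]; ring
        have hmul := mul_le_mul_of_nonneg_left (neg_abs_le (l' a0)) hs0.le
        have hneg : s * -(|l' a0|) = -(s * |l' a0|) := by ring
        have hexp2 : (1 - s) * l' e = l' e - s * l' e := by ring
        rw [hneg] at hmul
        linarith
      obtain ⟨D', hcompl⟩ := Submodule.exists_isCompl D
      set π : (Fin d → ℝ) →ₗ[ℝ] ↥D := D.linearProjOfIsCompl D' hcompl with hπ
      set l : (Fin d → ℝ) →ₗ[ℝ] ℝ := l'.toLinearMap.comp π with hldef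
      have hπD : ∀ (z : Fin d → ℝ) (hz : z ∈ D), π z = ⟨z, hz⟩ := by
        intro z hz
        exact Submodule.linearProjOfIsCompl_apply_left hcompl ⟨z, hz⟩
      have hlval : ∀ (x : Fin d → ℝ) (hx : x - v ∈ D), l x - l v = l' ⟨x - v, hx⟩ := by
        intro x hx
        have h1 : l x - l v = l (x - v) := (map_sub l x v).symm
        rw [h1]
        show l' (π (x - v)) = l' ⟨x - v, hx⟩
        rw [hπD _ hx]
      have hkey : ∀ x ∈ convexHull ℝ (T : Set (Fin d → ℝ)), l x ≤ l v := by
        intro x hx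
        have hxD : x - v ∈ D := hdiff x hx v hvT
        have h2 : (⟨x - v, hxD⟩ : ↥D) ∈ K := by
          have h5 : v + (x - v) ∈ convexHull ℝ (T : Set (Fin d → ℝ)) := by
            have hvx : v + (x - v) = x := by abel
            rw [hvx]
            exact hx
          exact h5
        have h3 := hKle _ h2
        have h4 := hlval x hxD
        linarith
      have hstrict : ∃ t ∈ T, l t < l v := by
        by_contra hcon
        push_neg at hcon
        have hall : ∀ t ∈ T, l t = l v := fun t ht =>
          le_antisymm (hkey t (subset_convexHull ℝ _ (Finset.mem_coe.2 ht))) (hcon t ht)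
        obtain ⟨a0, ha0⟩ := hUne
        have ha0K : a0 ∈ K := interior_subset ha0
        have hconv_sub : convexHull ℝ (T : Set (Fin d → ℝ)) ⊆ {x | l x = l v} := by
          apply convexHull_min _ (convex_hyperplane l.isLinear (l v))
          intro t ht
          exact hall t (Finset.mem_coe.1 ht)
        have h1 : l (v + (a0 : Fin d → ℝ)) = l v := hconv_sub ha0K
        have ha0D : (v + (a0 : Fin d → ℝ)) - v ∈ D := by simpa using a0.2
        have h2 := hlval _ ha0D
        have h3 := hl'0 a0 ha0
        have h4 : (⟨(v + (a0 : Fin d → ℝ)) - v, ha0D⟩ : ↥D) = a0 := by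
          apply Subtype.ext
          show (v + (a0 : Fin d → ℝ)) - v = (a0 : Fin d → ℝ)
          abel
        rw [h4] at h2
        linarith
      have h₁' : ∀ t ∈ R.filter (fun t => l₀ t = m₀), l t ≤ l v := by
        intro t ht
        rw [← hTdef] at ht
        exact hkey t (subset_convexHull ℝ _ (Finset.mem_coe.2 ht))
      obtain ⟨ε, hε, hle₂, hfilt₂⟩ := perturb R l₀ l m₀ (l v) hl₀ h₁'
      have hT'filt : T.filter (fun t => l t = l v)
          = R.filter (fun t => (l₀ + ε • l) t = m₀ + ε * l v) := by
        rw [hTdef, ← hfilt₂]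
        apply Finset.filter_congr
        intro t _
        simp [LinearMap.add_apply, LinearMap.smul_apply, smul_eq_mul]
      have hvT' : v ∈ convexHull ℝ ((T.filter (fun t => l t = l v)) : Set (Fin d → ℝ)) :=
        (face_le_and_mem T l (l v)
          (fun t ht => hkey t (subset_convexHull ℝ _ (Finset.mem_coe.2 ht))) hvT).2 rfl
      have hcard' : (T.filter (fun t => l t = l v)).card ≤ n := by
        obtain ⟨t, htT, htlt⟩ := hstrict
        have hss : T.filter (fun t => l t = l v) ⊂ T := by
          refine ⟨Finset.filter_subset _ _, fun hsub => ?_⟩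
          have hmem3 := hsub htT
          rw [Finset.mem_filter] at hmem3
          exact htlt.ne hmem3.2
        have := Finset.card_lt_card hss
        omega
      refine ih (T.filter (fun t => l t = l v)) hcard'
        ⟨l₀ + ε • l, m₀ + ε * l v, ?_, hT'filt⟩ hvT'
      intro t ht
      have := hle₂ t ht
      simpa only [LinearMap.add_apply, LinearMap.smul_apply, smul_eq_mul] using this


/-- New vertices lie on edges of `P`: let `P = conv S` be a polytope (`S` finite),
`f` a linear functional and `c` such that no extreme point `u` of `P` has `f u = c`,
and let `P' = P ∩ {x : f x ≤ c}`.  Then every extreme point `v` of `P'` that is not an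
extreme point of `P` lies on an edge of `P`: there are extreme points `u, w` of `P` with
`f u < c < f w`, the segment `[u, w]` is an exposed face of `P` of affine dimension 1
(an edge), `v` lies in the open segment between `u` and `w`, and `f v = c`. -/
theorem new_vertices_on_edges (d : ℕ) (S : Set (Fin d → ℝ)) (hS : S.Finite)
    (f : (Fin d → ℝ) →ₗ[ℝ] ℝ) (c : ℝ)
    (hgen : ∀ u ∈ (convexHull ℝ S).extremePoints ℝ, f u ≠ c)
    (v : Fin d → ℝ)
    (hv : v ∈ (convexHull ℝ S ∩ {x | f x ≤ c}).extremePoints ℝ)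
    (hnew : v ∉ (convexHull ℝ S).extremePoints ℝ) :
    ∃ u w : Fin d → ℝ,
      u ∈ (convexHull ℝ S).extremePoints ℝ ∧ w ∈ (convexHull ℝ S).extremePoints ℝ ∧
      f u < c ∧ c < f w ∧
      IsExposed ℝ (convexHull ℝ S) (segment ℝ u w) ∧ affDim (segment ℝ u w) = 1 ∧
      v ∈ openSegment ℝ u w ∧ f v = c := by
  classical
  set R : Finset (Fin d → ℝ) := hS.toFinset with hR
  have hRS : (R : Set (Fin d → ℝ)) = S := hS.coe_toFinset
  rw [← hRS] at hgen hv hnew ⊢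
  obtain ⟨⟨hvP, hvc⟩, hvext⟩ := hv
  have hvc' : f v ≤ c := hvc
  have hfvc : f v = c := by
    rcases eq_or_lt_of_le hvc' with h | h
    · exact h
    exfalso
    have hnex := hnew
    rw [mem_extremePoints, not_and] at hnex
    have h2 := hnex hvP
    push_neg at h2
    obtain ⟨x, hx, y, hy, hopen, hne2⟩ := h2
    obtain ⟨a, b, ha, hb, hab, habe⟩ := hopen
    have hyv : x = v → y = v := by
      intro hxv
      rw [hxv] at habe
      have h3 : a • v + b • v = v := by
        rw [← add_smul, hab, one_smul]
      have h4 : b • y = b • v := by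
        have h5 := habe.trans h3.symm
        exact add_left_cancel h5
      exact smul_right_injective _ hb.ne' h4
    have hxv : x ≠ v := fun hh => hne2 hh (hyv hh)
    set M : ℝ := max (f x - f v) (max (f y - f v) 1) with hM
    have hM1 : (1:ℝ) ≤ M := le_trans (le_max_right _ _) (le_max_right _ _)
    have hM0 : (0:ℝ) < M := by linarith
    set δ : ℝ := min 1 ((c - f v)/M) with hδ
    have hδ0 : 0 < δ := lt_min one_pos (div_pos (by linarith) hM0)
    have hδ1 : δ ≤ 1 := min_le_left _ _
    have hkey : ∀ z : Fin d → ℝ, z ∈ convexHull ℝ (R : Set (Fin d → ℝ)) → f z - f v ≤ M →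
        (v + δ • (z - v) ∈ convexHull ℝ (R : Set (Fin d → ℝ)) ∧ f (v + δ • (z - v)) ≤ c) := by
      intro z hz hfz
      constructor
      · have h6 : v + δ • (z - v) = (1 - δ) • v + δ • z := by module
        rw [h6]
        exact (convex_convexHull ℝ _) hvP hz (by linarith) (by linarith) (by ring)
      · rw [map_add, map_smul, smul_eq_mul, map_sub]
        by_cases hzn : f z - f v ≤ 0
        · nlinarith
        · push_neg at hzn
          have hδM : δ ≤ (c - f v)/M := min_le_right _ _
          have h7 : δ * (f z - f v) ≤ ((c - f v)/M) * M := by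
            apply mul_le_mul hδM hfz hzn.le
            exact div_nonneg (by linarith) hM0.le
          rw [div_mul_cancel₀ _ hM0.ne'] at h7
          linarith
    have hxM : f x - f v ≤ M := le_max_left _ _
    have hyM : f y - f v ≤ M := le_trans (le_max_left _ _) (le_max_right _ _)
    obtain ⟨hx'P, hx'c⟩ := hkey x hx hxM
    obtain ⟨hy'P, hy'c⟩ := hkey y hy hyM
    have hopen2 : v ∈ openSegment ℝ (v + δ • (x - v)) (v + δ • (y - v)) := by
      refine ⟨a, b, ha, hb, hab, ?_⟩
      have h5 : a • (v + δ • (x - v)) + b • (v + δ • (y - v))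
          = (a + b) • v + δ • ((a • x + b • y) - (a + b) • v) := by module
      rw [h5, hab, one_smul, habe]
      simp
    have h8 := hvext ⟨hx'P, hx'c⟩ ⟨hy'P, hy'c⟩ hopen2
    have h6 : δ • (x - v) = 0 := by
      have h9 := h8
      rwa [add_eq_left] at h9
    have h7 : x - v = 0 := by
      rcases smul_eq_zero.1 h6 with hh | hh
      · exact absurd hh hδ0.ne'
      · exact hh
    exact hxv (by rwa [sub_eq_zero] at h7)
  exact aux_rec R f c v hgen ⟨⟨hvP, hvc⟩, hvext⟩ hnew hfvc R.card R le_rfl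
    ⟨0, 0, by simp, by simp⟩ hvP
end Helpers
end

section
/- (Vertices of the new facet correspond bijectively to crossing edges.) Let P ⊆ ℝ^d be a polytope, f : ℝ^d → ℝ a linear functional and c ∈ ℝ such that no extreme point u of P satisfies f(u) = c, and such that some extreme points of P satisfy f < c and some satisfy f > c. Then: (i) for every edge [u,w] of P with f(u) < c < f(w) there is exactly one point v ∈ [u,w] with f(v) = c, and this v is an extreme point of the polytope P ∩ {x : f(x) = c}; (ii) conversely, every extreme point of P ∩ {x : f(x) = c} arises in this way from a unique such edge. Hence the number of extreme points of P ∩ {x : f(x) = c} equals the number of edges of P with one endpoint on each side of the hyperplane. -/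
open Set

/-- `CrossingEdge P f c u w` says that `u, w` are extreme points of `P` spanning an edge
of `P` (an exposed face of affine dimension 1) which crosses the hyperplane `f = c`,
with `f u < c < f w`. -/
def CrossingEdge {d : ℕ} (P : Set (Fin d → ℝ)) (f : (Fin d → ℝ) →ₗ[ℝ] ℝ) (c : ℝ)
    (u w : Fin d → ℝ) : Prop :=
  u ∈ P.extremePoints ℝ ∧ w ∈ P.extremePoints ℝ ∧ f u < c ∧ c < f w ∧
    IsExposed ℝ P (segment ℝ u w) ∧ affDim (segment ℝ u w) = 1

variable {d : ℕ}

/-- unique crossing point on a segment -/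
lemma seg_unique_cross (u w : Fin d → ℝ) (f : (Fin d → ℝ) →ₗ[ℝ] ℝ) {c : ℝ}
    (hu : f u < c) (hw : c < f w) :
    ∃! v : Fin d → ℝ, v ∈ segment ℝ u w ∧ f v = c := by
  have hlt : f u < f w := hu.trans hw
  have hden : 0 < f w - f u := by linarith
  set t : ℝ := (c - f u) / (f w - f u) with ht
  have ht0 : 0 < t := div_pos (by linarith) hden
  have ht1 : t < 1 := by
    rw [div_lt_one hden]; linarith
  refine ⟨(1 - t) • u + t • w, ⟨⟨1 - t, t, by linarith, ht0.le, by ring, rfl⟩, ?_⟩, ?_⟩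
  · have : f ((1 - t) • u + t • w) = (1 - t) * f u + t * f w := by
      simp [map_add, map_smul, smul_eq_mul]
    rw [this, ht]
    field_simp
    ring
  · rintro v ⟨⟨a, b, ha, hb, hab, rfl⟩, hfv⟩
    have hfv' : a * f u + b * f w = c := by
      simpa [map_add, map_smul, smul_eq_mul] using hfv
    have hb' : b = t := by
      have ha' : a = 1 - b := by linarith
      rw [ha'] at hfv'
      rw [ht]
      field_simp
      linarith [hfv']
    have ha' : a = 1 - t := by linarith
    rw [ha', hb']

lemma mem_of_Icc_dir {P : Set (Fin d → ℝ)} (hP : Convex ℝ P) {v ξ : Fin d → ℝ} {r₁ r₂ r : ℝ}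
    (h1 : v + r₁ • ξ ∈ P) (h2 : v + r₂ • ξ ∈ P) (hr1 : r₁ ≤ r) (hr2 : r ≤ r₂) :
    v + r • ξ ∈ P := by
  rcases eq_or_lt_of_le (hr1.trans hr2) with heq | hlt
  · have : r = r₁ := le_antisymm (heq ▸ hr2) hr1
    rwa [this]
  · set a : ℝ := (r₂ - r) / (r₂ - r₁) with hadef
    set b : ℝ := (r - r₁) / (r₂ - r₁) with hbdef
    have hden : (0:ℝ) < r₂ - r₁ := by linarith
    have ha : 0 ≤ a := div_nonneg (by linarith) hden.le
    have hb : 0 ≤ b := div_nonneg (by linarith) hden.le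
    have hab : a + b = 1 := by rw [hadef, hbdef]; field_simp; ring
    have habr : a * r₁ + b * r₂ = r := by
      rw [hadef, hbdef]; field_simp; ring
    have := hP h1 h2 ha hb hab
    have heq : a • (v + r₁ • ξ) + b • (v + r₂ • ξ) = v + r • ξ := by
      match_scalars
      · linarith
      · linear_combination habr
    rwa [heq] at this

/-- extreme sets of convex hulls pick up generators -/
lemma extreme_exists_gen {P E' D : Set (Fin d → ℝ)} (hP : Convex ℝ P)
    (hE : IsExtreme ℝ P E') (hD : D ⊆ P) {x : Fin d → ℝ}
    (hxE : x ∈ E') (hxD : x ∈ convexHull ℝ D) : ∃ s ∈ D, s ∈ E' := by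
  classical
  rw [convexHull_eq] at hxD
  obtain ⟨ι, t, wt, z, hw0, hw1, hz, hx⟩ := hxD
  have hne : ∃ i ∈ t, wt i ≠ 0 := by
    by_contra h
    push_neg at h
    have : (∑ i ∈ t, wt i) = 0 := Finset.sum_eq_zero h
    rw [hw1] at this; norm_num at this
  obtain ⟨i, hit, hwi⟩ := hne
  have hwi0 : 0 < wt i := lt_of_le_of_ne (hw0 i hit) (Ne.symm hwi)
  have hadd := Finset.add_sum_erase t wt hit
  have hsum_erase : ∑ j ∈ t.erase i, wt j = 1 - wt i := by
    rw [hw1] at hadd; linarith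
  by_cases hwi1 : wt i = 1
  · -- all other weights vanish, x = z i
    have hzero : ∀ j ∈ t.erase i, wt j = 0 := by
      have h0 : ∑ j ∈ t.erase i, wt j = 0 := by rw [hsum_erase, hwi1]; ring
      exact fun j hj => (Finset.sum_eq_zero_iff_of_nonneg
        (fun k hk => hw0 k (Finset.mem_of_mem_erase hk))).mp h0 j hj
    have hxz : x = z i := by
      rw [← hx, Finset.centerMass_eq_of_sum_1 _ _ hw1,
        ← Finset.add_sum_erase t (fun j => wt j • z j) hit,
        Finset.sum_eq_zero (fun j hj => by rw [hzero j hj, zero_smul]), hwi1]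
      simp
    exact ⟨z i, hz i hit, hxz ▸ hxE⟩
  · have hwilt : wt i < 1 := lt_of_le_of_ne (by
      have : 0 ≤ ∑ j ∈ t.erase i, wt j :=
        Finset.sum_nonneg (fun k hk => hw0 k (Finset.mem_of_mem_erase hk))
      linarith) hwi1
    set y := (t.erase i).centerMass wt z with hy
    have hyD : y ∈ convexHull ℝ D := by
      apply Finset.centerMass_mem_convexHull _
        (fun k hk => hw0 k (Finset.mem_of_mem_erase hk))
        (by rw [hsum_erase]; linarith)
        (fun k hk => hz k (Finset.mem_of_mem_erase hk))
    have hyP : y ∈ P := convexHull_min hD hP hyD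
    have hxseg : x ∈ openSegment ℝ (z i) y := by
      refine ⟨wt i, 1 - wt i, hwi0, by linarith, by ring, ?_⟩
      rw [← hx, Finset.centerMass_eq_of_sum_1 _ _ hw1,
        ← Finset.add_sum_erase t (fun j => wt j • z j) hit]
      congr 1
      rw [hy, Finset.centerMass, hsum_erase, smul_smul]
      rw [mul_inv_cancel₀ (by linarith : (1:ℝ) - wt i ≠ 0), one_smul]
    exact ⟨z i, hz i hit, hE.2 (hD (hz i hit)) hyP hxE hxseg⟩

/-- transfer of open segments -/
lemma exists_openSegment_trans {P : Set (Fin d → ℝ)} (hP : Convex ℝ P)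
    {v x y a b : Fin d → ℝ} (hy : y ∈ P) (hb : b ∈ P)
    (hvxy : v ∈ openSegment ℝ x y) (hxab : x ∈ openSegment ℝ a b) :
    ∃ q ∈ P, v ∈ openSegment ℝ a q := by
  obtain ⟨μ, μ', hμ, hμ', hμs, hv⟩ := hvxy
  obtain ⟨lam, lam', hl, hl', hls, hxv⟩ := hxab
  set ν : ℝ := μ * lam with hν
  have hν0 : 0 < ν := mul_pos hμ hl
  have hν1 : ν < 1 := by nlinarith
  have hνinv : 0 < (1 - ν)⁻¹ := inv_pos.2 (by linarith)
  set q := (1 - ν)⁻¹ • ((μ * lam') • b + μ' • y) with hq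
  have hsum : μ * lam' + μ' = 1 - ν := by rw [hν]; nlinarith
  have hqP : q ∈ P := by
    have := hP hb hy (le_of_lt (mul_pos hνinv (mul_pos hμ hl')))
      (le_of_lt (mul_pos hνinv hμ'))
      (by rw [← mul_add, hsum]; exact inv_mul_cancel₀ (by linarith))
    convert this using 1
    rw [hq, smul_add, smul_smul, smul_smul]
  refine ⟨q, hqP, ν, 1 - ν, hν0, by linarith, by ring, ?_⟩
  rw [hq, smul_smul, mul_inv_cancel₀ (by linarith : (1:ℝ) - ν ≠ 0), one_smul]
  rw [← hv, ← hxv, hν]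
  module

lemma endpoint_forces {t₀ s₁ s₂ θ θ' : ℝ} (h1 : t₀ ≤ s₁) (h2 : t₀ ≤ s₂)
    (hθ : 0 < θ) (hθ' : 0 < θ') (hθs : θ + θ' = 1) (hv : θ * s₁ + θ' * s₂ = t₀) :
    s₁ = t₀ ∧ s₂ = t₀ := by
  have h3 : θ * t₀ + θ' * t₀ = t₀ := by rw [← add_mul, hθs, one_mul]
  constructor
  · by_contra hne
    have hlt : t₀ < s₁ := lt_of_le_of_ne h1 (Ne.symm hne)
    have ha := mul_lt_mul_of_pos_left hlt hθ
    have hb := mul_le_mul_of_nonneg_left h2 hθ'.le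
    linarith
  · by_contra hne
    have hlt : t₀ < s₂ := lt_of_le_of_ne h2 (Ne.symm hne)
    have ha := mul_lt_mul_of_pos_left hlt hθ'
    have hb := mul_le_mul_of_nonneg_left h1 hθ.le
    linarith

set_option maxHeartbeats 1000000 in
lemma construct {S : Set (Fin d → ℝ)} (hS : S.Finite) (f : (Fin d → ℝ) →ₗ[ℝ] ℝ) {c : ℝ}
    (hgen : ∀ u ∈ (convexHull ℝ S).extremePoints ℝ, f u ≠ c)
    {v : Fin d → ℝ} (hv : v ∈ ((convexHull ℝ S) ∩ {x | f x = c}).extremePoints ℝ) :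
    ∃ u w : Fin d → ℝ, CrossingEdge (convexHull ℝ S) f c u w ∧ v ∈ segment ℝ u w ∧ u ≠ w ∧
      ∀ p ∈ convexHull ℝ S, ∀ q ∈ convexHull ℝ S, v ∈ openSegment ℝ p q →
        p ∈ segment ℝ u w ∧ q ∈ segment ℝ u w := by
  classical
  set P := convexHull ℝ S with hPdef
  have hPc : Convex ℝ P := convex_convexHull ℝ S
  have hPcomp : IsCompact P := hS.isCompact_convexHull ℝ
  obtain ⟨⟨hvP, hvc'⟩, hvext⟩ := hv
  have hvc : f v = c := hvc'
  -- v is not an extreme point of P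
  have hvnotP : v ∉ P.extremePoints ℝ := fun h => hgen v h hvc
  rw [mem_extremePoints] at hvnotP
  push_neg at hvnotP
  obtain ⟨x₁, hx₁P, x₂, hx₂P, hvopen, hne⟩ := hvnotP hvP
  -- both x₁, x₂ differ from v, and f takes values on both sides
  obtain ⟨a, b, ha, hb, hab, habv⟩ := hvopen
  have hsmulinj : ∀ r : ℝ, r ≠ 0 → Function.Injective (fun x : Fin d → ℝ => r • x) :=
    fun r hr => smul_right_injective _ hr
  have hx₁v : x₁ ≠ v := by
    intro heq
    refine hne heq (hsmulinj b hb.ne' ?_)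
    show b • x₂ = b • v
    have h1 : a • x₁ + b • x₂ = (a + b) • v := by rw [hab, one_smul]; exact habv
    rw [add_smul, heq] at h1
    exact add_left_cancel h1
  have hfsum : a * f x₁ + b * f x₂ = c := by
    have := congrArg f habv
    simpa [map_add, map_smul, smul_eq_mul, hvc] using this
  have hQopen : ∀ p q : Fin d → ℝ, p ∈ P → q ∈ P → f p = c → f q = c →
      v ∈ openSegment ℝ p q → p = v := by
    intro p q hp hq hfp hfq hop
    exact hvext ⟨hp, hfp⟩ ⟨hq, hfq⟩ hop
  have hfx₂ : f x₂ ≠ c := by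
    intro h
    have hfx₁ : f x₁ = c := by
      have hac : a * c + b * c = c := by rw [← add_mul, hab, one_mul]
      have : a * f x₁ = a * c := by rw [h] at hfsum; linarith
      exact mul_left_cancel₀ ha.ne' this
    exact hx₁v (hQopen x₁ x₂ hx₁P hx₂P hfx₁ h ⟨a, b, ha, hb, hab, habv⟩)
  -- WLOG: get y₁ y₂ with c < f y₂
  obtain ⟨y₁, y₂, hy₁P, hy₂P, hvo, hy₂c⟩ :
      ∃ y₁ y₂ : Fin d → ℝ, y₁ ∈ P ∧ y₂ ∈ P ∧ v ∈ openSegment ℝ y₁ y₂ ∧ c < f y₂ := by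
    rcases lt_or_gt_of_ne hfx₂ with h | h
    · refine ⟨x₂, x₁, hx₂P, hx₁P, ?_, ?_⟩
      · rw [openSegment_symm]; exact ⟨a, b, ha, hb, hab, habv⟩
      · have hac : a * c + b * c = c := by rw [← add_mul, hab, one_mul]
        have h2 := mul_pos hb (sub_pos.2 h)
        rw [mul_sub] at h2
        have h1 : a * c < a * f x₁ := by linarith
        exact (mul_lt_mul_iff_right₀ ha).1 h1
    · exact ⟨x₁, x₂, hx₁P, hx₂P, ⟨a, b, ha, hb, hab, habv⟩, h⟩
  clear hfsum hfx₂ hx₁v hne habv hab ha hb hx₁P hx₂P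
  obtain ⟨a, b, ha, hb, hab, habv⟩ := hvo
  set z : Fin d → ℝ := y₂ - v with hz
  have hy₂v : y₂ ≠ v := by
    intro h; rw [h, hvc] at hy₂c; exact lt_irrefl c hy₂c
  have hz0 : z ≠ 0 := sub_ne_zero.2 hy₂v
  have hfz : 0 < f z := by
    rw [hz, map_sub, hvc]; linarith
  set L : ℝ →ᵃ[ℝ] (Fin d → ℝ) := AffineMap.lineMap v y₂ with hLdef
  have hL : ∀ t : ℝ, L t = v + t • z := by
    intro t
    rw [hLdef, AffineMap.lineMap_apply, hz]
    simp [vsub_eq_sub, vadd_eq_add, add_comm]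
  have hLinj : Function.Injective L := AffineMap.lineMap_injective ℝ (Ne.symm hy₂v)
  have hfL : ∀ t : ℝ, f (L t) = c + t * f z := by
    intro t
    rw [hL, map_add, map_smul, hvc, smul_eq_mul]
  set I : Set ℝ := L ⁻¹' P with hI
  have hIconv : Convex ℝ I := hPc.affine_preimage L
  have hIclosed : IsClosed I := hPcomp.isClosed.preimage L.continuous_of_finiteDimensional
  have hfc : Continuous fun x : Fin d → ℝ => (f x - c) / f z :=
    ((f.continuous_of_finiteDimensional).sub continuous_const).div_const _
  have hIcomp : IsCompact I := by
    refine (hPcomp.image hfc).of_isClosed_subset hIclosed ?_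
    intro t ht
    refine ⟨L t, ht, ?_⟩
    show (f (L t) - c) / f z = t
    rw [hfL]
    field_simp
    ring
  have h0I : (0:ℝ) ∈ I := by
    rw [hI, mem_preimage, hLdef, AffineMap.lineMap_apply_zero]; exact hvP
  have h1I : (1:ℝ) ∈ I := by
    rw [hI, mem_preimage, hLdef, AffineMap.lineMap_apply_one]; exact hy₂P
  have hy₁L : L (-(b/a)) = y₁ := by
    have hane : a ≠ 0 := ha.ne'
    have hy₁ : y₁ = a⁻¹ • (v - b • y₂) := by
      rw [← habv]
      match_scalars <;> field_simp <;> ring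
    rw [hL, hy₁, hz]
    match_scalars <;> field_simp <;> linarith
  have hsI : -(b/a) ∈ I := by
    rw [hI, mem_preimage, hy₁L]; exact hy₁P
  have hIne : I.Nonempty := ⟨0, h0I⟩
  set t₀ : ℝ := sInf I with ht₀def
  set t₁ : ℝ := sSup I with ht₁def
  have ht₀I : t₀ ∈ I := hIcomp.sInf_mem hIne
  have ht₁I : t₁ ∈ I := hIcomp.sSup_mem hIne
  have ht₀neg : t₀ < 0 :=
    lt_of_le_of_lt (csInf_le hIcomp.bddBelow hsI) (neg_lt_zero.2 (div_pos hb ha))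
  have ht₁pos : 0 < t₁ := lt_of_lt_of_le one_pos (le_csSup hIcomp.bddAbove h1I)
  have ht₀₁ : t₀ < t₁ := ht₀neg.trans ht₁pos
  set u : Fin d → ℝ := L t₀ with hu
  set w : Fin d → ℝ := L t₁ with hw
  have huP : u ∈ P := ht₀I
  have hwP : w ∈ P := ht₁I
  have hune : u ≠ w := fun h => (ne_of_lt ht₀₁) (hLinj h)
  have hIcc : I = Icc t₀ t₁ := by
    apply subset_antisymm
    · exact fun t ht => ⟨csInf_le hIcomp.bddBelow ht, le_csSup hIcomp.bddAbove ht⟩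
    · exact hIconv.ordConnected.out ht₀I ht₁I
  have hseg_eq : segment ℝ u w = L '' Icc t₀ t₁ := by
    rw [hu, hw, ← image_segment, segment_eq_Icc ht₀₁.le]
  have hseg_iff : ∀ t : ℝ, L t ∈ segment ℝ u w ↔ t ∈ I := by
    intro t
    rw [hseg_eq, hLinj.mem_set_image, ← hIcc]
  have hsegP : segment ℝ u w ⊆ P := by
    rw [hseg_eq]
    rintro x ⟨t, ht, rfl⟩
    have : t ∈ I := hIcc ▸ ht
    exact this
  have hopen_eq : openSegment ℝ u w = L '' Ioo t₀ t₁ := by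
    rw [hu, hw, ← image_openSegment, openSegment_eq_Ioo ht₀₁]
  have hvL : L 0 = v := by rw [hLdef, AffineMap.lineMap_apply_zero]
  have hvu : v ∈ openSegment ℝ u w := by
    rw [hopen_eq]
    exact ⟨0, ⟨ht₀neg, ht₁pos⟩, hvL⟩
  have hvseguw : v ∈ segment ℝ u w := openSegment_subset_segment ℝ u w hvu
  -- the key claim: all open segments through v lie in [u, w]
  have hM1 : ∀ p ∈ P, ∀ q ∈ P, v ∈ openSegment ℝ p q → p ∈ segment ℝ u w := by
    intro p hpP q hqP hop
    obtain ⟨a', b', ha', hb', hab', hv'⟩ := hop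
    by_cases hpl : ∃ t : ℝ, L t = p
    · obtain ⟨t, rfl⟩ := hpl
      exact (hseg_iff t).2 hpP
    · exfalso
      set ξ : Fin d → ℝ := p - v with hξ
      have hpξ : p = v + (1:ℝ) • ξ := by rw [hξ]; module
      have hqξ : q = v + (-(a'/b')) • ξ := by
        have hbne : b' ≠ 0 := hb'.ne'
        have hq' : q = b'⁻¹ • (v - a' • p) := by
          rw [← hv']
          match_scalars <;> field_simp <;> ring
        rw [hq', hξ]
        match_scalars <;> field_simp <;> linarith
      set δ : Fin d → ℝ := (f ξ) • z - (f z) • ξ with hδ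
      have hfδ : f δ = 0 := by
        rw [hδ, map_sub, map_smul, map_smul, smul_eq_mul, smul_eq_mul]; ring
      have hδ0 : δ ≠ 0 := by
        intro h
        apply hpl
        refine ⟨f ξ / f z, ?_⟩
        have hξz : (f ξ) • z = (f z) • ξ := by
          rwa [hδ, sub_eq_zero] at h
        rw [hL]
        rw [hpξ]
        congr 1
        rw [div_eq_inv_mul, ← smul_smul, hξz, smul_smul, inv_mul_cancel₀ hfz.ne', one_smul]
      -- choose ε > 0
      set m₁ : ℝ := min (-t₀) t₁ with hm₁def
      set m₂ : ℝ := min (a'/b') 1 with hm₂def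
      have hm₁ : 0 < m₁ := lt_min (by linarith) ht₁pos
      have hm₂ : 0 < m₂ := lt_min (by positivity) one_pos
      set ε : ℝ := min (m₁ / (2 * (|f ξ| + 1))) (m₂ / (2 * f z)) with hεdef
      have hε : 0 < ε := by
        apply lt_min
        · positivity
        · positivity
      have habs : |2 * ε * f ξ| ≤ m₁ := by
        have h1 : ε ≤ m₁ / (2 * (|f ξ| + 1)) := min_le_left _ _
        have h2 : ε * (2 * (|f ξ| + 1)) ≤ m₁ := (le_div_iff₀ (by positivity)).1 h1
        have h3 : |2 * ε * f ξ| = ε * (2 * |f ξ|) := by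
          rw [abs_mul, abs_of_pos (by linarith : (0:ℝ) < 2 * ε)]; ring
        rw [h3]
        have h4 : ε * (2 * |f ξ|) ≤ ε * (2 * (|f ξ| + 1)) :=
          mul_le_mul_of_nonneg_left (by linarith [abs_nonneg (f ξ)]) hε.le
        linarith
      have hεz2 : 2 * ε * f z ≤ m₂ := by
        have h1 : ε ≤ m₂ / (2 * f z) := min_le_right _ _
        have h2 : ε * (2 * f z) ≤ m₂ := (le_div_iff₀ (by positivity)).1 h1
        calc 2 * ε * f z = ε * (2 * f z) := by ring
          _ ≤ m₂ := h2
      -- memberships in the two directions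
      have hzdir : ∀ s : ℝ, t₀ ≤ s → s ≤ t₁ → v + s • z ∈ P := by
        intro s h1 h2
        have : s ∈ I := hIcc ▸ mem_Icc.2 ⟨h1, h2⟩
        rw [hI, mem_preimage, hL] at this
        exact this
      have hξdir : ∀ r : ℝ, -(a'/b') ≤ r → r ≤ 1 → v + r • ξ ∈ P := by
        intro r h1 h2
        exact mem_of_Icc_dir hPc (hqξ ▸ hqP) (hpξ ▸ hpP) h1 h2
      have hmem : ∀ σ : ℝ, σ = 1 ∨ σ = -1 → v + (σ * ε) • δ ∈ P := by
        intro σ hσ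
        have hσabs : |σ| = 1 := by rcases hσ with rfl | rfl <;> simp
        have hz1 : v + (2 * (σ * ε) * f ξ) • z ∈ P := by
          apply hzdir
          · have : |2 * (σ * ε) * f ξ| ≤ m₁ := by
              calc |2 * (σ * ε) * f ξ| = |σ| * |2 * ε * f ξ| := by
                    rw [← abs_mul]; congr 1; ring
                _ ≤ m₁ := by rw [hσabs, one_mul]; exact habs
            have := abs_le.1 this
            have hm₁t₀ : m₁ ≤ -t₀ := min_le_left _ _
            linarith [this.1]
          · have : |2 * (σ * ε) * f ξ| ≤ m₁ := by
              calc |2 * (σ * ε) * f ξ| = |σ| * |2 * ε * f ξ| := by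
                    rw [← abs_mul]; congr 1; ring
                _ ≤ m₁ := by rw [hσabs, one_mul]; exact habs
            have := abs_le.1 this
            have hm₁t₁ : m₁ ≤ t₁ := min_le_right _ _
            linarith [this.2]
        have hξ1 : v + (-(2 * (σ * ε) * f z)) • ξ ∈ P := by
          apply hξdir
          · have habs2 : |2 * (σ * ε) * f z| ≤ m₂ := by
              calc |2 * (σ * ε) * f z| = |σ| * |2 * ε * f z| := by
                    rw [← abs_mul]; congr 1; ring
                _ ≤ m₂ := by
                    rw [hσabs, one_mul, abs_of_pos (by positivity)]
                    exact hεz2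
            have := abs_le.1 habs2
            have : -(a'/b') ≤ -m₂ := by
              have : m₂ ≤ a'/b' := min_le_left _ _
              linarith
            linarith [(abs_le.1 habs2).2]
          · have habs2 : |2 * (σ * ε) * f z| ≤ m₂ := by
              calc |2 * (σ * ε) * f z| = |σ| * |2 * ε * f z| := by
                    rw [← abs_mul]; congr 1; ring
                _ ≤ m₂ := by
                    rw [hσabs, one_mul, abs_of_pos (by positivity)]
                    exact hεz2
            have h := (abs_le.1 habs2).1
            have : m₂ ≤ 1 := min_le_right _ _
            linarith
        have hcomb := hPc hz1 hξ1 (by norm_num : (0:ℝ) ≤ 1/2) (by norm_num : (0:ℝ) ≤ 1/2)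
          (by norm_num)
        have heq : (1/2 : ℝ) • (v + (2 * (σ * ε) * f ξ) • z) +
            (1/2 : ℝ) • (v + (-(2 * (σ * ε) * f z)) • ξ) = v + (σ * ε) • δ := by
          rw [hδ]
          match_scalars <;> ring
        rwa [heq] at hcomb
      have hp1 := hmem 1 (Or.inl rfl)
      have hp2 := hmem (-1) (Or.inr rfl)
      rw [one_mul] at hp1
      have hfp1 : f (v + ε • δ) = c := by
        rw [map_add, map_smul, hfδ, hvc, smul_eq_mul]; ring
      have hfp2 : f (v + (-1 * ε) • δ) = c := by
        rw [map_add, map_smul, hfδ, hvc, smul_eq_mul]; ring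
      have hvmid : v ∈ openSegment ℝ (v + ε • δ) (v + (-1 * ε) • δ) := by
        refine ⟨1/2, 1/2, by norm_num, by norm_num, by norm_num, ?_⟩
        match_scalars <;> ring
      have := hQopen _ _ hp1 hp2 hfp1 hfp2 hvmid
      have hδε : ε • δ = 0 := by
        have h := congrArg (fun x => x - v) this
        simpa using h
      exact hδ0 ((smul_eq_zero.1 hδε).resolve_left hε.ne')
  have hM : ∀ p ∈ P, ∀ q ∈ P, v ∈ openSegment ℝ p q →
      p ∈ segment ℝ u w ∧ q ∈ segment ℝ u w := by
    intro p hp q hq hop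
    exact ⟨hM1 p hp q hq hop, hM1 q hq p hp (by rwa [openSegment_symm] at hop)⟩
  -- [u, w] is an extreme subset of P
  have hExt : IsExtreme ℝ P (segment ℝ u w) := by
    refine ⟨hsegP, ?_⟩
    have main : ∀ p₁ ∈ P, ∀ p₂ ∈ P, ∀ x ∈ segment ℝ u w,
        x ∈ openSegment ℝ p₁ p₂ → p₁ ∈ segment ℝ u w := by
      intro p₁ hp₁ p₂ hp₂ x hxseg hxo
      rw [hseg_eq] at hxseg
      obtain ⟨t, htI, rfl⟩ := hxseg
      rcases eq_or_ne t 0 with rfl | ht0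
      · rw [hvL] at hxo
        exact (hM p₁ hp₁ p₂ hp₂ hxo).1
      · rcases lt_or_gt_of_ne ht0 with hneg | hpos
        · have hvo : v ∈ openSegment ℝ (L t) w := by
            have : openSegment ℝ (L t) w = ⇑L '' openSegment ℝ t t₁ := by
              rw [hw, ← image_openSegment]
            rw [this, openSegment_eq_Ioo (hneg.trans ht₁pos)]
            exact ⟨0, ⟨hneg, ht₁pos⟩, hvL⟩
          obtain ⟨q, hqP, hvq⟩ := exists_openSegment_trans hPc hwP hp₂ hvo hxo
          exact (hM p₁ hp₁ q hqP hvq).1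
        · have hvo : v ∈ openSegment ℝ (L t) u := by
            have : openSegment ℝ (L t) u = ⇑L '' openSegment ℝ t t₀ := by
              rw [hu, ← image_openSegment]
            rw [this, openSegment_symm, openSegment_eq_Ioo (ht₀neg.trans hpos)]
            exact ⟨0, ⟨ht₀neg, hpos⟩, hvL⟩
          obtain ⟨q, hqP, hvq⟩ := exists_openSegment_trans hPc huP hp₂ hvo hxo
          exact (hM p₁ hp₁ q hqP hvq).1
    intro p₁ hp₁ p₂ hp₂ x hxseg hxo
    exact main p₁ hp₁ p₂ hp₂ x hxseg hxo
  -- u and w are extreme points of P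
  have hLparam : ∀ x ∈ segment ℝ u w, ∃ s, s ∈ Icc t₀ t₁ ∧ L s = x := by
    intro x hx
    rw [hseg_eq] at hx
    obtain ⟨s, hs, rfl⟩ := hx
    exact ⟨s, hs, rfl⟩
  have huext : u ∈ P.extremePoints ℝ := by
    rw [mem_extremePoints]
    refine ⟨huP, ?_⟩
    intro q₁ hq₁ q₂ hq₂ hopen
    obtain ⟨h1, h2⟩ := And.intro (hExt.2 hq₁ hq₂ (left_mem_segment ℝ u w) hopen)
      (hExt.2 hq₂ hq₁ (left_mem_segment ℝ u w) (by rwa [openSegment_symm] at hopen))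
    obtain ⟨s₁, hs₁, rfl⟩ := hLparam q₁ h1
    obtain ⟨s₂, hs₂, rfl⟩ := hLparam q₂ h2
    have himg : openSegment ℝ (L s₁) (L s₂) = ⇑L '' openSegment ℝ s₁ s₂ :=
      (image_openSegment ℝ L s₁ s₂).symm
    rw [himg] at hopen
    obtain ⟨s, hs, hLs⟩ := hopen
    have hst : s = t₀ := hLinj hLs
    obtain ⟨θ, θ', hθ, hθ', hθs, hθv⟩ := hs
    simp only [smul_eq_mul] at hθv
    rw [hst] at hθv
    obtain ⟨hs₁e, hs₂e⟩ := endpoint_forces hs₁.1 hs₂.1 hθ hθ' hθs hθv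
    rw [hs₁e, hs₂e]
    exact ⟨rfl, rfl⟩
  have hwext : w ∈ P.extremePoints ℝ := by
    rw [mem_extremePoints]
    refine ⟨hwP, ?_⟩
    intro q₁ hq₁ q₂ hq₂ hopen
    obtain ⟨h1, h2⟩ := And.intro (hExt.2 hq₁ hq₂ (right_mem_segment ℝ u w) hopen)
      (hExt.2 hq₂ hq₁ (right_mem_segment ℝ u w) (by rwa [openSegment_symm] at hopen))
    obtain ⟨s₁, hs₁, rfl⟩ := hLparam q₁ h1
    obtain ⟨s₂, hs₂, rfl⟩ := hLparam q₂ h2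
    have himg : openSegment ℝ (L s₁) (L s₂) = ⇑L '' openSegment ℝ s₁ s₂ :=
      (image_openSegment ℝ L s₁ s₂).symm
    rw [himg] at hopen
    obtain ⟨s, hs, hLs⟩ := hopen
    have hst : s = t₁ := hLinj hLs
    obtain ⟨θ, θ', hθ, hθ', hθs, hθv⟩ := hs
    simp only [smul_eq_mul] at hθv
    rw [hst] at hθv
    have hv' : θ * (-s₁) + θ' * (-s₂) = -t₁ := by linarith
    obtain ⟨hs₁e, hs₂e⟩ := endpoint_forces (neg_le_neg hs₁.2) (neg_le_neg hs₂.2) hθ hθ' hθs hv'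
    have e1 : s₁ = t₁ := by linarith
    have e2 : s₂ = t₁ := by linarith
    rw [e1, e2]
    exact ⟨rfl, rfl⟩
  have hfu : f u < c := by
    have := hfL t₀
    rw [hu] at *
    nlinarith [this]
  have hfw : c < f w := by
    have := hfL t₁
    rw [hw] at *
    nlinarith [this]
  -- exposedness
  have hExp : IsExposed ℝ P (segment ℝ u w) := by
    by_cases hSsub : S ⊆ segment ℝ u w
    · have hPeq : segment ℝ u w = P :=
        subset_antisymm hsegP (convexHull_min hSsub (convex_segment u w))
      intro _
      exact ⟨0, by rw [hPeq]; ext x; simp⟩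
    · set S' : Set (Fin d → ℝ) := S \ segment ℝ u w with hS'def
      have hS'fin : S'.Finite := hS.subset diff_subset
      have hS'P : S' ⊆ P := fun s hs => subset_convexHull ℝ S hs.1
      set ℓ : Set (Fin d → ℝ) := (affineSpan ℝ {v, y₂} : Set (Fin d → ℝ)) with hℓdef
      have hℓmem : ∀ x ∈ ℓ, ∃ t : ℝ, L t = x := by
        intro x hx
        have hx' : (x - v) +ᵥ v ∈ affineSpan ℝ {v, y₂} := by
          rw [vadd_eq_add, sub_add_cancel]; exact hx
        obtain ⟨r, hr⟩ := vadd_left_mem_affineSpan_pair.1 hx'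
        refine ⟨r, ?_⟩
        rw [hL]
        rw [vsub_eq_sub] at hr
        rw [← hz] at hr
        rw [hr]
        module
      have hℓconv : Convex ℝ ℓ := (affineSpan ℝ {v, y₂}).convex
      have hℓclosed : IsClosed ℓ := (affineSpan ℝ {v, y₂}).closed_of_finiteDimensional
      have hdisj : Disjoint (convexHull ℝ S') ℓ := by
        rw [Set.disjoint_left]
        intro x hx1 hx2
        obtain ⟨t, rfl⟩ := hℓmem x hx2
        have hxP : L t ∈ P := convexHull_min (fun s hs => subset_convexHull ℝ S hs.1) hPc hx1
        have hxseg : L t ∈ segment ℝ u w := (hseg_iff t).2 hxP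
        obtain ⟨s, hsS', hsseg⟩ := extreme_exists_gen hPc hExt hS'P hxseg hx1
        exact hsS'.2 hsseg
      obtain ⟨g, α, β, hgS', hαβ, hgℓ⟩ := geometric_hahn_banach_compact_closed
        (convex_convexHull ℝ S') (hS'fin.isCompact_convexHull ℝ) hℓconv hℓclosed hdisj
      have hgt : ∀ t : ℝ, β < g (L t) := by
        intro t
        apply hgℓ
        show L t ∈ ℓ
        rw [hℓdef]
        exact AffineMap.lineMap_mem_affineSpan_pair t v y₂
      have hgL : ∀ t : ℝ, g (L t) = g v + t * g z := by
        intro t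
        rw [hL, map_add, map_smul, smul_eq_mul]
      have hgz : g z = 0 := by
        by_contra hgz
        have ht := hgt ((β - g v - 1) / g z)
        rw [hgL] at ht
        rw [div_mul_cancel₀ _ hgz] at ht
        linarith
      have hgline : ∀ t : ℝ, g (L t) = g v := by
        intro t; rw [hgL, hgz]; ring
      have hβa₀ : β < g v := by simpa [hgline 0] using hgt 0
      have hgseg : ∀ x ∈ segment ℝ u w, g x = g v := by
        intro x hx
        obtain ⟨s, _, rfl⟩ := hLparam x hx
        exact hgline s
      have hgSle : ∀ s ∈ S, g s ≤ g v := by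
        intro s hs
        by_cases hseg : s ∈ segment ℝ u w
        · exact (hgseg s hseg).le
        · have : s ∈ S' := ⟨hs, hseg⟩
          have := hgS' s (subset_convexHull ℝ S' this)
          linarith
      have hgP : ∀ x ∈ P, g x ≤ g v := by
        intro x hx
        have hsub : P ⊆ {y | g y ≤ g v} :=
          convexHull_min hgSle (convex_halfSpace_le ⟨map_add g, map_smul g⟩ (g v))
        exact hsub hx
      intro _
      refine ⟨g, ?_⟩
      ext x
      constructor
      · intro hx
        exact ⟨hsegP hx, fun y hy => (hgP y hy).trans_eq (hgseg x hx).symm⟩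
      · rintro ⟨hxP, hxmax⟩
        have hga : g x = g v := le_antisymm (hgP x hxP) (hxmax v hvP)
        have hxS : x ∈ convexHull ℝ (↑hS.toFinset : Set (Fin d → ℝ)) := by
          rwa [hS.coe_toFinset]
        rw [Finset.convexHull_eq] at hxS
        obtain ⟨wt, hw0, hw1, hwx⟩ := hxS
        have hkey : ∀ y ∈ hS.toFinset, wt y ≠ 0 → y ∈ segment ℝ u w := by
          intro y₀ hy₀t hwy₀
          by_contra hy₀seg
          have hy₀S : y₀ ∈ S := hS.mem_toFinset.1 hy₀t
          have hgy₀ : g y₀ < g v := by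
            have := hgS' y₀ (subset_convexHull ℝ S' ⟨hy₀S, hy₀seg⟩)
            linarith
          have hgx : g x = ∑ y ∈ hS.toFinset, wt y * g y := by
            rw [← hwx, Finset.centerMass_eq_of_sum_1 _ _ hw1, map_sum]
            simp [map_smul, smul_eq_mul]
          have hlt : ∑ y ∈ hS.toFinset, wt y * g y < ∑ y ∈ hS.toFinset, wt y * g v := by
            apply Finset.sum_lt_sum
            · intro i hi
              exact mul_le_mul_of_nonneg_left (hgSle i (hS.mem_toFinset.1 hi)) (hw0 i hi)
            · exact ⟨y₀, hy₀t, by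
                have hwy₀' : 0 < wt y₀ := lt_of_le_of_ne (hw0 y₀ hy₀t) (Ne.symm hwy₀)
                exact mul_lt_mul_of_pos_left hgy₀ hwy₀'⟩
          rw [← Finset.sum_mul, hw1, one_mul] at hlt
          rw [hgx] at hga
          linarith
        have hxseg : x ∈ convexHull ℝ (segment ℝ u w) := by
          rw [← hwx, ← Finset.centerMass_filter_ne_zero]
          apply Finset.centerMass_mem_convexHull
          · intro i hi
            exact hw0 i (Finset.filter_subset _ _ hi)
          · have : ∑ i ∈ hS.toFinset with wt i ≠ 0, wt i = ∑ i ∈ hS.toFinset, wt i :=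
              Finset.sum_filter_ne_zero _
            rw [this, hw1]
            norm_num
          · intro i hi
            obtain ⟨hit, hwi⟩ := Finset.mem_filter.1 hi
            exact hkey i hit hwi
        rwa [(convex_segment u w).convexHull_eq] at hxseg
  -- affine dimension
  have hdim : affDim (segment ℝ u w) = 1 := by
    show Module.finrank ℝ (vectorSpan ℝ (segment ℝ u w)) = 1
    rw [← convexHull_pair, ← direction_affineSpan, affineSpan_convexHull,
      direction_affineSpan, vectorSpan_pair]
    apply finrank_span_singleton
    rw [vsub_eq_sub]
    exact sub_ne_zero.2 hune
  exact ⟨u, w, ⟨huext, hwext, hfu, hfw, hExp, hdim⟩, hvseguw, hune, hM⟩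


/-- Vertices of the new facet correspond bijectively to crossing edges.  Let
`P = conv S` (`S` finite), and suppose no extreme point of `P` lies on the hyperplane
`f = c` while some extreme points satisfy `f < c` and some `f > c`.  Then:
(i) each crossing edge `[u, w]` meets the hyperplane in exactly one point, and that
point is an extreme point of `P ∩ {x : f x = c}`;
(ii) every extreme point of `P ∩ {x : f x = c}` arises this way from a unique crossing
edge; hence
(iii) the number of extreme points of `P ∩ {x : f x = c}` equals the number of crossing
edges. -/
theorem new_facet_vertices_biject_with_crossing_edges
    (d : ℕ) (S : Set (Fin d → ℝ)) (hS : S.Finite)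
    (f : (Fin d → ℝ) →ₗ[ℝ] ℝ) (c : ℝ)
    (hgen : ∀ u ∈ (convexHull ℝ S).extremePoints ℝ, f u ≠ c)
    (hbelow : ∃ u ∈ (convexHull ℝ S).extremePoints ℝ, f u < c)
    (habove : ∃ w ∈ (convexHull ℝ S).extremePoints ℝ, c < f w) :
    (∀ u w : Fin d → ℝ, CrossingEdge (convexHull ℝ S) f c u w →
      (∃! v : Fin d → ℝ, v ∈ segment ℝ u w ∧ f v = c) ∧
      ∀ v ∈ segment ℝ u w, f v = c →
        v ∈ (convexHull ℝ S ∩ {x | f x = c}).extremePoints ℝ) ∧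
    (∀ v ∈ (convexHull ℝ S ∩ {x | f x = c}).extremePoints ℝ,
      ∃ u w : Fin d → ℝ, CrossingEdge (convexHull ℝ S) f c u w ∧ v ∈ segment ℝ u w ∧
        ∀ u' w' : Fin d → ℝ, CrossingEdge (convexHull ℝ S) f c u' w' →
          v ∈ segment ℝ u' w' → s(u', w') = s(u, w)) ∧
    ((convexHull ℝ S ∩ {x | f x = c}).extremePoints ℝ).ncard =
      {e : Sym2 (Fin d → ℝ) |
        ∃ u w : Fin d → ℝ, CrossingEdge (convexHull ℝ S) f c u w ∧ e = s(u, w)}.ncard := by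
  classical
  set P : Set (Fin d → ℝ) := convexHull ℝ S with hP
  set Q : Set (Fin d → ℝ) := P ∩ {x | f x = c} with hQ
  -- Part 1
  have part1 : ∀ u w : Fin d → ℝ, CrossingEdge P f c u w →
      (∃! v : Fin d → ℝ, v ∈ segment ℝ u w ∧ f v = c) ∧
      ∀ v ∈ segment ℝ u w, f v = c → v ∈ Q.extremePoints ℝ := by
    intro u w hcr
    obtain ⟨huext, hwext, hfu, hfw, hexp, hdim⟩ := hcr
    have huniq := seg_unique_cross u w f hfu hfw
    refine ⟨huniq, ?_⟩
    intro v hvseg hvc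
    obtain ⟨g, hgeq⟩ := hexp ⟨u, left_mem_segment ℝ u w⟩
    have hsegP : segment ℝ u w ⊆ P := by rw [hgeq]; exact fun x hx => hx.1
    have hvmax : ∀ y ∈ P, g y ≤ g v := by
      have hv' : v ∈ {x ∈ P | ∀ y ∈ P, g y ≤ g x} := hgeq ▸ hvseg
      exact hv'.2
    have hvQ : v ∈ Q := ⟨hsegP hvseg, hvc⟩
    have hexpQ : IsExposed ℝ Q {v} := by
      intro _
      refine ⟨g, ?_⟩
      ext x
      constructor
      · rintro rfl
        exact ⟨hvQ, fun y hy => hvmax y hy.1⟩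
      · rintro ⟨hxQ, hxmax⟩
        have hgx : g x = g v := le_antisymm (hvmax x hxQ.1) (hxmax v hvQ)
        have hxseg : x ∈ segment ℝ u w := by
          rw [hgeq]
          exact ⟨hxQ.1, fun y hy => (hvmax y hy).trans_eq hgx.symm⟩
        exact huniq.unique ⟨hxseg, hxQ.2⟩ ⟨hvseg, hvc⟩
    exact (hexpQ.isExtreme).mem_extremePoints
  -- Part 2
  have part2 : ∀ v ∈ Q.extremePoints ℝ,
      ∃ u w : Fin d → ℝ, CrossingEdge P f c u w ∧ v ∈ segment ℝ u w ∧
        ∀ u' w' : Fin d → ℝ, CrossingEdge P f c u' w' →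
          v ∈ segment ℝ u' w' → s(u', w') = s(u, w) := by
    intro v hv
    obtain ⟨u, w, hcr, hvseg, hune, hMM⟩ := construct hS f hgen hv
    have huP : u ∈ P := extremePoints_subset hcr.1
    have hwP : w ∈ P := extremePoints_subset hcr.2.1
    have hfu : f u < c := hcr.2.2.1
    have hfw : c < f w := hcr.2.2.2.1
    refine ⟨u, w, hcr, hvseg, ?_⟩
    intro u' w' hcr' hvseg'
    have hvc : f v = c := (extremePoints_subset hv).2
    obtain ⟨hu'ext, hw'ext, hfu', hfw', _, _⟩ := hcr'
    have hu'v : u' ≠ v := by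
      intro h; rw [h, hvc] at hfu'; exact lt_irrefl c hfu'
    have hw'v : w' ≠ v := by
      intro h; rw [h, hvc] at hfw'; exact lt_irrefl c hfw'
    have hvo : v ∈ openSegment ℝ u' w' :=
      mem_openSegment_of_ne_left_right hu'v hw'v hvseg'
    obtain ⟨hu'seg, hw'seg⟩ := hMM u' (extremePoints_subset hu'ext) w'
      (extremePoints_subset hw'ext) hvo
    have hcases : ∀ p, p ∈ P.extremePoints ℝ → p ∈ segment ℝ u w → p = u ∨ p = w := by
      intro p hpext hpseg
      by_contra hcon
      push_neg at hcon
      have hpo : p ∈ openSegment ℝ u w :=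
        mem_openSegment_of_ne_left_right (Ne.symm hcon.1) (Ne.symm hcon.2) hpseg
      obtain ⟨h1, h2⟩ := And.intro (hpext.2 huP hwP hpo)
        (hpext.2 hwP huP (by rwa [openSegment_symm] at hpo))
      exact hune (h1.trans h2.symm)
    have hu'e : u' = u := by
      rcases hcases u' hu'ext hu'seg with h | h
      · exact h
      · exfalso; rw [h] at hfu'; exact absurd hfw (not_lt.2 hfu'.le)
    have hw'e : w' = w := by
      rcases hcases w' hw'ext hw'seg with h | h
      · exfalso; rw [h] at hfw'; exact absurd hfu (not_lt.2 hfw'.le)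
      · exact h
    rw [hu'e, hw'e]
  refine ⟨part1, part2, ?_⟩
  -- Part 3
  set A : Set (Fin d → ℝ) := Q.extremePoints ℝ with hA
  choose uF wF hcrF hsegF huniqF using part2
  set F : (Fin d → ℝ) → Sym2 (Fin d → ℝ) :=
    fun v => if h : v ∈ A then s(uF v h, wF v h) else s(v, v) with hF
  have hFA : ∀ v (h : v ∈ A), F v = s(uF v h, wF v h) := by
    intro v h; simp only [hF, dif_pos h]
  have hinj : Set.InjOn F A := by
    intro v₁ h₁ v₂ h₂ heq
    rw [hFA v₁ h₁, hFA v₂ h₂] at heq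
    have hc₁ : f v₁ = c := (extremePoints_subset h₁).2
    have hc₂ : f v₂ = c := (extremePoints_subset h₂).2
    have hseg₂ : v₂ ∈ segment ℝ (uF v₁ h₁) (wF v₁ h₁) := by
      rcases Sym2.eq_iff.1 heq with ⟨hu, hw⟩ | ⟨hu, hw⟩
      · rw [hu, hw]; exact hsegF v₂ h₂
      · rw [hu, hw, segment_symm]; exact hsegF v₂ h₂
    have huniq := (part1 _ _ (hcrF v₁ h₁)).1
    exact (huniq.unique ⟨hsegF v₁ h₁, hc₁⟩ ⟨hseg₂, hc₂⟩).symm ▸ rfl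
  have himg : F '' A =
      {e : Sym2 (Fin d → ℝ) | ∃ u w : Fin d → ℝ, CrossingEdge P f c u w ∧ e = s(u, w)} := by
    ext e
    constructor
    · rintro ⟨v, hvA, rfl⟩
      exact ⟨uF v hvA, wF v hvA, hcrF v hvA, hFA v hvA⟩
    · rintro ⟨u, w, hcr, rfl⟩
      obtain ⟨huniq, hex⟩ := part1 u w hcr
      obtain ⟨v₀, ⟨hv₀seg, hv₀c⟩, -⟩ := huniq
      have hv₀A : v₀ ∈ A := hex v₀ hv₀seg hv₀c
      refine ⟨v₀, hv₀A, ?_⟩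
      rw [hFA v₀ hv₀A]
      exact (huniqF v₀ hv₀A u w hcr hv₀seg).symm
  calc A.ncard = (F '' A).ncard := (Set.ncard_image_of_injOn hinj).symm
    _ = _ := by rw [himg]
end
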